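/- arXiv:0908.3923 — 10 statements merged into one kernel-verified Lean document; each statement's English description precedes it below -/
import Mathlib

section
/- For every choice of parameters V_dagger < 0, V_alpha < V_dagger, and C > 0, there exists a unique g > 0 solving the dispersion relation C²(1 − 2V_alpha) = s₀ · I'_{C²}(s₀)/I_{C²}(s₀), where s₀ = 2C√g · (1 − V_dagger/V_alpha)^{1/(2C²)}. (Proposition 1 of the paper.) -/
/-- Modified Bessel function of the first kind of real order `ν`,
defined via its power series. -/
noncomputable def besselI (ν x : ℝ) : ℝ :=
  ∑' k : ℕ, (x / 2) ^ (2 * (k : ℝ) + ν) / ((k.factorial : ℝ) * Real.Gamma ((k : ℝ) + ν + 1))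

open Real Filter Set Topology

namespace DispersionAux

/-- coefficient of the auxiliary power series -/
noncomputable def bc (ν : ℝ) (k : ℕ) : ℝ := 1 / (k.factorial * Real.Gamma (k + ν + 1))

lemma bc_pos {ν : ℝ} (hν : 0 < ν) (k : ℕ) : 0 < bc ν k := by
  have h1 : (0:ℝ) < k.factorial := by exact_mod_cast k.factorial_pos
  have h2 : 0 < Real.Gamma ((k:ℝ) + ν + 1) := Real.Gamma_pos_of_pos (by positivity)
  exact div_pos one_pos (mul_pos h1 h2)

lemma gamma_ge {ν : ℝ} (hν : 0 < ν) (k : ℕ) :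
    (k.factorial : ℝ) * Real.Gamma (ν + 1) ≤ Real.Gamma ((k:ℝ) + ν + 1) := by
  induction k with
  | zero => simp
  | succ n ih =>
    have hne : (n:ℝ) + ν + 1 ≠ 0 := by positivity
    have hrec : Real.Gamma (((n:ℝ) + ν + 1) + 1) = ((n:ℝ) + ν + 1) * Real.Gamma ((n:ℝ) + ν + 1) :=
      Real.Gamma_add_one hne
    have hcast : ((n+1 : ℕ):ℝ) + ν + 1 = ((n:ℝ) + ν + 1) + 1 := by push_cast; ring
    have hGpos : 0 < Real.Gamma ((n:ℝ) + ν + 1) := Real.Gamma_pos_of_pos (by positivity)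
    have hfac : ((n+1 : ℕ).factorial : ℝ) = ((n:ℝ) + 1) * n.factorial := by
      rw [Nat.factorial_succ]; push_cast; ring
    rw [hcast, hrec, hfac]
    have h1 : ((n:ℝ) + 1) * ((n.factorial : ℝ) * Real.Gamma (ν + 1)) ≤
        ((n:ℝ) + 1) * Real.Gamma ((n:ℝ) + ν + 1) := by
      apply mul_le_mul_of_nonneg_left ih (by positivity)
    have h2 : ((n:ℝ) + 1) * Real.Gamma ((n:ℝ) + ν + 1) ≤
        ((n:ℝ) + ν + 1) * Real.Gamma ((n:ℝ) + ν + 1) := by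
      apply mul_le_mul_of_nonneg_right (by linarith) hGpos.le
    calc ((n:ℝ) + 1) * (n.factorial : ℝ) * Real.Gamma (ν + 1)
        = ((n:ℝ) + 1) * ((n.factorial : ℝ) * Real.Gamma (ν + 1)) := by ring
      _ ≤ ((n:ℝ) + ν + 1) * Real.Gamma ((n:ℝ) + ν + 1) := h1.trans h2

lemma summable_bc {ν : ℝ} (hν : 0 < ν) (m : ℕ) {r : ℝ} (hr : 0 ≤ r) :
    Summable (fun k : ℕ => (k:ℝ)^m * bc ν k * r^k) := by
  have hG : 0 < Real.Gamma (ν + 1) := Real.Gamma_pos_of_pos (by positivity)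
  have hbound : ∀ k : ℕ, (k:ℝ)^m * bc ν k * r^k ≤
      (1/Real.Gamma (ν+1)) * (((2:ℝ)^m * r)^k / k.factorial) := by
    intro k
    have hfacpos : (0:ℝ) < k.factorial := by exact_mod_cast k.factorial_pos
    have hfac : (1:ℝ) ≤ k.factorial := by exact_mod_cast k.factorial_pos
    have hkm : (k:ℝ)^m ≤ ((2:ℝ)^m)^k := by
      have hk2 : (k:ℝ) ≤ 2^k := by exact_mod_cast (@Nat.lt_two_pow_self k).le
      calc (k:ℝ)^m ≤ ((2:ℝ)^k)^m := pow_le_pow_left₀ (Nat.cast_nonneg k) hk2 m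
        _ = ((2:ℝ)^m)^k := by rw [← pow_mul, ← pow_mul, Nat.mul_comm]
    have hbc : bc ν k ≤ 1 / ((k.factorial : ℝ) * ((k.factorial : ℝ) * Real.Gamma (ν + 1))) := by
      apply one_div_le_one_div_of_le (by positivity)
      exact mul_le_mul_of_nonneg_left (gamma_ge hν k) (by positivity)
    calc (k:ℝ)^m * bc ν k * r^k
        ≤ ((2:ℝ)^m)^k * (1 / ((k.factorial : ℝ) * ((k.factorial : ℝ) * Real.Gamma (ν + 1)))) * r^k := by
          apply mul_le_mul_of_nonneg_right _ (by positivity)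
          exact mul_le_mul hkm hbc (bc_pos hν k).le (by positivity)
      _ = (1/Real.Gamma (ν+1)) * ((((2:ℝ)^m * r)^k / k.factorial) * (1 / k.factorial)) := by
          rw [mul_pow]; ring
      _ ≤ (1/Real.Gamma (ν+1)) * ((((2:ℝ)^m * r)^k / k.factorial) * 1) := by
          have h1 : (1:ℝ) / k.factorial ≤ 1 := by
            rw [div_le_one hfacpos]; exact hfac
          have h2 : (0:ℝ) ≤ ((2:ℝ)^m * r)^k / k.factorial := by positivity
          have := mul_le_mul_of_nonneg_left h1 h2
          apply mul_le_mul_of_nonneg_left this (by positivity)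
      _ = (1/Real.Gamma (ν+1)) * (((2:ℝ)^m * r)^k / k.factorial) := by ring
  exact Summable.of_nonneg_of_le
    (fun k => mul_nonneg (mul_nonneg (by positivity) (bc_pos hν k).le) (by positivity))
    hbound ((Real.summable_pow_div_factorial _).mul_left _)

lemma summable_pow_mul {ν : ℝ} (hν : 0 < ν) (m : ℕ) (t : ℝ) :
    Summable (fun k : ℕ => (k:ℝ)^m * bc ν k * t^k) := by
  apply Summable.of_norm
  apply (summable_bc hν m (abs_nonneg t)).congr
  intro k
  rw [Real.norm_eq_abs, abs_mul, abs_pow,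
    abs_of_nonneg (mul_nonneg (by positivity) (bc_pos hν k).le : (0:ℝ) ≤ (k:ℝ)^m * bc ν k)]

lemma hasDerivAt_series (b : ℕ → ℝ)
    (hb : ∀ r : ℝ, 0 ≤ r → Summable (fun k : ℕ => |b k| * k * r ^ k)) (t : ℝ) :
    HasDerivAt (fun x : ℝ => ∑' k : ℕ, b k * x ^ k) (∑' k : ℕ, b k * ((k:ℝ) * t ^ (k-1))) t := by
  set R : ℝ := |t| + 1 with hR
  have hR1 : (1:ℝ) ≤ R := le_add_of_nonneg_left (abs_nonneg t)
  have hR0 : (0:ℝ) < R := lt_of_lt_of_le one_pos hR1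
  apply hasDerivAt_tsum_of_isPreconnected (hb R hR0.le) Metric.isOpen_ball
    (convex_ball (0:ℝ) R).isPreconnected
    (g' := fun (k : ℕ) (x : ℝ) => b k * ((k:ℝ) * x ^ (k-1)))
    (y₀ := (0:ℝ))
  · intro k y _
    exact (hasDerivAt_pow k y).const_mul (b k)
  · intro k y hy
    have hyR : |y| < R := by simpa [Real.dist_eq] using hy
    rw [Real.norm_eq_abs, abs_mul, abs_mul, abs_pow]
    rcases Nat.eq_zero_or_pos k with hk | hk
    · simp [hk]
    · have h1 : |y| ^ (k-1) ≤ R ^ (k-1) := pow_le_pow_left₀ (abs_nonneg y) hyR.le _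
      have h2 : R ^ (k-1) ≤ R ^ k := pow_le_pow_right₀ hR1 (Nat.sub_le k 1)
      have : |(k:ℝ)| = (k:ℝ) := abs_of_nonneg (Nat.cast_nonneg k)
      rw [this]
      calc |b k| * ((k:ℝ) * |y| ^ (k-1)) ≤ |b k| * ((k:ℝ) * R ^ k) := by
            apply mul_le_mul_of_nonneg_left _ (abs_nonneg _)
            exact mul_le_mul_of_nonneg_left (h1.trans h2) (Nat.cast_nonneg k)
        _ = |b k| * k * R ^ k := by ring
  · simpa [Real.dist_eq] using hR0
  · apply summable_of_ne_finset_zero (s := {0})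
    intro k hk
    have : k ≠ 0 := by simpa using hk
    simp [zero_pow this]
  · have : |t| < R := by rw [hR]; linarith [abs_nonneg t]
    simpa [Real.dist_eq] using this

noncomputable def bf (ν t : ℝ) : ℝ := ∑' k : ℕ, bc ν k * t ^ k
noncomputable def bN (ν t : ℝ) : ℝ := ∑' k : ℕ, 2 * (k:ℝ) * bc ν k * t ^ k
noncomputable def bfD (ν t : ℝ) : ℝ := ∑' k : ℕ, bc ν k * ((k:ℝ) * t ^ (k-1))

lemma summable_f {ν : ℝ} (hν : 0 < ν) (t : ℝ) : Summable (fun k : ℕ => bc ν k * t ^ k) := by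
  apply (summable_pow_mul hν 0 t).congr
  intro k; simp

lemma summable_N {ν : ℝ} (hν : 0 < ν) (t : ℝ) :
    Summable (fun k : ℕ => 2 * (k:ℝ) * bc ν k * t ^ k) := by
  apply ((summable_pow_mul hν 1 t).mul_left 2).congr
  intro k; simp; ring

lemma hasDerivAt_bf {ν : ℝ} (hν : 0 < ν) (t : ℝ) : HasDerivAt (bf ν) (bfD ν t) t := by
  apply hasDerivAt_series
  intro r hr
  apply (summable_bc hν 1 hr).congr
  intro k
  rw [pow_one, abs_of_pos (bc_pos hν k)]
  ring

lemma hasDerivAt_bN {ν : ℝ} (hν : 0 < ν) (t : ℝ) :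
    HasDerivAt (bN ν) (∑' k : ℕ, (2 * (k:ℝ) * bc ν k) * ((k:ℝ) * t ^ (k-1))) t := by
  apply hasDerivAt_series (b := fun k => 2 * (k:ℝ) * bc ν k)
  intro r hr
  apply ((summable_bc hν 2 hr).mul_left 2).congr
  intro k
  rw [abs_of_nonneg (mul_nonneg (by positivity) (bc_pos hν k).le : (0:ℝ) ≤ 2 * (k:ℝ) * bc ν k)]
  ring

lemma bf_pos {ν : ℝ} (hν : 0 < ν) {t : ℝ} (ht : 0 ≤ t) : 0 < bf ν t := by
  apply Summable.tsum_pos (summable_f hν t) (fun k => mul_nonneg (bc_pos hν k).le (pow_nonneg ht k)) 0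
  simpa using bc_pos hν 0

lemma bN_nonneg {ν : ℝ} (hν : 0 < ν) {t : ℝ} (ht : 0 ≤ t) : 0 ≤ bN ν t :=
  tsum_nonneg fun k => mul_nonneg (mul_nonneg (by positivity) (bc_pos hν k).le) (pow_nonneg ht k)

lemma bN_eq {ν : ℝ} (hν : 0 < ν) (t : ℝ) : bN ν t = 2 * t * bfD ν t := by
  rw [bfD, bN, ← tsum_mul_left]
  apply tsum_congr
  intro k
  rcases Nat.eq_zero_or_pos k with hk | hk
  · simp [hk]
  · obtain ⟨m, rfl⟩ := Nat.exists_eq_succ_of_ne_zero hk.ne'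
    simp only [Nat.succ_sub_one, pow_succ]
    ring

lemma summable_norm_f {ν : ℝ} (hν : 0 < ν) (t : ℝ) :
    Summable (fun k : ℕ => ‖bc ν k * t ^ k‖) := by
  apply (summable_bc hν 0 (abs_nonneg t)).congr
  intro k
  rw [Real.norm_eq_abs, abs_mul, abs_pow, abs_of_pos (bc_pos hν k)]
  simp

lemma summable_norm_N {ν : ℝ} (hν : 0 < ν) (t : ℝ) :
    Summable (fun k : ℕ => ‖2 * (k:ℝ) * bc ν k * t ^ k‖) := by
  apply ((summable_bc hν 1 (abs_nonneg t)).mul_left 2).congr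
  intro k
  rw [Real.norm_eq_abs, abs_mul, abs_pow,
    abs_of_nonneg (mul_nonneg (by positivity) (bc_pos hν k).le : (0:ℝ) ≤ 2 * (k:ℝ) * bc ν k)]
  ring

lemma pow_cross {t1 t2 : ℝ} (h1 : 0 ≤ t1) (h12 : t1 ≤ t2) {j k : ℕ} (hjk : j ≤ k) :
    t2 ^ j * t1 ^ k ≤ t1 ^ j * t2 ^ k := by
  obtain ⟨d, rfl⟩ := Nat.exists_eq_add_of_le hjk
  have h2 : (0:ℝ) ≤ t2 := h1.trans h12
  have hd : t1 ^ d ≤ t2 ^ d := pow_le_pow_left₀ h1 h12 d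
  calc t2 ^ j * t1 ^ (j + d) = (t2 ^ j * t1 ^ j) * t1 ^ d := by rw [pow_add]; ring
    _ ≤ (t2 ^ j * t1 ^ j) * t2 ^ d := by
        apply mul_le_mul_of_nonneg_left hd (mul_nonneg (pow_nonneg h2 j) (pow_nonneg h1 j))
    _ = t1 ^ j * t2 ^ (j + d) := by rw [pow_add]; ring

set_option maxHeartbeats 1000000 in
lemma cross {ν : ℝ} (hν : 0 < ν) {t1 t2 : ℝ} (h1 : 0 < t1) (h12 : t1 < t2) :
    bN ν t1 * bf ν t2 < bN ν t2 * bf ν t1 := by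
  have h2 : 0 < t2 := h1.trans h12
  set φ : ℕ × ℕ → ℝ := fun p =>
    2 * (p.1:ℝ) * bc ν p.1 * bc ν p.2 * (t2 ^ p.1 * t1 ^ p.2 - t1 ^ p.1 * t2 ^ p.2) with hφ
  have S21 : Summable (fun p : ℕ × ℕ => (2 * (p.1:ℝ) * bc ν p.1 * t2 ^ p.1) * (bc ν p.2 * t1 ^ p.2)) :=
    summable_mul_of_summable_norm (summable_norm_N hν t2) (summable_norm_f hν t1)
  have S12 : Summable (fun p : ℕ × ℕ => (2 * (p.1:ℝ) * bc ν p.1 * t1 ^ p.1) * (bc ν p.2 * t2 ^ p.2)) :=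
    summable_mul_of_summable_norm (summable_norm_N hν t1) (summable_norm_f hν t2)
  have hφs : Summable φ := by
    apply (S21.sub S12).congr
    intro p; rw [hφ]; ring
  have hsub : bN ν t2 * bf ν t1 - bN ν t1 * bf ν t2 = ∑' p, φ p := by
    rw [bN, bN, bf, bf,
      tsum_mul_tsum_of_summable_norm (summable_norm_N hν t2) (summable_norm_f hν t1),
      tsum_mul_tsum_of_summable_norm (summable_norm_N hν t1) (summable_norm_f hν t2),
      ← Summable.tsum_sub S21 S12]
    apply tsum_congr
    intro p; rw [hφ]; ring
  suffices hpos : 0 < ∑' p, φ p by linarith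
  have e : (Equiv.prodComm ℕ ℕ) = (Equiv.prodComm ℕ ℕ) := rfl
  have hswap : ∑' p : ℕ × ℕ, φ (p.2, p.1) = ∑' p, φ p := by
    exact (Equiv.prodComm ℕ ℕ).tsum_eq φ
  have hφs' : Summable (fun p : ℕ × ℕ => φ (p.2, p.1)) := by
    exact ((Equiv.prodComm ℕ ℕ).summable_iff (f := φ)).2 hφs
  have hkey : ∀ p : ℕ × ℕ, φ p + φ (p.2, p.1) =
      2 * bc ν p.1 * bc ν p.2 * (((p.1:ℝ) - (p.2:ℝ)) * (t2 ^ p.1 * t1 ^ p.2 - t1 ^ p.1 * t2 ^ p.2)) := by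
    intro p; rw [hφ]; ring
  have hχnn : ∀ p : ℕ × ℕ, 0 ≤ φ p + φ (p.2, p.1) := by
    intro p
    rw [hkey p]
    apply mul_nonneg (mul_nonneg (mul_nonneg two_pos.le (bc_pos hν p.1).le) (bc_pos hν p.2).le)
    rcases le_total p.1 p.2 with hle | hle
    · apply mul_nonneg_of_nonpos_of_nonpos
      · simp only [sub_nonpos]; exact_mod_cast hle
      · simp only [sub_nonpos]; exact pow_cross h1.le h12.le hle
    · apply mul_nonneg
      · simp only [sub_nonneg]; exact_mod_cast hle
      · have := pow_cross h1.le h12.le hle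
        simp only [sub_nonneg]; nlinarith [this]
  have hχpos : 0 < φ (1, 0) + φ ((1,0).2, (1,0).1) := by
    rw [hkey (1, 0)]
    simp only [Nat.cast_one, Nat.cast_zero, pow_one, pow_zero]
    have hb := mul_pos (bc_pos hν 1) (bc_pos hν 0)
    have hd : (0:ℝ) < t2 - t1 := by linarith
    nlinarith [mul_pos hb hd]
  have hχ : 0 < ∑' p : ℕ × ℕ, (φ p + φ (p.2, p.1)) :=
    Summable.tsum_pos (hφs.add hφs') hχnn (1, 0) hχpos
  have hsum2 : ∑' p : ℕ × ℕ, (φ p + φ (p.2, p.1)) = 2 * ∑' p, φ p := by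
    rw [Summable.tsum_add hφs hφs', hswap]; ring
  linarith [hsum2 ▸ hχ]

lemma G_mono {ν : ℝ} (hν : 0 < ν) {t1 t2 : ℝ} (h1 : 0 < t1) (h12 : t1 < t2) :
    bN ν t1 / bf ν t1 < bN ν t2 / bf ν t2 := by
  have h2 : 0 < t2 := h1.trans h12
  rw [div_lt_div_iff₀ (bf_pos hν h1.le) (bf_pos hν h2.le)]
  exact cross hν h1 h12

lemma G_cont {ν : ℝ} (hν : 0 < ν) : Continuous (fun t => bN ν t) := by
  rw [continuous_iff_continuousAt]
  exact fun t => (hasDerivAt_bN hν t).differentiableAt.continuousAt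

lemma f_cont {ν : ℝ} (hν : 0 < ν) : Continuous (fun t => bf ν t) := by
  rw [continuous_iff_continuousAt]
  exact fun t => (hasDerivAt_bf hν t).differentiableAt.continuousAt

lemma G_small {ν : ℝ} (hν : 0 < ν) {T : ℝ} (hT : 0 < T) :
    ∃ t1 : ℝ, 0 < t1 ∧ bN ν t1 / bf ν t1 ≤ T := by
  set S : ℝ := bN ν 1 with hS
  have hSpos : 0 < S := by
    rw [hS, bN]
    apply Summable.tsum_pos (summable_N hν 1)
      (fun k => mul_nonneg (mul_nonneg (by positivity) (bc_pos hν k).le) (by positivity)) 1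
    simpa using mul_pos two_pos (bc_pos hν 1)
  have hc0 : 0 < bc ν 0 := bc_pos hν 0
  set t1 : ℝ := min 1 (T * bc ν 0 / S) with ht1
  have ht1pos : 0 < t1 := lt_min one_pos (by positivity)
  refine ⟨t1, ht1pos, ?_⟩
  have ht1le1 : t1 ≤ 1 := min_le_left _ _
  have hNle : bN ν t1 ≤ t1 * S := by
    rw [hS, bN, bN, ← tsum_mul_left]
    apply Summable.tsum_le_tsum _ (summable_N hν t1) ((summable_N hν 1).mul_left t1)
    intro k
    rcases Nat.eq_zero_or_pos k with hk | hk
    · simp [hk]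
    · have hpow : t1 ^ k ≤ t1 := by
        calc t1 ^ k ≤ t1 ^ 1 := pow_le_pow_of_le_one ht1pos.le ht1le1 hk
          _ = t1 := pow_one t1
      calc 2 * (k:ℝ) * bc ν k * t1 ^ k ≤ 2 * (k:ℝ) * bc ν k * t1 := by
            apply mul_le_mul_of_nonneg_left hpow
              (mul_nonneg (by positivity) (bc_pos hν k).le)
        _ = t1 * (2 * (k:ℝ) * bc ν k * 1 ^ k) := by rw [one_pow]; ring
  have hfge : bc ν 0 ≤ bf ν t1 := by
    rw [bf]
    have := Summable.le_tsum (summable_f hν t1) 0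
      (fun j _ => mul_nonneg (bc_pos hν j).le (pow_nonneg ht1pos.le j))
    simpa using this
  have hfpos : 0 < bf ν t1 := bf_pos hν ht1pos.le
  rw [div_le_iff₀ hfpos]
  calc bN ν t1 ≤ t1 * S := hNle
    _ ≤ (T * bc ν 0 / S) * S := by
        apply mul_le_mul_of_nonneg_right (min_le_right _ _) hSpos.le
    _ = T * bc ν 0 := by field_simp
    _ ≤ T * bf ν t1 := mul_le_mul_of_nonneg_left hfge hT.le

lemma G_large {ν : ℝ} (hν : 0 < ν) {T : ℝ} (hT : 0 < T) :
    ∃ t2 : ℝ, 0 < t2 ∧ T ≤ bN ν t2 / bf ν t2 := by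
  set m : ℕ := ⌈T⌉₊ with hm
  set K : ℕ := m + 1 with hK
  have hTK : T ≤ (K:ℝ) := by
    calc T ≤ (m:ℝ) := Nat.le_ceil T
      _ ≤ (K:ℝ) := by exact_mod_cast Nat.le_succ m
  set A : ℝ := ∑ k ∈ Finset.range K, bc ν k with hA
  have hApos : 0 < A := by
    rw [hA]
    apply Finset.sum_pos (fun k _ => bc_pos hν k)
    simp [hK]
  set t2 : ℝ := max 1 (2 * A / bc ν K) + 1 with ht2
  have ht2one : (1:ℝ) ≤ t2 := by
    have := le_max_left (1:ℝ) (2 * A / bc ν K); rw [ht2]; linarith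
  have ht2pos : 0 < t2 := lt_of_lt_of_le one_pos ht2one
  have ht2big : 2 * A / bc ν K ≤ t2 := by
    have := le_max_right (1:ℝ) (2 * A / bc ν K); rw [ht2]; linarith
  refine ⟨t2, ht2pos, ?_⟩
  have hfpos : 0 < bf ν t2 := bf_pos hν ht2pos.le
  -- Pf : head of bf
  set Pf : ℝ := ∑ k ∈ Finset.range K, bc ν k * t2 ^ k with hPf
  have hPfnn : 0 ≤ Pf := Finset.sum_nonneg fun k _ =>
    mul_nonneg (bc_pos hν k).le (pow_nonneg ht2pos.le k)
  -- tail of bf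
  have hsplitf : Pf + ∑' i : ℕ, bc ν (i + K) * t2 ^ (i + K) = bf ν t2 :=
    Summable.sum_add_tsum_nat_add K (summable_f hν t2)
  -- bound : Pf ≤ A * t2 ^ m
  have hPfle : Pf ≤ A * t2 ^ m := by
    rw [hPf, hA, Finset.sum_mul]
    apply Finset.sum_le_sum
    intro k hk
    have hk' : k ≤ m := by
      have := Finset.mem_range.1 hk; omega
    exact mul_le_mul_of_nonneg_left (pow_le_pow_right₀ ht2one hk') (bc_pos hν k).le
  -- bf lower bound by single term K
  have hfgeK : bc ν K * t2 ^ K ≤ bf ν t2 := by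
    rw [bf]
    exact Summable.le_tsum (summable_f hν t2) K
      (fun j _ => mul_nonneg (bc_pos hν j).le (pow_nonneg ht2pos.le j))
  -- 2 * Pf ≤ bf
  have h2Pf : 2 * Pf ≤ bf ν t2 := by
    have hstep : 2 * A * t2 ^ m ≤ bc ν K * t2 ^ K := by
      have ht2K : t2 ^ K = t2 ^ m * t2 := by rw [hK, pow_succ]
      rw [ht2K]
      have h1 : 2 * A ≤ bc ν K * t2 := by
        rw [div_le_iff₀ (bc_pos hν K)] at ht2big
        linarith [ht2big]
      calc 2 * A * t2 ^ m ≤ (bc ν K * t2) * t2 ^ m :=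
            mul_le_mul_of_nonneg_right h1 (pow_nonneg ht2pos.le m)
        _ = bc ν K * (t2 ^ m * t2) := by ring
    linarith [hPfle, hfgeK, hstep, mul_le_mul_of_nonneg_left hPfle (by norm_num : (0:ℝ) ≤ 2)]
  -- bN lower bound
  have hNtail : 2 * (K:ℝ) * (bf ν t2 - Pf) ≤ bN ν t2 := by
    have hsplitN : (∑ k ∈ Finset.range K, 2 * (k:ℝ) * bc ν k * t2 ^ k)
        + ∑' i : ℕ, 2 * ((i + K : ℕ):ℝ) * bc ν (i + K) * t2 ^ (i + K) = bN ν t2 := by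
      exact Summable.sum_add_tsum_nat_add K (summable_N hν t2)
    have hheadnn : 0 ≤ ∑ k ∈ Finset.range K, 2 * (k:ℝ) * bc ν k * t2 ^ k :=
      Finset.sum_nonneg fun k _ =>
        mul_nonneg (mul_nonneg (by positivity) (bc_pos hν k).le) (pow_nonneg ht2pos.le k)
    have htail : ∑' i : ℕ, 2 * (K:ℝ) * (bc ν (i + K) * t2 ^ (i + K))
        ≤ ∑' i : ℕ, 2 * ((i + K : ℕ):ℝ) * bc ν (i + K) * t2 ^ (i + K) := by
      apply Summable.tsum_le_tsum _ (((summable_nat_add_iff K).2 (summable_f hν t2)).mul_left (2 * (K:ℝ)))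
        ((summable_nat_add_iff K).2 (summable_N hν t2))
      intro i
      have : (K:ℝ) ≤ ((i + K : ℕ):ℝ) := by exact_mod_cast Nat.le_add_left K i
      have hnn : 0 ≤ bc ν (i + K) * t2 ^ (i + K) :=
        mul_nonneg (bc_pos hν _).le (pow_nonneg ht2pos.le _)
      calc 2 * (K:ℝ) * (bc ν (i + K) * t2 ^ (i + K))
          ≤ 2 * ((i + K : ℕ):ℝ) * (bc ν (i + K) * t2 ^ (i + K)) := by
            apply mul_le_mul_of_nonneg_right _ hnn
            linarith
        _ = 2 * ((i + K : ℕ):ℝ) * bc ν (i + K) * t2 ^ (i + K) := by ring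
    have htsumtail : ∑' i : ℕ, 2 * (K:ℝ) * (bc ν (i + K) * t2 ^ (i + K))
        = 2 * (K:ℝ) * (bf ν t2 - Pf) := by
      rw [tsum_mul_left]
      have : ∑' i : ℕ, bc ν (i + K) * t2 ^ (i + K) = bf ν t2 - Pf := by linarith [hsplitf]
      rw [this]
    linarith [htail, htsumtail ▸ htail, hheadnn, hsplitN]
  -- conclude
  rw [le_div_iff₀ hfpos]
  have hKpos : (0:ℝ) < K := by positivity
  nlinarith [hNtail, h2Pf, hTK, hfpos, hPfnn]

lemma existsUnique_G {ν : ℝ} (hν : 0 < ν) {T : ℝ} (hT : 0 < T) :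
    ∃! t : ℝ, 0 < t ∧ bN ν t / bf ν t = T := by
  obtain ⟨t1, ht1, hG1⟩ := G_small hν hT
  obtain ⟨t2, ht2, hG2⟩ := G_large hν hT
  set G : ℝ → ℝ := fun t => bN ν t / bf ν t with hG
  set th : ℝ := max t1 t2 with hth
  have htht1 : t1 ≤ th := le_max_left _ _
  have hthpos : 0 < th := lt_of_lt_of_le ht1 htht1
  have hGth : T ≤ G th := by
    rcases (le_max_right t1 t2).lt_or_eq with h | h
    · exact hG2.trans (G_mono hν ht2 h).le
    · rw [hth, ← h]; exact hG2
  have hcont : ContinuousOn G (Icc t1 th) := by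
    apply ContinuousOn.div (G_cont hν).continuousOn (f_cont hν).continuousOn
    intro x hx
    exact (bf_pos hν (ht1.trans_le hx.1).le).ne'
  have hmem : T ∈ Icc (G t1) (G th) := ⟨hG1, hGth⟩
  obtain ⟨t0, ht0mem, ht0⟩ := intermediate_value_Icc htht1 hcont hmem
  have ht0pos : 0 < t0 := lt_of_lt_of_le ht1 ht0mem.1
  have ht0' : bN ν t0 / bf ν t0 = T := ht0
  refine ⟨t0, ⟨ht0pos, ht0'⟩, ?_⟩
  rintro t ⟨htpos, htG⟩
  rcases lt_trichotomy t t0 with h | h | h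
  · exfalso
    have := G_mono hν htpos h
    rw [htG, ht0'] at this
    exact lt_irrefl T this
  · exact h
  · exfalso
    have := G_mono hν ht0pos h
    rw [htG, ht0'] at this
    exact lt_irrefl T this

lemma besselI_eq {ν : ℝ} (hν : 0 < ν) {x : ℝ} (hx : 0 < x) :
    besselI ν x = (x/2) ^ ν * bf ν (x^2/4) := by
  rw [besselI, bf, ← tsum_mul_left]
  apply tsum_congr
  intro k
  have h2 : (0:ℝ) < x/2 := by positivity
  have h1 : (x/2 : ℝ) ^ (2*(k:ℝ) + ν) = ((x/2:ℝ) ^ (2*(k:ℝ))) * (x/2)^ν :=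
    Real.rpow_add h2 _ _
  have h3 : (x/2 : ℝ) ^ (2*(k:ℝ)) = ((x/2:ℝ)^(2*k : ℕ) : ℝ) := by
    rw [← Real.rpow_natCast (x/2) (2*k)]; push_cast; ring_nf
  have h4 : ((x/2:ℝ)^(2*k : ℕ)) = (x^2/4)^k := by
    rw [pow_mul, div_pow]; norm_num
  rw [h1, h3, h4, bc]
  ring

lemma bessel_ratio {ν : ℝ} (hν : 0 < ν) {s : ℝ} (hs : 0 < s) :
    s * deriv (besselI ν) s / besselI ν s = ν + bN ν (s^2/4) / bf ν (s^2/4) := by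
  have htpos : (0:ℝ) < s^2/4 := by positivity
  have hs2 : (0:ℝ) < s/2 := by positivity
  have ha : HasDerivAt (fun y : ℝ => y ^ ν) (ν * (s/2) ^ (ν - 1)) (s/2) :=
    Real.hasDerivAt_rpow_const (Or.inl hs2.ne')
  have hb : HasDerivAt (fun x : ℝ => x / 2) (1/2) s := by
    simpa using (hasDerivAt_id s).div_const 2
  have h1 : HasDerivAt (fun x : ℝ => (x/2) ^ ν) ((ν * (s/2) ^ (ν - 1)) * (1/2)) s :=
    by have := ha.comp s hb; exact this
  have hinner : HasDerivAt (fun x : ℝ => x^2/4) (s/2) s := by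
    have : HasDerivAt (fun x : ℝ => x^2/4) _ s := (hasDerivAt_pow 2 s).div_const 4
    convert this using 1
    push_cast
    ring
  have h2 : HasDerivAt (fun x : ℝ => bf ν (x^2/4)) (bfD ν (s^2/4) * (s/2)) s :=
    by have := (hasDerivAt_bf hν (s^2/4)).comp s hinner; exact this
  have hF := h1.mul h2
  have hEq : besselI ν =ᶠ[𝓝 s] (fun x => (x/2) ^ ν * bf ν (x^2/4)) := by
    filter_upwards [Ioi_mem_nhds hs] with x hx
    exact besselI_eq hν hx
  have hD : HasDerivAt (besselI ν)
      ((ν * (s/2) ^ (ν - 1)) * (1/2) * bf ν (s^2/4) + ((s/2) ^ ν) * (bfD ν (s^2/4) * (s/2))) s :=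
    hF.congr_of_eventuallyEq hEq
  rw [hD.deriv, besselI_eq hν hs]
  have hfpos : 0 < bf ν (s^2/4) := bf_pos hν htpos.le
  have hrp : (0:ℝ) < (s/2) ^ ν := Real.rpow_pos_of_pos hs2 ν
  have hsub : (s/2 : ℝ) ^ (ν - 1) = (s/2) ^ ν / (s/2) := by
    rw [Real.rpow_sub hs2, Real.rpow_one]
  rw [hsub, bN_eq hν (s^2/4)]
  field_simp
  ring

end DispersionAux

open DispersionAux in
/-- Proposition 1: for every `V† < 0`, `Vα < V†` and `C > 0` there is a unique
excitability `g > 0` solving the dispersion relation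
`C²(1 − 2Vα) = s₀ I'_{C²}(s₀)/I_{C²}(s₀)`, `s₀ = 2C√g (1 − V†/Vα)^{1/(2C²)}`. -/
theorem dispersion_relation_unique_solution
    (Vdag Valpha C : ℝ) (hVd : Vdag < 0) (hVa : Valpha < Vdag) (hC : 0 < C) :
    ∃! g : ℝ, 0 < g ∧
      C ^ 2 * (1 - 2 * Valpha) =
        (2 * C * Real.sqrt g * (1 - Vdag / Valpha) ^ (1 / (2 * C ^ 2))) *
          deriv (besselI (C ^ 2))
            (2 * C * Real.sqrt g * (1 - Vdag / Valpha) ^ (1 / (2 * C ^ 2))) /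
          besselI (C ^ 2)
            (2 * C * Real.sqrt g * (1 - Vdag / Valpha) ^ (1 / (2 * C ^ 2))) := by
  have hν : (0:ℝ) < C^2 := by positivity
  have hVa0 : Valpha < 0 := hVa.trans hVd
  have hbase : 0 < 1 - Vdag / Valpha := by
    have h1 : (Vdag - Valpha) / Valpha < 0 := div_neg_of_pos_of_neg (by linarith) hVa0
    have h2 : (Vdag - Valpha) / Valpha = Vdag / Valpha - 1 := by
      rw [sub_div, div_self hVa0.ne]
    linarith [h2 ▸ h1]
  set B : ℝ := (1 - Vdag / Valpha) ^ (1 / (2 * C ^ 2)) with hB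
  have hBpos : 0 < B := Real.rpow_pos_of_pos hbase _
  set T : ℝ := -(2 * Valpha) * C ^ 2 with hT
  have hTpos : 0 < T := mul_pos (by linarith) hν
  obtain ⟨t0, ⟨ht0pos, ht0eq⟩, ht0uniq⟩ := existsUnique_G hν hTpos
  have hTid : C ^ 2 * (1 - 2 * Valpha) = C ^ 2 + T := by rw [hT]; ring
  have hkey : ∀ g : ℝ, 0 < g →
      ((C ^ 2 * (1 - 2 * Valpha) =
        (2 * C * Real.sqrt g * B) * deriv (besselI (C ^ 2)) (2 * C * Real.sqrt g * B) /
          besselI (C ^ 2) (2 * C * Real.sqrt g * B)) ↔ (C ^ 2 * B ^ 2 * g = t0)) := by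
    intro g hg
    have hsqrt : 0 < Real.sqrt g := Real.sqrt_pos.2 hg
    have hspos : 0 < 2 * C * Real.sqrt g * B := by positivity
    have htg : (2 * C * Real.sqrt g * B) ^ 2 / 4 = C ^ 2 * B ^ 2 * g := by
      rw [mul_pow, mul_pow, mul_pow, Real.sq_sqrt hg.le]; ring
    rw [bessel_ratio hν hspos, htg]
    constructor
    · intro h
      apply ht0uniq
      refine ⟨by positivity, ?_⟩
      rw [hTid] at h
      linarith
    · intro h
      have hGg : bN (C^2) (C ^ 2 * B ^ 2 * g) / bf (C^2) (C ^ 2 * B ^ 2 * g) = T := by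
        rw [h]; exact ht0eq
      rw [hGg, hTid]
  have hgd : (0:ℝ) < C ^ 2 * B ^ 2 := by positivity
  refine ⟨t0 / (C ^ 2 * B ^ 2), ⟨by positivity, ?_⟩, ?_⟩
  · rw [hkey _ (by positivity)]
    field_simp
  · rintro y ⟨hy, hyeq⟩
    have := (hkey y hy).1 hyeq
    rw [eq_div_iff hgd.ne', ← this]
    ring
end

section
/- For every γ > 0, the ratio R_γ(p) = I_{γ+1}(p)/I_γ(p) is a strictly increasing function of p on (0, ∞). -/
open Real Filter Set Topology

namespace BesselAux

/-- denominator -/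
noncomputable def c (ν : ℝ) (k : ℕ) : ℝ := (k.factorial : ℝ) * Real.Gamma ((k : ℝ) + ν + 1)

lemma c_pos {ν : ℝ} (hν : 0 ≤ ν) (k : ℕ) : 0 < c ν k := by
  apply mul_pos (by exact_mod_cast k.factorial_pos)
  exact Real.Gamma_pos_of_pos (by positivity)

lemma c_succ {ν : ℝ} (hν : 0 ≤ ν) (k : ℕ) :
    c ν (k + 1) = ((k : ℝ) + 1) * ((k : ℝ) + ν + 1) * c ν k := by
  have h1 : ((k : ℝ) + ν + 1) ≠ 0 := by positivity
  have : Real.Gamma (((k : ℕ) + 1 : ℕ) + ν + 1) = ((k : ℝ) + ν + 1) * Real.Gamma ((k : ℝ) + ν + 1) := by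
    push_cast
    rw [show (k : ℝ) + 1 + ν + 1 = ((k : ℝ) + ν + 1) + 1 by ring, Real.Gamma_add_one h1]
  rw [c, this]
  simp [c, Nat.factorial_succ]
  push_cast
  ring

/-- shift between orders: `c (ν+1) k` from `c ν (k+1)` -/
lemma c_shift {ν : ℝ} (hν : 0 ≤ ν) (k : ℕ) :
    ((k : ℝ) + 1) * c (ν + 1) k = c ν (k + 1) / 1 := by
  rw [c_succ hν, c, c]
  rw [show (k : ℝ) + (ν + 1) + 1 = (k : ℝ) + ν + 1 + 1 by ring,
    Real.Gamma_add_one (by positivity)]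
  ring

end BesselAux

namespace BesselAux

lemma summable_mul_pow {ν : ℝ} (hν : 0 ≤ ν) {q : ℝ} (hq : 0 ≤ q) :
    Summable (fun k : ℕ => ((k : ℝ) + 1) * q ^ k / c ν k) := by
  apply summable_of_ratio_norm_eventually_le (r := 1/2) (by norm_num)
  filter_upwards [eventually_ge_atTop ⌈4 * q⌉₊] with k hk
  have hk4 : 4 * q ≤ (k : ℝ) + 1 := by
    calc 4 * q ≤ (⌈4 * q⌉₊ : ℝ) := Nat.le_ceil _
    _ ≤ (k : ℝ) := by exact_mod_cast hk
    _ ≤ (k : ℝ) + 1 := by linarith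
  have hc := c_pos hν k
  have hc' := c_pos hν (k + 1)
  have hqk : (0 : ℝ) ≤ q ^ k := pow_nonneg hq k
  rw [Real.norm_eq_abs, Real.norm_eq_abs,
    abs_of_nonneg (by positivity), abs_of_nonneg (by positivity)]
  rw [c_succ hν, pow_succ]
  rw [div_le_iff₀ (by positivity)]
  have e1 : ((k : ℝ) + 1) * q ^ k / c ν k * (((k : ℝ) + 1) * (((k : ℝ) + ν + 1)) * c ν k)
      = ((k : ℝ) + 1) ^ 2 * ((k : ℝ) + ν + 1) * q ^ k := by
    field_simp
  push_cast
  have e2 : 1 / 2 * (((k:ℝ) + 1) * q ^ k / c ν k) * (((k:ℝ) + 1) * ((k:ℝ) + ν + 1) * c ν k)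
      = 1/2 * (((k : ℝ) + 1) ^ 2 * ((k : ℝ) + ν + 1) * q ^ k) := by
    field_simp
  rw [e2]
  have hK : (1:ℝ) ≤ (k:ℝ)+1 := by have := k.cast_nonneg (α := ℝ); linarith
  have h5 : ((k:ℝ)+1+1) * q ≤ 1/2*(((k:ℝ)+1)^2 * (((k:ℝ)+ν+1))) := by
    nlinarith [mul_nonneg (sub_nonneg.2 hk4) (by linarith : (0:ℝ) ≤ (k:ℝ)+1),
      mul_nonneg (mul_nonneg hq (by linarith : (0:ℝ) ≤ (k:ℝ)+1)) hν,
      mul_nonneg (mul_nonneg (by linarith : (0:ℝ) ≤ (k:ℝ)+1) (by linarith : (0:ℝ) ≤ (k:ℝ)+1)) hν,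
      mul_nonneg hq hν]
  nlinarith [mul_le_mul_of_nonneg_right h5 hqk, hqk, mul_nonneg hq hqk]

end BesselAux

namespace BesselAux

noncomputable def term (ν x : ℝ) (k : ℕ) : ℝ := (x / 2) ^ (2 * (k : ℝ) + ν) / c ν k

noncomputable def dterm (ν x : ℝ) (k : ℕ) : ℝ :=
  (2 * (k : ℝ) + ν) * (x / 2) ^ (2 * (k : ℝ) + ν - 1) / (2 * c ν k)

lemma besselI_eq (ν x : ℝ) : besselI ν x = ∑' k, term ν x k := rfl

lemma rpow_split {y : ℝ} (hy : 0 < y) (e : ℝ) (k : ℕ) :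
    y ^ (2 * (k : ℝ) + e) = (y ^ 2) ^ k * y ^ e := by
  rw [Real.rpow_add hy]
  congr 1
  rw [show (2 * (k : ℝ)) = ((2 * k : ℕ) : ℝ) by push_cast; ring, Real.rpow_natCast, pow_mul]

lemma summable_of_le_aux {ν : ℝ} (hν : 0 ≤ ν) {q : ℝ} (hq : 0 ≤ q) (C : ℝ) {f : ℕ → ℝ}
    (h : ∀ k, |f k| ≤ C * (((k : ℝ) + 1) * q ^ k / c ν k)) : Summable f :=
  Summable.of_norm_bounded ((summable_mul_pow hν hq).mul_left C) h

lemma base_bound {a b y : ℝ} (ha : 0 < a) (hay : a ≤ y) (hyb : y ≤ b) (e : ℝ) :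
    y ^ e ≤ a ^ e + b ^ e := by
  have hy : 0 < y := lt_of_lt_of_le ha hay
  rcases le_total e 0 with he | he
  · have h1 : y ^ e ≤ a ^ e := Real.rpow_le_rpow_of_nonpos ha hay he
    have h2 : (0:ℝ) ≤ b ^ e := (Real.rpow_pos_of_pos (lt_of_lt_of_le hy hyb) e).le
    linarith
  · have h1 : y ^ e ≤ b ^ e := Real.rpow_le_rpow hy.le hyb he
    have h2 : (0:ℝ) ≤ a ^ e := (Real.rpow_pos_of_pos ha e).le
    linarith

lemma term_nonneg {ν : ℝ} (hν : 0 ≤ ν) {x : ℝ} (hx : 0 < x) (k : ℕ) : 0 ≤ term ν x k := by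
  exact div_nonneg (Real.rpow_pos_of_pos (by linarith : (0:ℝ) < x/2) (2 * (k : ℝ) + ν)).le
    (c_pos hν k).le

lemma summable_term {ν : ℝ} (hν : 0 ≤ ν) {x : ℝ} (hx : 0 < x) : Summable (term ν x) := by
  have hx2 : (0:ℝ) < x / 2 := by linarith
  apply summable_of_le_aux hν (q := (x/2)^2) (by positivity) ((x/2) ^ ν)
  intro k
  rw [abs_of_nonneg (term_nonneg hν hx k), term, rpow_split hx2]
  have hc := c_pos hν k
  rw [div_le_iff₀ hc]
  have e1 : (x / 2) ^ ν * (((k:ℝ) + 1) * ((x/2)^2) ^ k / c ν k) * c ν k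
      = (((k:ℝ)+1)) * (((x/2)^2) ^ k * (x / 2) ^ ν) := by field_simp
  rw [e1]
  nlinarith [mul_nonneg (pow_nonneg (sq_nonneg (x/2)) k) (Real.rpow_pos_of_pos hx2 ν).le,
    k.cast_nonneg (α := ℝ)]

lemma besselI_pos {ν : ℝ} (hν : 0 ≤ ν) {x : ℝ} (hx : 0 < x) : 0 < besselI ν x := by
  rw [besselI_eq]
  apply Summable.tsum_pos (summable_term hν hx) (term_nonneg hν hx) 0
  have h1 : (0:ℝ) < (x/2) ^ (2 * ((0:ℕ) : ℝ) + ν) := Real.rpow_pos_of_pos (by linarith) _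
  exact div_pos h1 (c_pos hν 0)

end BesselAux

namespace BesselAux

lemma hasDerivAt_term (ν : ℝ) (k : ℕ) {x : ℝ} (hx : 0 < x) :
    HasDerivAt (fun y => term ν y k) (dterm ν x k) x := by
  have h1 : HasDerivAt (fun y : ℝ => y / 2) (1/2) x := (hasDerivAt_id x).div_const 2
  have h0 : x / 2 ≠ 0 := by positivity
  have h2 : HasDerivAt (fun y : ℝ => (y/2) ^ (2*(k:ℝ)+ν))
      ((2*(k:ℝ)+ν) * (x/2) ^ (2*(k:ℝ)+ν-1) * (1/2)) x :=
    (Real.hasDerivAt_rpow_const (x := x / 2) (p := 2*(k:ℝ)+ν) (Or.inl h0)).comp (h := fun y : ℝ => y / 2) x h1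
  have h3 := h2.div_const (c ν k)
  have e : (2*(k:ℝ)+ν) * (x/2) ^ (2*(k:ℝ)+ν-1) * (1/2) / (c ν k) = dterm ν x k := by
    rw [dterm]; ring
  rw [e] at h3
  exact h3

lemma dterm_abs_le {ν : ℝ} (hν : 0 ≤ ν) {a b y : ℝ} (ha : 0 < a) (hay : a ≤ y)
    (hyb : y ≤ b) (k : ℕ) :
    |dterm ν y k| ≤ (2+ν) * ((a/2) ^ (ν-1) + (b/2) ^ (ν-1)) / 2
      * (((k:ℝ)+1) * ((b/2)^2) ^ k / c ν k) := by
  have hy : 0 < y := lt_of_lt_of_le ha hay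
  have hy2 : (0:ℝ) < y/2 := by linarith
  have hc := c_pos hν k
  have hsplit : (y/2) ^ (2*(k:ℝ)+ν-1) = ((y/2)^2) ^ k * (y/2) ^ (ν-1) := by
    rw [show 2*(k:ℝ)+ν-1 = 2*(k:ℝ)+(ν-1) by ring, rpow_split hy2]
  have hnn : 0 ≤ dterm ν y k := by
    rw [dterm]
    have := Real.rpow_pos_of_pos hy2 (2*(k:ℝ)+ν-1)
    have hk := k.cast_nonneg (α := ℝ)
    positivity
  rw [abs_of_nonneg hnn, dterm, hsplit]
  have b1 : 2*(k:ℝ)+ν ≤ (2+ν)*((k:ℝ)+1) := by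
    have hk := k.cast_nonneg (α := ℝ); nlinarith
  have b2 : ((y/2)^2) ^ k ≤ ((b/2)^2) ^ k := by
    apply pow_le_pow_left₀ (sq_nonneg _)
    nlinarith
  have b3 : (y/2) ^ (ν-1) ≤ (a/2) ^ (ν-1) + (b/2) ^ (ν-1) :=
    base_bound (by linarith) (by linarith) (by linarith) (ν-1)
  have hpos1 : (0:ℝ) ≤ ((y/2)^2) ^ k := pow_nonneg (sq_nonneg _) k
  have hpos2 : (0:ℝ) ≤ (y/2) ^ (ν-1) := (Real.rpow_pos_of_pos hy2 _).le
  have hpos3 : (0:ℝ) ≤ (a/2) ^ (ν-1) + (b/2) ^ (ν-1) := by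
    have := Real.rpow_pos_of_pos (by linarith : (0:ℝ) < a/2) (ν-1)
    have := Real.rpow_pos_of_pos (by linarith : (0:ℝ) < b/2) (ν-1)
    linarith
  have b4 : (2*(k:ℝ)+ν) * (((y/2)^2) ^ k * (y/2) ^ (ν-1))
      ≤ ((2+ν)*((k:ℝ)+1)) * (((b/2)^2) ^ k * ((a/2) ^ (ν-1) + (b/2) ^ (ν-1))) := by
    apply mul_le_mul b1 ?_ (by positivity) (by positivity)
    exact mul_le_mul b2 b3 hpos2 (pow_nonneg (sq_nonneg _) k)
  rw [div_le_iff₀ (by positivity : (0:ℝ) < 2 * c ν k)]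
  have e : (2+ν) * ((a/2) ^ (ν-1) + (b/2) ^ (ν-1)) / 2 * (((k:ℝ)+1) * ((b/2)^2) ^ k / c ν k)
      * (2 * c ν k)
      = (2+ν)*((k:ℝ)+1) * (((b/2)^2) ^ k * ((a/2) ^ (ν-1) + (b/2) ^ (ν-1))) := by
    field_simp
  rw [e]; exact b4

lemma summable_dterm {ν : ℝ} (hν : 0 ≤ ν) {x : ℝ} (hx : 0 < x) : Summable (dterm ν x) := by
  apply summable_of_le_aux hν (q := ((x+1)/2)^2) (by positivity)
    ((2+ν) * ((x/2/2) ^ (ν-1) + ((x+1)/2) ^ (ν-1)) / 2)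
  intro k
  exact dterm_abs_le hν (by linarith : (0:ℝ) < x/2) (by linarith) (by linarith) k

lemma hasDerivAt_besselI {ν : ℝ} (hν : 0 ≤ ν) {x : ℝ} (hx : 0 < x) :
    HasDerivAt (besselI ν) (∑' k, dterm ν x k) x := by
  have hmem : x ∈ Ioo (x/2) (x+1) := ⟨by linarith, by linarith⟩
  have key := hasDerivAt_tsum_of_isPreconnected
    (u := fun (k : ℕ) => (2+ν) * ((x/2/2) ^ (ν-1) + ((x+1)/2) ^ (ν-1)) / 2
      * (((k:ℝ)+1) * (((x+1)/2)^2) ^ k / c ν k))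
    (g := fun (k : ℕ) (y : ℝ) => term ν y k) (g' := fun (k : ℕ) (y : ℝ) => dterm ν y k)
    ((summable_mul_pow hν (by positivity)).mul_left _)
    isOpen_Ioo isPreconnected_Ioo
    (fun k y hy => hasDerivAt_term ν k (by linarith [hy.1, hx] : (0:ℝ) < y))
    (fun k y hy => by
      rw [Real.norm_eq_abs]
      exact dterm_abs_le hν (by linarith : (0:ℝ) < x/2) hy.1.le hy.2.le k)
    hmem (summable_term hν hx) hmem
  have : besselI ν = fun z => ∑' k, term ν z k := by funext z; exact besselI_eq ν z
  rw [this]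
  exact key

end BesselAux

namespace BesselAux

lemma c_up {γ : ℝ} (hγ : 0 ≤ γ) (k : ℕ) : c (γ + 1) k = ((k : ℝ) + γ + 1) * c γ k := by
  rw [c, c, show (k : ℝ) + (γ + 1) + 1 = ((k : ℝ) + γ + 1) + 1 by ring,
    Real.Gamma_add_one (by positivity)]
  ring

lemma tsum_dterm_lower {γ x : ℝ} (hγ : 0 < γ) (hx : 0 < x) :
    ∑' k, dterm γ x k = besselI (γ + 1) x + (γ / x) * besselI γ x := by
  have hγ0 : (0:ℝ) ≤ γ := hγ.le
  have hx2 : (0:ℝ) < x / 2 := by linarith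
  have hx2' : x / 2 ≠ 0 := hx2.ne'
  set A : ℕ → ℝ := fun k => (k : ℝ) * (x/2) ^ (2*(k:ℝ)+γ-1) / c γ k with hA
  have hstep : ∀ k, dterm γ x k = A k + (γ / x) * term γ x k := by
    intro k
    rw [hA, dterm, term, show 2*(k:ℝ)+γ = (2*(k:ℝ)+γ-1)+1 by ring,
      Real.rpow_add_one hx2']
    have hc := c_pos hγ0 k
    field_simp
    ring
  have hsumA : Summable A := by
    apply summable_of_le_aux hγ0 (q := (x/2)^2) (by positivity) ((x/2) ^ (γ-1))
    intro k
    have hc := c_pos hγ0 k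
    have hsplit : (x/2) ^ (2*(k:ℝ)+γ-1) = ((x/2)^2) ^ k * (x/2) ^ (γ-1) := by
      rw [show 2*(k:ℝ)+γ-1 = 2*(k:ℝ)+(γ-1) by ring, rpow_split hx2]
    have hp1 : (0:ℝ) < (x/2) ^ (γ-1) := Real.rpow_pos_of_pos hx2 _
    have hp2 : (0:ℝ) ≤ ((x/2)^2) ^ k := pow_nonneg (sq_nonneg _) k
    have hk : (0:ℝ) ≤ (k:ℝ) := k.cast_nonneg
    rw [hA]
    simp only
    rw [abs_of_nonneg (by positivity), hsplit, div_le_iff₀ hc]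
    have e : (x/2) ^ (γ-1) * (((k:ℝ)+1) * ((x/2)^2) ^ k / c γ k) * c γ k
        = ((k:ℝ)+1) * (((x/2)^2) ^ k * (x/2) ^ (γ-1)) := by field_simp
    rw [e]
    nlinarith [mul_nonneg hp2 hp1.le]
  have hsumB : Summable (fun k => (γ / x) * term γ x k) :=
    (summable_term hγ0 hx).mul_left _
  calc ∑' k, dterm γ x k = ∑' k, (A k + (γ / x) * term γ x k) := tsum_congr hstep
    _ = (∑' k, A k) + ∑' k, (γ / x) * term γ x k := hsumA.tsum_add hsumB
    _ = (∑' k, A k) + (γ / x) * besselI γ x := by rw [tsum_mul_left, besselI_eq]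
    _ = besselI (γ + 1) x + (γ / x) * besselI γ x := by
        congr 1
        rw [hsumA.tsum_eq_zero_add]
        have hA0 : A 0 = 0 := by simp [hA]
        rw [hA0, zero_add, besselI_eq]
        apply tsum_congr
        intro k
        have hcs : ((k : ℝ) + 1) * c (γ + 1) k = c γ (k + 1) := by
          rw [c_shift hγ0 k]; ring
        have hc1 := c_pos hγ0 (k+1)
        have hc2 := c_pos (by linarith : (0:ℝ) ≤ γ + 1) k
        rw [hA]
        simp only
        rw [show 2*(((k:ℕ)+1 : ℕ):ℝ)+γ-1 = 2*(k:ℝ)+(γ+1) by push_cast; ring, term, ← hcs]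
        push_cast
        field_simp

lemma tsum_dterm_upper {γ x : ℝ} (hγ : 0 < γ) (hx : 0 < x) :
    ∑' k, dterm (γ + 1) x k = besselI γ x - ((γ + 1) / x) * besselI (γ + 1) x := by
  have hγ0 : (0:ℝ) ≤ γ := hγ.le
  have hγ1 : (0:ℝ) ≤ γ + 1 := by linarith
  have hx2 : (0:ℝ) < x / 2 := by linarith
  have hx2' : x / 2 ≠ 0 := hx2.ne'
  have hstep : ∀ k, dterm (γ+1) x k = term γ x k - ((γ+1) / x) * term (γ+1) x k := by
    intro k
    have hc := c_pos hγ0 k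
    have hcu : c (γ+1) k = ((k:ℝ) + γ + 1) * c γ k := c_up hγ0 k
    have hkγ : (0:ℝ) < (k:ℝ) + γ + 1 := by have := k.cast_nonneg (α := ℝ); linarith
    rw [dterm, term, term, hcu,
      show 2*(k:ℝ)+(γ+1)-1 = 2*(k:ℝ)+γ by ring,
      show 2*(k:ℝ)+(γ+1) = (2*(k:ℝ)+γ)+1 by ring,
      Real.rpow_add_one hx2']
    field_simp
    ring
  have hsum1 : Summable (term γ x) := summable_term hγ0 hx
  have hsum2 : Summable (fun k => ((γ+1) / x) * term (γ+1) x k) :=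
    (summable_term hγ1 hx).mul_left _
  calc ∑' k, dterm (γ+1) x k
      = ∑' k, (term γ x k - ((γ+1) / x) * term (γ+1) x k) := tsum_congr hstep
    _ = (∑' k, term γ x k) - ∑' k, ((γ+1) / x) * term (γ+1) x k := hsum1.tsum_sub hsum2
    _ = besselI γ x - ((γ+1) / x) * besselI (γ+1) x := by
        rw [tsum_mul_left, besselI_eq, besselI_eq]

end BesselAux

namespace BesselAux

lemma besselI_tendsto_zero {ν : ℝ} (hν : 0 < ν) :
    Filter.Tendsto (fun p => besselI ν p) (nhdsWithin 0 (Ioi 0)) (nhds 0) := by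
  have hν0 : (0:ℝ) ≤ ν := hν.le
  set K : ℝ := ∑' k, ((1:ℝ)/4) ^ k / c ν k with hK
  have hsumK : Summable (fun k => ((1:ℝ)/4) ^ k / c ν k) := by
    apply summable_of_le_aux hν0 (q := (1:ℝ)/4) (by norm_num) 1
    intro k
    have hc := c_pos hν0 k
    have h4 : (0:ℝ) ≤ ((1:ℝ)/4) ^ k := by positivity
    rw [abs_of_nonneg (by positivity), one_mul, div_le_div_iff₀ hc hc]
    nlinarith [mul_nonneg (k.cast_nonneg (α := ℝ)) (mul_nonneg h4 hc.le)]
  have hbound : ∀ p : ℝ, p ∈ Ioo (0:ℝ) 1 → besselI ν p ≤ (p/2) ^ ν * K := by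
    intro p hp
    have hp2 : (0:ℝ) < p/2 := by linarith [hp.1]
    rw [besselI_eq, hK, ← tsum_mul_left]
    apply Summable.tsum_le_tsum _ (summable_term hν0 hp.1) (hsumK.mul_left _)
    intro k
    rw [term, rpow_split hp2]
    have hc := c_pos hν0 k
    rw [div_le_iff₀ hc]
    have e : (p/2) ^ ν * (((1:ℝ)/4) ^ k / c ν k) * c ν k = ((1:ℝ)/4) ^ k * (p/2) ^ ν := by
      field_simp
    rw [e]
    apply mul_le_mul_of_nonneg_right _ (Real.rpow_pos_of_pos hp2 ν).le
    apply pow_le_pow_left₀ (sq_nonneg _)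
    nlinarith [hp.1, hp.2]
  have hrpow : Filter.Tendsto (fun p : ℝ => (p/2) ^ ν * K) (nhdsWithin 0 (Ioi 0)) (nhds 0) := by
    have h1 : Filter.Tendsto (fun p : ℝ => p/2) (nhdsWithin 0 (Ioi 0)) (nhds 0) := by
      have : Filter.Tendsto (fun p : ℝ => p/2) (nhds 0) (nhds 0) := by
        simpa using (continuous_id.div_const 2).tendsto (0:ℝ)
      exact this.comp (tendsto_id.mono_right nhdsWithin_le_nhds)
    have h2 : ContinuousAt (fun y : ℝ => y ^ ν) 0 :=
      Real.continuousAt_rpow_const 0 ν (Or.inr hν0)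
    have h3 : Filter.Tendsto (fun p : ℝ => (p/2) ^ ν) (nhdsWithin 0 (Ioi 0)) (nhds 0) := by
      have := (h2.tendsto.comp h1)
      simpa [Real.zero_rpow hν.ne', Function.comp_def] using this
    simpa using h3.mul_const K
  apply squeeze_zero_norm' _ (by simpa using hrpow)
  filter_upwards [Ioo_mem_nhdsGT_of_mem (by norm_num : (0:ℝ) ∈ Ico (0:ℝ) 1)] with p hp
  have h1 : 0 ≤ besselI ν p := (besselI_pos hν0 hp.1).le
  rw [Real.norm_eq_abs, abs_of_nonneg h1]
  exact hbound p hp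

end BesselAux

namespace BesselAux

variable {γ : ℝ}

/-- `H p = p·(I_γ² − I_{γ+1}²) − (2γ+1)·I_γ·I_{γ+1}`, equal to `p` times the Wronskian. -/
noncomputable def H (γ : ℝ) (p : ℝ) : ℝ :=
  (p * besselI γ p ^ 2 - p * besselI (γ + 1) p ^ 2)
    - (2 * γ + 1) * (besselI γ p * besselI (γ + 1) p)

lemma hasDerivAt_H (hγ : 0 < γ) {x : ℝ} (hx : 0 < x) :
    HasDerivAt (H γ)
      ((2 * γ + 1) * (besselI γ x * besselI (γ + 1) x) / x) x := by
  have hγ0 : (0:ℝ) ≤ γ := hγ.le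
  have hγ1 : (0:ℝ) ≤ γ + 1 := by linarith
  have hf := hasDerivAt_besselI hγ0 hx
  have hg := hasDerivAt_besselI hγ1 hx
  rw [tsum_dterm_lower hγ hx] at hf
  rw [tsum_dterm_upper hγ hx] at hg
  set f := besselI γ x
  set g := besselI (γ + 1) x
  have hH : HasDerivAt (H γ)
      ((1 * f ^ 2 + x * (2 * f ^ 1 * (g + γ / x * f)))
        - (1 * g ^ 2 + x * (2 * g ^ 1 * (f - (γ + 1) / x * g)))
        - (2 * γ + 1) * ((g + γ / x * f) * g + f * (f - (γ + 1) / x * g))) x := by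
    exact (((hasDerivAt_id x).mul (hf.pow 2)).sub ((hasDerivAt_id x).mul (hg.pow 2))).sub
      (((hf.mul hg)).const_mul (2 * γ + 1))
  convert hH using 1
  field_simp
  ring

lemma H_tendsto_zero (hγ : 0 < γ) :
    Filter.Tendsto (H γ) (nhdsWithin 0 (Ioi 0)) (nhds 0) := by
  have hf := besselI_tendsto_zero hγ
  have hg := besselI_tendsto_zero (by linarith : (0:ℝ) < γ + 1)
  have hid : Filter.Tendsto (fun p : ℝ => p) (nhdsWithin 0 (Ioi 0)) (nhds 0) :=
    tendsto_id.mono_right nhdsWithin_le_nhds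
  have := ((hid.mul (hf.mul hf)).sub (hid.mul (hg.mul hg))).sub
    ((hf.mul hg).const_mul (2 * γ + 1))
  simp only [mul_zero, zero_mul, sub_zero, zero_sub, neg_zero] at this
  convert this using 2 with p
  rw [H]; ring

lemma H_strictMono (hγ : 0 < γ) : StrictMonoOn (H γ) (Ioi 0) := by
  apply strictMonoOn_of_deriv_pos (convex_Ioi 0)
  · intro p hp
    exact ((hasDerivAt_H hγ hp).continuousAt).continuousWithinAt
  · intro p hp
    rw [interior_Ioi] at hp
    rw [(hasDerivAt_H hγ hp).deriv]
    have h1 := besselI_pos hγ.le hp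
    have h2 := besselI_pos (by linarith : (0:ℝ) ≤ γ + 1) hp
    have : (0:ℝ) < p := hp
    positivity

lemma H_pos (hγ : 0 < γ) {x : ℝ} (hx : 0 < x) : 0 < H γ x := by
  have hmono := H_strictMono hγ
  have hhalf : x / 2 ∈ Ioi (0:ℝ) := by simp; linarith
  have h1 : H γ (x/2) < H γ x := hmono hhalf (by simpa using hx) (by linarith)
  have h2 : 0 ≤ H γ (x/2) := by
    apply le_of_tendsto (H_tendsto_zero hγ)
    filter_upwards [Ioo_mem_nhdsGT_of_mem
      (by constructor <;> [norm_num; linarith] : (0:ℝ) ∈ Ico (0:ℝ) (x/2))] with t ht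
    exact (hmono (by simpa using ht.1 : t ∈ Ioi (0:ℝ)) hhalf ht.2).le
  linarith

end BesselAux

/-- For every `γ > 0`, the ratio `R_γ(p) = I_{γ+1}(p)/I_γ(p)` is strictly
increasing in `p` on `(0, ∞)`. -/
theorem besselI_ratio_strictMonoOn (γ : ℝ) (hγ : 0 < γ) :
    StrictMonoOn (fun p : ℝ => besselI (γ + 1) p / besselI γ p) (Set.Ioi 0) := by
  have key : ∀ p : ℝ, 0 < p → HasDerivAt (fun q : ℝ => besselI (γ + 1) q / besselI γ q)
      (((besselI γ p - (γ + 1) / p * besselI (γ + 1) p) * besselI γ p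
        - besselI (γ + 1) p * (besselI (γ + 1) p + γ / p * besselI γ p))
        / (besselI γ p) ^ 2) p := by
    intro p hp
    have hf := BesselAux.hasDerivAt_besselI hγ.le hp
    have hg := BesselAux.hasDerivAt_besselI (by linarith : (0:ℝ) ≤ γ + 1) hp
    rw [BesselAux.tsum_dterm_lower hγ hp] at hf
    rw [BesselAux.tsum_dterm_upper hγ hp] at hg
    exact hg.div hf (BesselAux.besselI_pos hγ.le hp).ne'
  apply strictMonoOn_of_deriv_pos (convex_Ioi 0)
  · intro p hp
    exact ((key p hp).continuousAt).continuousWithinAt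
  · intro p hp
    rw [interior_Ioi] at hp
    have hp : (0:ℝ) < p := hp
    rw [(key p hp).deriv]
    have hfpos := BesselAux.besselI_pos hγ.le hp
    have hH := BesselAux.H_pos hγ hp
    have hN : (besselI γ p - (γ + 1) / p * besselI (γ + 1) p) * besselI γ p
        - besselI (γ + 1) p * (besselI (γ + 1) p + γ / p * besselI γ p)
        = BesselAux.H γ p / p := by
      rw [BesselAux.H]; field_simp; ring
    rw [hN]
    positivity
end

section
/- For every γ > 0, the function F_γ(p) = p · I'_γ(p)/I_γ(p) is strictly increasing on (0, ∞) and maps (0, ∞) bijectively onto the interval (γ, ∞). -/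
open Real Set


noncomputable def cc (γ : ℝ) (k : ℕ) : ℝ := 1 / (k.factorial * Real.Gamma ((k : ℝ) + γ + 1))

lemma cc_pos {γ : ℝ} (hγ : 0 < γ) (k : ℕ) : 0 < cc γ k := by
  have h : (0:ℝ) < (k:ℝ) + γ + 1 := by positivity
  have hG := Real.Gamma_pos_of_pos h
  have hf : (0:ℝ) < (k.factorial : ℝ) := by positivity
  unfold cc; positivity

lemma cc_succ {γ : ℝ} (hγ : 0 < γ) (k : ℕ) :
    cc γ (k+1) = cc γ k / (((k:ℝ)+1) * ((k:ℝ) + γ + 1)) := by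
  have h : ((k:ℝ) + γ + 1) ≠ 0 := by positivity
  unfold cc
  rw [Nat.factorial_succ]
  push_cast
  have : (k:ℝ) + 1 + γ + 1 = ((k:ℝ) + γ + 1) + 1 := by ring
  rw [this, Real.Gamma_add_one h]
  have hG := Real.Gamma_pos_of_pos (show (0:ℝ) < (k:ℝ) + γ + 1 by positivity)
  have hf : (0:ℝ) < (k.factorial : ℝ) := by positivity
  field_simp

lemma cc_le {γ : ℝ} (hγ : 0 < γ) (k : ℕ) : cc γ k ≤ cc γ 0 / k.factorial := by
  induction k with
  | zero => simp
  | succ k ih =>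
    rw [cc_succ hγ]
    have hfk : (0:ℝ) < (k.factorial:ℝ) := by positivity
    have hf1 : (((k+1).factorial : ℕ) : ℝ) = ((k:ℝ)+1) * k.factorial := by
      rw [Nat.factorial_succ]; push_cast; ring
    rw [div_le_div_iff₀ (by positivity) (by positivity), hf1]
    have ih' : cc γ k * k.factorial ≤ cc γ 0 := (le_div_iff₀ hfk).mp ih
    have hk0 : (0:ℝ) ≤ (k:ℝ) := Nat.cast_nonneg k
    nlinarith [mul_le_mul_of_nonneg_left ih' (show (0:ℝ) ≤ (k:ℝ)+1 by positivity),
      mul_le_mul_of_nonneg_left (show (1:ℝ) ≤ (k:ℝ)+γ+1 by linarith)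
        (mul_nonneg (cc_pos hγ 0).le (show (0:ℝ) ≤ (k:ℝ)+1 by positivity))]

lemma summable_cc {γ : ℝ} (hγ : 0 < γ) (x : ℝ) : Summable (fun k => cc γ k * x ^ k) := by
  apply Summable.of_norm_bounded (g := fun k => cc γ 0 * (|x| ^ k / k.factorial))
  · exact (Real.summable_pow_div_factorial |x|).mul_left _
  · intro k
    have h1 := cc_pos hγ k
    have h2 := cc_le hγ k
    have hf : (0:ℝ) < (k.factorial : ℝ) := by positivity
    calc ‖cc γ k * x ^ k‖ = cc γ k * |x| ^ k := by
          rw [norm_mul, Real.norm_eq_abs, Real.norm_eq_abs, abs_of_pos h1, abs_pow]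
      _ ≤ (cc γ 0 / k.factorial) * |x| ^ k := by
          apply mul_le_mul_of_nonneg_right h2 (by positivity)
      _ = cc γ 0 * (|x| ^ k / k.factorial) := by ring

lemma summable_k_cc {γ : ℝ} (hγ : 0 < γ) (x : ℝ) :
    Summable (fun k : ℕ => (k:ℝ) * cc γ k * x ^ k) := by
  apply Summable.of_norm_bounded (g := fun k => cc γ 0 * ((2*|x|) ^ k / k.factorial))
  · exact (Real.summable_pow_div_factorial _).mul_left _
  · intro k
    have h1 := cc_pos hγ k
    have h2 := cc_le hγ k
    have hf : (0:ℝ) < (k.factorial : ℝ) := by positivity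
    have hk2 : (k:ℝ) ≤ 2 ^ k := by exact_mod_cast (Nat.lt_two_pow_self (n := k)).le
    calc ‖(k:ℝ) * cc γ k * x ^ k‖ = (k:ℝ) * cc γ k * |x| ^ k := by
          rw [norm_mul, norm_mul, Real.norm_eq_abs, Real.norm_eq_abs, Real.norm_eq_abs,
            abs_of_pos h1, abs_pow, Nat.abs_cast]
      _ ≤ (2:ℝ)^k * (cc γ 0 / k.factorial) * |x| ^ k := by
          apply mul_le_mul_of_nonneg_right _ (by positivity)
          calc (k:ℝ) * cc γ k ≤ (2:ℝ)^k * cc γ k := by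
                apply mul_le_mul_of_nonneg_right hk2 h1.le
            _ ≤ (2:ℝ)^k * (cc γ 0 / k.factorial) := by
                apply mul_le_mul_of_nonneg_left h2 (by positivity)
      _ = cc γ 0 * ((2*|x|) ^ k / k.factorial) := by rw [mul_pow]; ring

lemma summable_shift (b : ℕ → ℝ) (hb : ∀ k, 0 ≤ b k)
    (hs : ∀ r : ℝ, 0 ≤ r → Summable (fun k : ℕ => b k * r ^ k)) (R : ℝ) (hR : 0 < R) :
    Summable (fun k : ℕ => b k * ((k:ℝ) * R ^ (k-1))) := by
  refine Summable.of_nonneg_of_le (fun k => ?_) (fun k => ?_)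
    ((hs (2*R) (by positivity)).mul_left (1/R))
  · have := hb k; positivity
  · rcases Nat.eq_zero_or_pos k with h | h
    · subst h; simp; have := hb 0; positivity
    · have hk2 : (k:ℝ) ≤ 2 ^ k := by exact_mod_cast (Nat.lt_two_pow_self (n := k)).le
      have hpow : R ^ (k-1) * R = R ^ k := pow_sub_one_mul h.ne' R
      calc b k * ((k:ℝ) * R ^ (k-1)) = (1/R) * (b k * ((k:ℝ) * (R^(k-1)*R))) := by
            field_simp
        _ = (1/R) * (b k * ((k:ℝ) * R^k)) := by rw [hpow]
        _ ≤ (1/R) * (b k * ((2:ℝ)^k * R^k)) := by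
            have h1 := hb k
            have h2 : (0:ℝ) ≤ R ^ k := by positivity
            gcongr
        _ = (1/R) * (b k * (2*R)^k) := by rw [mul_pow]

lemma hasDerivAt_psum (b : ℕ → ℝ) (hb : ∀ k, 0 ≤ b k)
    (hs : ∀ r : ℝ, 0 ≤ r → Summable (fun k : ℕ => b k * r ^ k)) (x : ℝ) :
    HasDerivAt (fun u : ℝ => ∑' k : ℕ, b k * u ^ k)
      (∑' k : ℕ, b k * ((k:ℝ) * x ^ (k-1))) x := by
  set R := |x| + 1 with hRdef
  have hR : 0 < R := by positivity
  apply hasDerivAt_tsum_of_isPreconnected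
      (u := fun k : ℕ => b k * ((k:ℝ) * R ^ (k-1)))
      (summable_shift b hb hs R hR) (isOpen_Ioo (a := -R) (b := R)) (isPreconnected_Ioo)
      (fun k y _ => (hasDerivAt_pow k y).const_mul (b k))
      (y₀ := 0)
  · intro k y hy
    have hyR : |y| ≤ R := by
      rw [abs_le]; exact ⟨hy.1.le, hy.2.le⟩
    have h1 := hb k
    calc ‖b k * ((k:ℝ) * y ^ (k-1))‖ = b k * ((k:ℝ) * |y| ^ (k-1)) := by
          rw [norm_mul, norm_mul, Real.norm_eq_abs, Real.norm_eq_abs, Real.norm_eq_abs,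
            abs_of_nonneg h1, Nat.abs_cast, abs_pow]
      _ ≤ b k * ((k:ℝ) * R ^ (k-1)) := by
          gcongr
  · constructor <;> [linarith; linarith]
  · exact hs 0 le_rfl
  · rw [mem_Ioo]
    constructor
    · have := neg_abs_le x; linarith
    · have := le_abs_self x; linarith

noncomputable def S0 (γ u : ℝ) : ℝ := ∑' k : ℕ, cc γ k * u ^ k
noncomputable def S1 (γ u : ℝ) : ℝ := ∑' k : ℕ, ((k:ℝ) * cc γ k) * u ^ k

lemma summable_S0 {γ : ℝ} (hγ : 0 < γ) (u : ℝ) : Summable (fun k : ℕ => cc γ k * u ^ k) :=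
  summable_cc hγ u

lemma summable_S1 {γ : ℝ} (hγ : 0 < γ) (u : ℝ) :
    Summable (fun k : ℕ => ((k:ℝ) * cc γ k) * u ^ k) := by
  have := summable_k_cc hγ u
  simpa [mul_assoc] using this

lemma S0_pos {γ : ℝ} (hγ : 0 < γ) {u : ℝ} (hu : 0 ≤ u) : 0 < S0 γ u := by
  apply Summable.tsum_pos (summable_S0 hγ u)
    (fun k => mul_nonneg (cc_pos hγ k).le (pow_nonneg hu k)) 0
  simp [cc_pos hγ 0]

lemma S1_pos {γ : ℝ} (hγ : 0 < γ) {u : ℝ} (hu : 0 < u) : 0 < S1 γ u := by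
  apply Summable.tsum_pos (summable_S1 hγ u)
    (fun k => mul_nonneg (mul_nonneg (Nat.cast_nonneg k) (cc_pos hγ k).le) (pow_nonneg hu.le k)) 1
  have := cc_pos hγ 1
  simp only [Nat.cast_one, one_mul, pow_one]
  positivity

lemma hasDerivAt_S0 {γ : ℝ} (hγ : 0 < γ) (x : ℝ) :
    HasDerivAt (S0 γ) (∑' k : ℕ, cc γ k * ((k:ℝ) * x ^ (k-1))) x :=
  hasDerivAt_psum (cc γ) (fun k => (cc_pos hγ k).le) (fun r _ => summable_cc hγ r) x

lemma hasDerivAt_S1 {γ : ℝ} (hγ : 0 < γ) (x : ℝ) :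
    HasDerivAt (S1 γ) (∑' k : ℕ, ((k:ℝ) * cc γ k) * ((k:ℝ) * x ^ (k-1))) x := by
  apply hasDerivAt_psum (fun k : ℕ => (k:ℝ) * cc γ k)
    (fun k => mul_nonneg (Nat.cast_nonneg k) (cc_pos hγ k).le)
    (fun r _ => by simpa [mul_assoc] using summable_k_cc hγ r)

lemma continuous_S0 {γ : ℝ} (hγ : 0 < γ) : Continuous (S0 γ) :=
  continuous_iff_continuousAt.2 fun x => (hasDerivAt_S0 hγ x).continuousAt

lemma continuous_S1 {γ : ℝ} (hγ : 0 < γ) : Continuous (S1 γ) :=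
  continuous_iff_continuousAt.2 fun x => (hasDerivAt_S1 hγ x).continuousAt

lemma mul_derivS0 {γ : ℝ} (hγ : 0 < γ) (u : ℝ) :
    u * (∑' k : ℕ, cc γ k * ((k:ℝ) * u ^ (k-1))) = S1 γ u := by
  rw [← tsum_mul_left]
  apply tsum_congr
  intro k
  rcases Nat.eq_zero_or_pos k with h | h
  · subst h; simp
  · have : u ^ (k-1) * u = u ^ k := pow_sub_one_mul h.ne' u
    calc u * (cc γ k * ((k:ℝ) * u ^ (k-1))) = ((k:ℝ) * cc γ k) * (u ^ (k-1) * u) := by ring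
      _ = ((k:ℝ) * cc γ k) * u ^ k := by rw [this]

lemma besselI_eq {γ : ℝ} (hγ : 0 < γ) {x : ℝ} (hx : 0 < x) :
    besselI γ x = (x/2) ^ γ * S0 γ ((x/2)^2) := by
  unfold besselI S0
  rw [← tsum_mul_left]
  apply tsum_congr
  intro k
  have hx2 : (0:ℝ) < x / 2 := by linarith
  have h1 : (x/2) ^ (2*(k:ℝ) + γ) = (x/2) ^ ((2*k : ℕ) : ℝ) * (x/2) ^ γ := by
    rw [← Real.rpow_add hx2]
    congr 1
    push_cast
    ring
  have h2 : (x/2) ^ ((2*k : ℕ) : ℝ) = ((x/2)^2) ^ k := by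
    rw [Real.rpow_natCast, pow_mul]
  rw [h1, h2]
  unfold cc
  field_simp

lemma hasDerivAt_besselI {γ : ℝ} (hγ : 0 < γ) {p : ℝ} (hp : 0 < p) :
    HasDerivAt (besselI γ)
      ((γ * (p/2) ^ (γ-1) * (1/2)) * S0 γ ((p/2)^2)
        + (p/2) ^ γ * ((∑' k : ℕ, cc γ k * ((k:ℝ) * ((p/2)^2) ^ (k-1))) * (p/2))) p := by
  have hp2 : (0:ℝ) < p/2 := by linarith
  -- derivative of x ↦ (x/2)^γ
  have hd1 : HasDerivAt (fun x : ℝ => (x/2) ^ γ) (γ * (p/2) ^ (γ-1) * (1/2)) p := by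
    have hinner : HasDerivAt (fun x : ℝ => x/2) (1/2 : ℝ) p := by
      simpa using (hasDerivAt_id p).div_const 2
    have houter : HasDerivAt (fun y : ℝ => y ^ γ) (γ * (p/2) ^ (γ-1)) (p/2) :=
      Real.hasDerivAt_rpow_const (Or.inl hp2.ne')
    exact houter.comp p hinner
  -- derivative of x ↦ S0 γ ((x/2)^2)
  have hd2 : HasDerivAt (fun x : ℝ => S0 γ ((x/2)^2))
      ((∑' k : ℕ, cc γ k * ((k:ℝ) * ((p/2)^2) ^ (k-1))) * (p/2)) p := by
    have hinner : HasDerivAt (fun x : ℝ => (x/2)^2) (p/2 : ℝ) p := by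
      have h1 : HasDerivAt (fun x : ℝ => x/2) (1/2 : ℝ) p := by
        simpa using (hasDerivAt_id p).div_const 2
      have h2 : HasDerivAt (fun y : ℝ => y^2) (2 * (p/2)) (p/2) := by
        simpa using hasDerivAt_pow 2 (p/2)
      have := h2.comp p h1
      exact this.congr_deriv (by ring)
    exact (hasDerivAt_S0 hγ ((p/2)^2)).comp p hinner
  have hEq : (fun x : ℝ => (x/2) ^ γ * S0 γ ((x/2)^2)) =ᶠ[nhds p] besselI γ := by
    filter_upwards [Ioi_mem_nhds hp] with x hx
    exact (besselI_eq hγ hx).symm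
  exact ((hd1.mul hd2).congr_of_eventuallyEq hEq.symm)

lemma key {γ : ℝ} (hγ : 0 < γ) {p : ℝ} (hp : 0 < p) :
    p * deriv (besselI γ) p / besselI γ p
      = γ + 2 * (S1 γ ((p/2)^2) / S0 γ ((p/2)^2)) := by
  have hp2 : (0:ℝ) < p/2 := by linarith
  have hu0 : (0:ℝ) < (p/2)^2 := by positivity
  have hS0 := S0_pos hγ hu0.le
  have hrp : (0:ℝ) < (p/2) ^ γ := Real.rpow_pos_of_pos hp2 γ
  have hD := (hasDerivAt_besselI hγ hp).deriv
  have hmul : (p/2)^2 * (∑' k : ℕ, cc γ k * ((k:ℝ) * ((p/2)^2) ^ (k-1))) = S1 γ ((p/2)^2) :=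
    mul_derivS0 hγ _
  have hrp1 : (p/2) * (p/2) ^ (γ-1) = (p/2) ^ γ := by
    rw [Real.rpow_sub_one hp2.ne']
    field_simp
  have hnum : p * ((γ * (p/2) ^ (γ-1) * (1/2)) * S0 γ ((p/2)^2)
      + (p/2) ^ γ * ((∑' k : ℕ, cc γ k * ((k:ℝ) * ((p/2)^2) ^ (k-1))) * (p/2)))
      = (p/2) ^ γ * (γ * S0 γ ((p/2)^2) + 2 * S1 γ ((p/2)^2)) := by
    calc p * ((γ * (p/2) ^ (γ-1) * (1/2)) * S0 γ ((p/2)^2)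
        + (p/2) ^ γ * ((∑' k : ℕ, cc γ k * ((k:ℝ) * ((p/2)^2) ^ (k-1))) * (p/2)))
        = γ * ((p/2) * (p/2)^(γ-1)) * S0 γ ((p/2)^2)
          + (p/2) ^ γ * (2 * ((p/2)^2 * (∑' k : ℕ, cc γ k * ((k:ℝ) * ((p/2)^2) ^ (k-1))))) := by
          ring
      _ = (p/2) ^ γ * (γ * S0 γ ((p/2)^2) + 2 * S1 γ ((p/2)^2)) := by rw [hrp1, hmul]; ring
  rw [besselI_eq hγ hp, hD, hnum, mul_div_mul_left _ _ hrp.ne', add_div,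
    mul_div_assoc γ, div_self hS0.ne', mul_one, mul_div_assoc 2]

lemma g_lt {γ : ℝ} (hγ : 0 < γ) {u v : ℝ} (hu : 0 < u) (huv : u < v) :
    S1 γ u / S0 γ u < S1 γ v / S0 γ v := by
  have hv : 0 < v := hu.trans huv
  have hS0u := S0_pos hγ hu.le
  have hS0v := S0_pos hγ hv.le
  set θ : ℝ := S1 γ u / S0 γ u with hθdef
  have hθpos : 0 < θ := div_pos (S1_pos hγ hu) hS0u
  have hθ : S1 γ u = θ * S0 γ u := by
    rw [hθdef]; field_simp
  set r : ℝ := v / u with hrdef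
  have hr0 : 0 < r := div_pos hv hu
  have hr1 : 1 < r := (one_lt_div hu).2 huv
  have hur : u * r = v := by rw [hrdef]; field_simp
  have hrθ1 : 1 < r ^ θ := by
    rw [Real.one_lt_rpow_iff_of_pos hr0]
    exact Or.inl ⟨hr1, hθpos⟩
  set f : ℕ → ℝ := fun k => ((k:ℝ) - θ) * (cc γ k * v ^ k - r ^ θ * (cc γ k * u ^ k)) with hfdef
  -- summability pieces
  have hsum1 : Summable (fun k : ℕ => ((k:ℝ) - θ) * (cc γ k * v ^ k)) := by
    apply Summable.congr ((summable_S1 hγ v).sub ((summable_S0 hγ v).mul_left θ))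
    intro k; ring
  have hsum2 : Summable (fun k : ℕ => r ^ θ * (((k:ℝ) - θ) * (cc γ k * u ^ k))) := by
    apply Summable.mul_left
    apply Summable.congr ((summable_S1 hγ u).sub ((summable_S0 hγ u).mul_left θ))
    intro k; ring
  have hfsum : Summable f := by
    apply Summable.congr (hsum1.sub hsum2)
    intro k; rw [hfdef]; ring
  -- each term is nonnegative
  have hnonneg : ∀ k : ℕ, 0 ≤ f k := by
    intro k
    have hfact : f k = (cc γ k * u ^ k) * (((k:ℝ) - θ) * ((r:ℝ) ^ (k:ℕ) - r ^ θ)) := by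
      have hv2 : v ^ k = u ^ k * r ^ k := by rw [← hur, mul_pow]
      simp only [hfdef]
      rw [hv2]; ring
    rw [hfact]
    have hcu : 0 ≤ cc γ k * u ^ k := mul_nonneg (cc_pos hγ k).le (pow_nonneg hu.le k)
    apply mul_nonneg hcu
    have hnat : (r:ℝ) ^ (k:ℕ) = r ^ ((k:ℕ):ℝ) := (Real.rpow_natCast r k).symm
    rcases le_or_gt θ (k:ℝ) with h | h
    · apply mul_nonneg (by linarith)
      rw [hnat, sub_nonneg]
      exact Real.rpow_le_rpow_left_iff hr1 |>.2 h
    · have h1 : (k:ℝ) - θ ≤ 0 := by linarith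
      have h2 : (r:ℝ) ^ (k:ℕ) - r ^ θ ≤ 0 := by
        rw [hnat, sub_nonpos]
        exact Real.rpow_le_rpow_left_iff hr1 |>.2 h.le
      nlinarith
  -- the 0-th term is positive
  have h0 : 0 < f 0 := by
    have : f 0 = cc γ 0 * (θ * (r ^ θ - 1)) := by
      rw [hfdef]; simp; ring
    rw [this]
    exact mul_pos (cc_pos hγ 0) (mul_pos hθpos (by linarith))
  have htsum_pos : 0 < ∑' k, f k := Summable.tsum_pos hfsum hnonneg 0 h0
  -- compute the tsum
  have htsum : ∑' k, f k = (S1 γ v - θ * S0 γ v) - r ^ θ * (S1 γ u - θ * S0 γ u) := by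
    have e1 : ∑' k : ℕ, ((k:ℝ) - θ) * (cc γ k * v ^ k) = S1 γ v - θ * S0 γ v := by
      rw [show (fun k : ℕ => ((k:ℝ) - θ) * (cc γ k * v ^ k))
          = fun k : ℕ => ((k:ℝ) * cc γ k) * v ^ k - θ * (cc γ k * v ^ k) from funext fun k => by ring]
      rw [Summable.tsum_sub (summable_S1 hγ v) ((summable_S0 hγ v).mul_left θ), tsum_mul_left]
      rfl
    have e2 : ∑' k : ℕ, r ^ θ * (((k:ℝ) - θ) * (cc γ k * u ^ k))
        = r ^ θ * (S1 γ u - θ * S0 γ u) := by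
      rw [tsum_mul_left]
      congr 1
      rw [show (fun k : ℕ => ((k:ℝ) - θ) * (cc γ k * u ^ k))
          = fun k : ℕ => ((k:ℝ) * cc γ k) * u ^ k - θ * (cc γ k * u ^ k) from funext fun k => by ring]
      rw [Summable.tsum_sub (summable_S1 hγ u) ((summable_S0 hγ u).mul_left θ), tsum_mul_left]
      rfl
    calc ∑' k, f k = ∑' k : ℕ, (((k:ℝ) - θ) * (cc γ k * v ^ k)
          - r ^ θ * (((k:ℝ) - θ) * (cc γ k * u ^ k))) := by
          apply tsum_congr; intro k; rw [hfdef]; ring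
      _ = (S1 γ v - θ * S0 γ v) - r ^ θ * (S1 γ u - θ * S0 γ u) := by
          rw [Summable.tsum_sub hsum1 hsum2, e1, e2]
  rw [htsum, hθ] at htsum_pos
  simp at htsum_pos
  rw [lt_div_iff₀ hS0v]
  linarith

lemma g_small {γ : ℝ} (hγ : 0 < γ) {ε : ℝ} (hε : 0 < ε) :
    ∃ u : ℝ, 0 < u ∧ S1 γ u / S0 γ u < ε := by
  set C : ℝ := S1 γ 1 with hC
  have hCpos : 0 < C := S1_pos hγ one_pos
  have hc0 := cc_pos hγ 0
  set u : ℝ := min 1 (ε * cc γ 0 / (2 * C)) with hudef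
  have hu0 : 0 < u := lt_min one_pos (by positivity)
  have hu1 : u ≤ 1 := min_le_left _ _
  have hu2 : u ≤ ε * cc γ 0 / (2 * C) := min_le_right _ _
  refine ⟨u, hu0, ?_⟩
  have hS1le : S1 γ u ≤ C * u := by
    have h1 : ∀ k : ℕ, ((k:ℝ) * cc γ k) * u ^ k ≤ ((k:ℝ) * cc γ k) * 1 ^ k * u := by
      intro k
      rcases Nat.eq_zero_or_pos k with h | h
      · subst h; simp
      · have hpow : u ^ k ≤ u := pow_le_of_le_one hu0.le hu1 h.ne'
        have : (0:ℝ) ≤ (k:ℝ) * cc γ k := mul_nonneg (Nat.cast_nonneg k) (cc_pos hγ k).le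
        rw [one_pow, mul_one]
        exact mul_le_mul_of_nonneg_left hpow this
    calc S1 γ u ≤ ∑' k : ℕ, ((k:ℝ) * cc γ k) * 1 ^ k * u :=
          Summable.tsum_le_tsum h1 (summable_S1 hγ u) ((summable_S1 hγ 1).mul_right u)
      _ = C * u := by rw [tsum_mul_right]; rfl
  have hS0ge : cc γ 0 ≤ S0 γ u := by
    have := Summable.le_tsum (summable_S0 hγ u) 0
      (fun j _ => mul_nonneg (cc_pos hγ j).le (pow_nonneg hu0.le j))
    simpa [S0] using this
  have hS0pos := S0_pos hγ hu0.le
  calc S1 γ u / S0 γ u ≤ (C * u) / cc γ 0 := by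
        apply div_le_div₀ (by positivity) hS1le hc0 hS0ge
    _ ≤ (C * (ε * cc γ 0 / (2 * C))) / cc γ 0 := by gcongr
    _ = ε / 2 := by field_simp
    _ < ε := by linarith

lemma g_big {γ : ℝ} (hγ : 0 < γ) {M : ℝ} (hM : 0 < M) :
    ∃ u : ℝ, 0 < u ∧ M < S1 γ u / S0 γ u := by
  set N : ℕ := ⌈2*M⌉₊ + 1 with hNdef
  have hN2M : 2*M < (N:ℝ) := by
    have := Nat.le_ceil (2*M)
    have : (⌈2*M⌉₊ : ℝ) ≥ 2*M := this
    push_cast [hNdef]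
    linarith
  have hNpos : (0:ℝ) < N := by positivity
  set D : ℝ := ∑ k ∈ Finset.range N, cc γ k with hDdef
  have hD0 : 0 ≤ D := Finset.sum_nonneg fun k _ => (cc_pos hγ k).le
  have hcN := cc_pos hγ N
  set u : ℝ := max 1 (2*D/cc γ N + 1) with hudef
  have hu1 : (1:ℝ) ≤ u := le_max_left _ _
  have hu0 : 0 < u := lt_of_lt_of_le one_pos hu1
  have hu2 : 2*D/cc γ N + 1 ≤ u := le_max_right _ _
  have hucc : 2*D < cc γ N * u := by
    have h1 : 2*D/cc γ N < u := by linarith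
    calc 2*D = cc γ N * (2*D/cc γ N) := by field_simp
      _ < cc γ N * u := by exact mul_lt_mul_of_pos_left h1 hcN
  refine ⟨u, hu0, ?_⟩
  set P : ℝ := ∑ k ∈ Finset.range N, cc γ k * u ^ k with hPdef
  have hP0 : 0 ≤ P := Finset.sum_nonneg fun k _ =>
    mul_nonneg (cc_pos hγ k).le (pow_nonneg hu0.le k)
  have hPle : P ≤ D * u ^ (N-1) := by
    rw [hPdef, hDdef, Finset.sum_mul]
    apply Finset.sum_le_sum
    intro k hk
    have hkN : k ≤ N - 1 := by
      have := Finset.mem_range.1 hk; omega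
    exact mul_le_mul_of_nonneg_left (pow_le_pow_right₀ hu1 hkN) (cc_pos hγ k).le
  have hS0N : cc γ N * u ^ N ≤ S0 γ u := by
    exact Summable.le_tsum (summable_S0 hγ u) N
      (fun j _ => mul_nonneg (cc_pos hγ j).le (pow_nonneg hu0.le j))
  have hS0pos := S0_pos hγ hu0.le
  -- S1 ≥ N * S0 - N * P
  have hS1ge : (N:ℝ) * S0 γ u - (N:ℝ) * P ≤ S1 γ u := by
    have hite : Summable (fun k : ℕ => if k < N then (N:ℝ) * (cc γ k * u ^ k) else 0) := by
      apply summable_of_ne_finset_zero (s := Finset.range N)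
      intro k hk
      rw [if_neg (by simpa using hk)]
    have hls : Summable (fun k : ℕ => (N:ℝ) * (cc γ k * u ^ k)
        - (if k < N then (N:ℝ) * (cc γ k * u ^ k) else 0)) :=
      ((summable_S0 hγ u).mul_left _).sub hite
    have h1 : ∀ k : ℕ, (N:ℝ) * (cc γ k * u ^ k)
        - (if k < N then (N:ℝ) * (cc γ k * u ^ k) else 0) ≤ ((k:ℝ) * cc γ k) * u ^ k := by
      intro k
      by_cases h : k < N
      · rw [if_pos h]
        simp only [sub_self]
        exact mul_nonneg (mul_nonneg (Nat.cast_nonneg k) (cc_pos hγ k).le) (pow_nonneg hu0.le k)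
      · rw [if_neg h, sub_zero]
        have : (N:ℝ) ≤ (k:ℝ) := by exact_mod_cast Nat.le_of_not_lt h
        have hnn : (0:ℝ) ≤ cc γ k * u ^ k :=
          mul_nonneg (cc_pos hγ k).le (pow_nonneg hu0.le k)
        calc (N:ℝ) * (cc γ k * u ^ k) ≤ (k:ℝ) * (cc γ k * u ^ k) :=
              mul_le_mul_of_nonneg_right this hnn
          _ = ((k:ℝ) * cc γ k) * u ^ k := by ring
    have h2 := Summable.tsum_le_tsum h1 hls (summable_S1 hγ u)
    have h3 : ∑' k : ℕ, ((N:ℝ) * (cc γ k * u ^ k)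
        - (if k < N then (N:ℝ) * (cc γ k * u ^ k) else 0))
        = (N:ℝ) * S0 γ u - (N:ℝ) * P := by
      rw [Summable.tsum_sub ((summable_S0 hγ u).mul_left _) hite, tsum_mul_left]
      congr 1
      rw [tsum_eq_sum (s := Finset.range N)
        (fun k hk => by rw [if_neg (by simpa using hk)])]
      rw [hPdef, Finset.mul_sum]
      apply Finset.sum_congr rfl
      intro k hk
      rw [if_pos (Finset.mem_range.1 hk)]
    rw [h3] at h2
    exact h2
  -- final arithmetic
  rw [lt_div_iff₀ hS0pos]
  have hpowpos : (0:ℝ) < u ^ (N-1) := pow_pos hu0 _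
  have hupow : u ^ (N-1) * u = u ^ N := pow_sub_one_mul (by omega) u
  have step1 : (N:ℝ) * P ≤ (N:ℝ) * (D * u ^ (N-1)) :=
    mul_le_mul_of_nonneg_left hPle (by positivity)
  have step2 : (N:ℝ) * (D * u ^ (N-1)) < (N:ℝ) * ((cc γ N * u / 2) * u ^ (N-1)) := by
    apply mul_lt_mul_of_pos_left _ hNpos
    apply mul_lt_mul_of_pos_right _ hpowpos
    linarith
  have step3 : (N:ℝ) * ((cc γ N * u / 2) * u ^ (N-1)) = ((N:ℝ)/2) * (cc γ N * u ^ N) := by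
    rw [← hupow]; ring
  have step4 : ((N:ℝ)/2) * (cc γ N * u ^ N) ≤ ((N:ℝ) - M) * (cc γ N * u ^ N) := by
    apply mul_le_mul_of_nonneg_right _ (by positivity)
    linarith
  have step5 : ((N:ℝ) - M) * (cc γ N * u ^ N) ≤ ((N:ℝ) - M) * S0 γ u := by
    apply mul_le_mul_of_nonneg_left hS0N (by linarith)
  nlinarith [hS1ge]

/-- For every `γ > 0`, the function `F_γ(p) = p I'_γ(p)/I_γ(p)` is strictly
increasing and maps `(0, ∞)` bijectively onto the interval `(γ, ∞)`. -/
theorem besselI_logDeriv_strictMono_bijOn (γ : ℝ) (hγ : 0 < γ) :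
    StrictMonoOn (fun p : ℝ => p * deriv (besselI γ) p / besselI γ p) (Set.Ioi 0) ∧
    Set.BijOn (fun p : ℝ => p * deriv (besselI γ) p / besselI γ p)
      (Set.Ioi 0) (Set.Ioi γ) := by
  set F : ℝ → ℝ := fun p => p * deriv (besselI γ) p / besselI γ p with hF
  set G : ℝ → ℝ := fun p => γ + 2 * (S1 γ ((p/2)^2) / S0 γ ((p/2)^2)) with hG
  have hkey : ∀ p : ℝ, p ∈ Ioi (0:ℝ) → F p = G p := fun p hp => key hγ hp
  -- strict monotonicity
  have hmono : StrictMonoOn F (Ioi 0) := by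
    intro p hp q hq hpq
    rw [hkey p hp, hkey q hq, hG]
    simp only
    have hp0 : (0:ℝ) < p := hp
    have h1 : (0:ℝ) < (p/2)^2 := by positivity
    have h2 : (p/2)^2 < (q/2)^2 := by
      apply pow_lt_pow_left₀ _ (by positivity)
      · norm_num
      · linarith
    have := g_lt hγ h1 h2
    linarith
  refine ⟨hmono, ?_, hmono.injOn, ?_⟩
  -- maps to
  · intro p hp
    rw [hkey p hp]
    have hp0 : (0:ℝ) < p := hp
    have h1 : (0:ℝ) < (p/2)^2 := by positivity
    have := div_pos (S1_pos hγ h1) (S0_pos hγ h1.le)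
    simp only [hG, mem_Ioi]
    linarith
  -- surjectivity
  · intro y hy
    have hy' : γ < y := hy
    have hε : (0:ℝ) < (y - γ)/2 := by linarith
    obtain ⟨ua, hua, ha⟩ := g_small hγ hε
    obtain ⟨ub, hub, hb⟩ := g_big hγ hε
    set a : ℝ := 2 * Real.sqrt ua with hadef
    set b : ℝ := 2 * Real.sqrt ub with hbdef
    have ha0 : 0 < a := by
      have := Real.sqrt_pos.2 hua; positivity
    have hb0 : 0 < b := by
      have := Real.sqrt_pos.2 hub; positivity
    have haa : (a/2)^2 = ua := by
      rw [hadef]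
      rw [show (2 * Real.sqrt ua / 2) = Real.sqrt ua by ring]
      exact Real.sq_sqrt hua.le
    have hbb : (b/2)^2 = ub := by
      rw [hbdef]
      rw [show (2 * Real.sqrt ub / 2) = Real.sqrt ub by ring]
      exact Real.sq_sqrt hub.le
    have hFa : F a < y := by
      rw [hkey a ha0, hG]; simp only [haa]; linarith
    have hFb : y < F b := by
      rw [hkey b hb0, hG]; simp only [hbb]; linarith
    have hab : a < b := by
      rcases lt_trichotomy a b with h | h | h
      · exact h
      · exfalso; rw [h] at hFa; linarith
      · exfalso
        have := hmono hb0 ha0 h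
        linarith
    -- continuity of G
    have hcG : Continuous G := by
      have hc0 : Continuous fun p : ℝ => (p/2)^2 := by continuity
      have hc1 : Continuous fun p : ℝ => S1 γ ((p/2)^2) := (continuous_S1 hγ).comp hc0
      have hc2 : Continuous fun p : ℝ => S0 γ ((p/2)^2) := (continuous_S0 hγ).comp hc0
      have hne : ∀ p : ℝ, S0 γ ((p/2)^2) ≠ 0 := fun p => (S0_pos hγ (by positivity)).ne'
      exact continuous_const.add (continuous_const.mul (hc1.div hc2 hne))
    have hcF : ContinuousOn F (Icc a b) := by
      apply (hcG.continuousOn).congr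
      intro x hx
      exact hkey x (lt_of_lt_of_le ha0 hx.1)
    have hsub := intermediate_value_Ioo hab.le hcF
    have hyI : y ∈ Ioo (F a) (F b) := ⟨hFa, hFb⟩
    obtain ⟨x, hx, hxy⟩ := hsub hyI
    exact ⟨x, lt_trans ha0 hx.1, hxy⟩
end

section
/- For every γ > 0 and p > 0 one has the upper bound p · I'_γ(p)/I_γ(p) ≤ (γ² + p²)^{1/2}. -/
namespace AmosAux

lemma rpow_base_bound {lo t hi s : ℝ} (hlo : 0 < lo) (h1 : lo ≤ t) (h2 : t ≤ hi) :
    t ^ s ≤ lo ^ s + hi ^ s := by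
  rcases le_or_gt 0 s with hs | hs
  · have hth : t ^ s ≤ hi ^ s := Real.rpow_le_rpow (le_trans hlo.le h1) h2 hs
    have hpos : 0 < lo ^ s := Real.rpow_pos_of_pos hlo s
    linarith
  · have hth : t ^ s ≤ lo ^ s := Real.rpow_le_rpow_of_nonpos hlo h1 hs.le
    have hpos : 0 ≤ hi ^ s := Real.rpow_nonneg (by linarith) s
    linarith

lemma gamma_fact_le (γ : ℝ) (hγ : 0 < γ) :
    ∀ k : ℕ, Real.Gamma (γ + 1) * k.factorial ≤ Real.Gamma ((k : ℝ) + γ + 1) := by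
  intro k
  induction k with
  | zero => simp
  | succ n ih =>
      have h1 : ((n : ℝ) + γ + 1) ≠ 0 := by positivity
      have hG : Real.Gamma (((n + 1 : ℕ) : ℝ) + γ + 1)
          = ((n : ℝ) + γ + 1) * Real.Gamma ((n : ℝ) + γ + 1) := by
        push_cast
        rw [show (n : ℝ) + 1 + γ + 1 = ((n : ℝ) + γ + 1) + 1 by ring, Real.Gamma_add_one h1]
      have hfac : (((n + 1 : ℕ)).factorial : ℝ) = ((n : ℝ) + 1) * n.factorial := by
        push_cast [Nat.factorial_succ]; ring
      rw [hG, hfac]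
      have hGpos := Real.Gamma_pos_of_pos (show (0:ℝ) < (n : ℝ) + γ + 1 by positivity)
      calc Real.Gamma (γ + 1) * (((n : ℝ) + 1) * n.factorial)
          = ((n : ℝ) + 1) * (Real.Gamma (γ + 1) * n.factorial) := by ring
        _ ≤ ((n : ℝ) + 1) * Real.Gamma ((n : ℝ) + γ + 1) :=
            mul_le_mul_of_nonneg_left ih (by positivity)
        _ ≤ ((n : ℝ) + γ + 1) * Real.Gamma ((n : ℝ) + γ + 1) := by nlinarith

lemma lin_le_pow (γ : ℝ) (hγ : 0 < γ) : ∀ k : ℕ, 2 * (k : ℝ) + γ ≤ (γ + 2) * 2 ^ k := by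
  intro k
  induction k with
  | zero => norm_num
  | succ n ih =>
      have h1 : (1 : ℝ) ≤ 2 ^ n := one_le_pow₀ (by norm_num)
      have : ((n + 1 : ℕ) : ℝ) = (n : ℝ) + 1 := by push_cast; ring
      rw [this, pow_succ]
      nlinarith

lemma summable_master (γ : ℝ) (hγ : 0 < γ) (r : ℝ) (hr : 0 ≤ r) :
    Summable fun k : ℕ =>
      (2 * (k : ℝ) + γ) ^ 2 * r ^ k / ((k.factorial : ℝ) * Real.Gamma ((k : ℝ) + γ + 1)) := by
  have hΓ : 0 < Real.Gamma (γ + 1) := Real.Gamma_pos_of_pos (by positivity)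
  apply Summable.of_nonneg_of_le
    (f := fun k : ℕ => ((γ + 2) ^ 2 / Real.Gamma (γ + 1)) * ((4 * r) ^ k / k.factorial))
  · intro k
    have hGk := Real.Gamma_pos_of_pos (show (0:ℝ) < (k : ℝ) + γ + 1 by positivity)
    have hfk : (0:ℝ) < k.factorial := by exact_mod_cast k.factorial_pos
    exact div_nonneg (by positivity) (mul_pos hfk hGk).le
  · intro k
    have hGk := Real.Gamma_pos_of_pos (show (0:ℝ) < (k : ℝ) + γ + 1 by positivity)
    have hfk : (0:ℝ) < k.factorial := by exact_mod_cast k.factorial_pos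
    have hfk1 : (1:ℝ) ≤ k.factorial := by exact_mod_cast k.factorial_pos
    have hGle : Real.Gamma (γ + 1) ≤ Real.Gamma ((k : ℝ) + γ + 1) :=
      le_trans (le_mul_of_one_le_right hΓ.le hfk1) (gamma_fact_le γ hγ k)
    have hnum : (2 * (k : ℝ) + γ) ^ 2 ≤ (γ + 2) ^ 2 * 4 ^ k := by
      have h := lin_le_pow γ hγ k
      have h0 : (0:ℝ) ≤ 2 * (k : ℝ) + γ := by positivity
      have := pow_le_pow_left₀ h0 h 2
      calc (2 * (k : ℝ) + γ) ^ 2 ≤ ((γ + 2) * 2 ^ k) ^ 2 := this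
        _ = (γ + 2) ^ 2 * 4 ^ k := by
            rw [mul_pow, ← pow_mul, show (4:ℝ) = 2 ^ 2 by norm_num, ← pow_mul]
            ring
    calc (2 * (k : ℝ) + γ) ^ 2 * r ^ k / ((k.factorial : ℝ) * Real.Gamma ((k : ℝ) + γ + 1))
        ≤ ((γ + 2) ^ 2 * 4 ^ k) * r ^ k / ((k.factorial : ℝ) * Real.Gamma (γ + 1)) := by
          gcongr
      _ = ((γ + 2) ^ 2 / Real.Gamma (γ + 1)) * ((4 * r) ^ k / k.factorial) := by
          rw [mul_pow]
          field_simp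
  · exact (Real.summable_pow_div_factorial (4 * r)).mul_left _

end AmosAux

open AmosAux in
/-- Amos' bound: for `γ > 0`, `p > 0`, `p I'_γ(p)/I_γ(p) ≤ √(γ² + p²)`. -/
theorem besselI_logDeriv_upper_bound (γ p : ℝ) (hγ : 0 < γ) (hp : 0 < p) :
    p * deriv (besselI γ) p / besselI γ p ≤ Real.sqrt (γ ^ 2 + p ^ 2) := by
  have hhalf : (0:ℝ) < p / 2 := by positivity
  set c : ℕ → ℝ := fun k => (k.factorial : ℝ) * Real.Gamma ((k : ℝ) + γ + 1) with hc_def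
  have hc : ∀ k, 0 < c k := fun k =>
    mul_pos (by exact_mod_cast k.factorial_pos)
      (Real.Gamma_pos_of_pos (by positivity))
  set a : ℕ → ℝ := fun k => (p / 2) ^ (2 * (k : ℝ) + γ) / c k with ha_def
  have ha : ∀ k, 0 < a k := fun k => div_pos (Real.rpow_pos_of_pos hhalf _) (hc k)
  -- rewrite a in power-series form
  have harw : ∀ k, a k = (p / 2) ^ (γ : ℝ) * (((p / 2) ^ 2) ^ k / c k) := by
    intro k
    have h1 : (p / 2) ^ (2 * (k : ℝ) + γ) = ((p / 2) ^ 2) ^ k * (p / 2) ^ (γ : ℝ) := by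
      rw [Real.rpow_add hhalf]
      congr 1
      rw [show (2 * (k : ℝ)) = ((2 * k : ℕ) : ℝ) by push_cast; ring,
        Real.rpow_natCast, pow_mul]
    simp only [ha_def, h1]
    ring
  -- summability
  have S2 : Summable fun k : ℕ => (2 * (k : ℝ) + γ) ^ 2 * a k := by
    have h := (summable_master γ hγ ((p / 2) ^ 2) (by positivity)).mul_left ((p / 2) ^ (γ : ℝ))
    apply h.congr
    intro k
    rw [harw k]
    simp only [hc_def]
    ring
  have key_ge : ∀ k : ℕ, (0:ℝ) ≤ (k : ℝ) := fun k => Nat.cast_nonneg k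
  have S0 : Summable a := by
    apply Summable.of_nonneg_of_le (fun k => (ha k).le) _ (S2.mul_left (1 / γ ^ 2))
    intro k
    have h : γ ^ 2 ≤ (2 * (k : ℝ) + γ) ^ 2 := by nlinarith [key_ge k]
    calc a k = 1 / γ ^ 2 * (γ ^ 2 * a k) := by field_simp
      _ ≤ 1 / γ ^ 2 * ((2 * (k : ℝ) + γ) ^ 2 * a k) := by
          apply mul_le_mul_of_nonneg_left _ (by positivity)
          exact mul_le_mul_of_nonneg_right h (ha k).le
  have S1 : Summable fun k : ℕ => (2 * (k : ℝ) + γ) * a k := by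
    apply Summable.of_nonneg_of_le
      (fun k => mul_nonneg (by positivity) (ha k).le) _ (S2.mul_left (1 / γ))
    intro k
    have h : γ * (2 * (k : ℝ) + γ) ≤ (2 * (k : ℝ) + γ) ^ 2 := by nlinarith [key_ge k]
    calc (2 * (k : ℝ) + γ) * a k = 1 / γ * (γ * (2 * (k : ℝ) + γ) * a k) := by field_simp
      _ ≤ 1 / γ * ((2 * (k : ℝ) + γ) ^ 2 * a k) := by
          apply mul_le_mul_of_nonneg_left _ (by positivity)
          exact mul_le_mul_of_nonneg_right h (ha k).le
  -- the derivative
  set D : ℝ := (p / 4) ^ (γ - 1) + p ^ (γ - 1) with hD_def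
  have hD : 0 < D := by
    have := Real.rpow_pos_of_pos (show (0:ℝ) < p / 4 by positivity) (γ - 1)
    have := Real.rpow_pos_of_pos hp (γ - 1)
    positivity
  set g : ℕ → ℝ → ℝ := fun k x => (x / 2) ^ (2 * (k : ℝ) + γ) / c k with hg_def
  set g' : ℕ → ℝ → ℝ := fun k x =>
    (2 * (k : ℝ) + γ) * (x / 2) ^ (2 * (k : ℝ) + γ - 1) * (1 / 2) / c k with hg'_def
  set u : ℕ → ℝ := fun k =>
    (D / (2 * γ)) * ((2 * (k : ℝ) + γ) ^ 2 * (p ^ 2) ^ k / c k) with hu_def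
  have hu : Summable u := by
    have h := (summable_master γ hγ (p ^ 2) (by positivity)).mul_left (D / (2 * γ))
    apply h.congr
    intro k
    simp only [hu_def, hc_def]
  have hderiv : ∀ (k : ℕ) (x : ℝ), x ∈ Set.Ioo (p / 2) (2 * p) → HasDerivAt (g k) (g' k x) x :=
    by
    intro k x hx
    have hx0 : 0 < x := lt_trans hhalf hx.1
    have h2 : x / 2 ≠ 0 := by positivity
    have h := (Real.hasDerivAt_rpow_const (p := 2 * (k : ℝ) + γ)
      (Or.inl h2)).comp x ((hasDerivAt_id x).div_const 2)
    have h' := h.div_const (c k)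
    exact h'
  have hbound : ∀ (k : ℕ) (x : ℝ), x ∈ Set.Ioo (p / 2) (2 * p) → ‖g' k x‖ ≤ u k := by
    intro k x hx
    have hx0 : 0 < x := lt_trans hhalf hx.1
    have hx20 : 0 < x / 2 := by positivity
    have hlo : p / 4 ≤ x / 2 := by linarith [hx.1]
    have hhi : x / 2 ≤ p := by linarith [hx.2]
    have hrp : (x / 2) ^ (2 * (k : ℝ) + γ - 1) ≤ (p ^ 2) ^ k * D := by
      rw [show 2 * (k : ℝ) + γ - 1 = ((2 * k : ℕ) : ℝ) + (γ - 1) by push_cast; ring,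
        Real.rpow_add hx20, Real.rpow_natCast]
      have hb1 : (x / 2) ^ (2 * k) ≤ p ^ (2 * k) := pow_le_pow_left₀ hx20.le hhi _
      have hb2 : (x / 2) ^ (γ - 1) ≤ D :=
        rpow_base_bound (by positivity) hlo hhi
      have hnn : (0:ℝ) ≤ (x / 2) ^ (γ - 1) := Real.rpow_nonneg hx20.le _
      calc (x / 2) ^ (2 * k) * (x / 2) ^ (γ - 1) ≤ p ^ (2 * k) * D :=
            mul_le_mul hb1 hb2 hnn (by positivity)
        _ = (p ^ 2) ^ k * D := by rw [pow_mul]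
    have hgnn : 0 ≤ g' k x := by
      apply div_nonneg _ (hc k).le
      have := Real.rpow_nonneg hx20.le (2 * (k : ℝ) + γ - 1)
      positivity
    rw [Real.norm_eq_abs, abs_of_nonneg hgnn]
    have hlin : (2 * (k : ℝ) + γ) ≤ (2 * (k : ℝ) + γ) ^ 2 / γ := by
      rw [le_div_iff₀ hγ]
      nlinarith [key_ge k]
    calc g' k x = (2 * (k : ℝ) + γ) * (x / 2) ^ (2 * (k : ℝ) + γ - 1) * (1 / 2) / c k := rfl
      _ ≤ (2 * (k : ℝ) + γ) * ((p ^ 2) ^ k * D) * (1 / 2) / c k := by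
          gcongr
      _ ≤ ((2 * (k : ℝ) + γ) ^ 2 / γ) * ((p ^ 2) ^ k * D) * (1 / 2) / c k := by
          gcongr
      _ = u k := by
          simp only [hu_def]
          field_simp
  have hmem : p ∈ Set.Ioo (p / 2) (2 * p) := ⟨by linarith, by linarith⟩
  have hS0' : Summable fun k => g k p := by
    apply S0.congr
    intro k; rfl
  have hbes : HasDerivAt (besselI γ) (∑' k : ℕ, g' k p) p := by
    have h := hasDerivAt_tsum_of_isPreconnected hu isOpen_Ioo isPreconnected_Ioo
      hderiv hbound hmem hS0' hmem
    exact h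
  have hDval : deriv (besselI γ) p = ∑' k : ℕ, g' k p := hbes.deriv
  have hpd : p * ∑' k : ℕ, g' k p = ∑' k : ℕ, (2 * (k : ℝ) + γ) * a k := by
    rw [← tsum_mul_left]
    apply tsum_congr
    intro k
    have h2 : (p / 2 : ℝ) ≠ 0 := hhalf.ne'
    have hsplit : (p / 2) ^ (2 * (k : ℝ) + γ) = (p / 2) ^ (2 * (k : ℝ) + γ - 1) * (p / 2) := by
      have h := Real.rpow_add_one h2 (2 * (k : ℝ) + γ - 1)
      rw [sub_add_cancel] at h
      exact h
    simp only [hg'_def, ha_def, hsplit]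
    field_simp
  -- the key recurrence
  have hkey : ∀ k : ℕ, 4 * ((k : ℝ) + 1) * ((k : ℝ) + γ + 1) * a (k + 1) = p ^ 2 * a k := by
    intro k
    have e1 : (p / 2) ^ (2 * ((k + 1 : ℕ) : ℝ) + γ)
        = (p / 2) ^ (2 * (k : ℝ) + γ) * (p / 2) ^ 2 := by
      push_cast
      rw [show 2 * ((k : ℝ) + 1) + γ = (2 * (k : ℝ) + γ) + 2 by ring,
        Real.rpow_add hhalf, Real.rpow_two]
    have e2 : c (k + 1) = ((k : ℝ) + 1) * (((k : ℝ) + γ + 1) * c k) := by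
      simp only [hc_def]
      push_cast [Nat.factorial_succ]
      rw [show (k : ℝ) + 1 + γ + 1 = ((k : ℝ) + γ + 1) + 1 by ring,
        Real.Gamma_add_one (by positivity)]
      ring
    simp only [ha_def, e1, e2]
    have h1 : ((k : ℝ) + 1) ≠ 0 := by positivity
    have h2 : ((k : ℝ) + γ + 1) ≠ 0 := by positivity
    field_simp
    ring
  have hq : Summable fun k : ℕ => 4 * (k : ℝ) * ((k : ℝ) + γ) * a k := by
    apply (S2.sub (S0.mul_left (γ ^ 2))).congr
    intro k; ring
  have hqsum : ∑' k : ℕ, 4 * (k : ℝ) * ((k : ℝ) + γ) * a k = p ^ 2 * ∑' k : ℕ, a k := by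
    rw [hq.tsum_eq_zero_add]
    have h0 : 4 * ((0 : ℕ) : ℝ) * (((0 : ℕ) : ℝ) + γ) * a 0 = 0 := by simp
    rw [h0, zero_add]
    rw [← tsum_mul_left]
    apply tsum_congr
    intro k
    have : 4 * (((k + 1 : ℕ)) : ℝ) * ((((k + 1 : ℕ)) : ℝ) + γ) * a (k + 1) = p ^ 2 * a k := by
      push_cast
      linear_combination hkey k
    exact this
  have hS2val : ∑' k : ℕ, (2 * (k : ℝ) + γ) ^ 2 * a k = (γ ^ 2 + p ^ 2) * ∑' k : ℕ, a k := by
    calc ∑' k : ℕ, (2 * (k : ℝ) + γ) ^ 2 * a k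
        = ∑' k : ℕ, (γ ^ 2 * a k + 4 * (k : ℝ) * ((k : ℝ) + γ) * a k) :=
          tsum_congr fun k => by ring
      _ = γ ^ 2 * ∑' k : ℕ, a k + p ^ 2 * ∑' k : ℕ, a k := by
          rw [Summable.tsum_add (S0.mul_left _) hq, tsum_mul_left, hqsum]
      _ = (γ ^ 2 + p ^ 2) * ∑' k : ℕ, a k := by ring
  have hI : besselI γ p = ∑' k : ℕ, a k := rfl
  have hIpos : 0 < ∑' k : ℕ, a k := Summable.tsum_pos S0 (fun k => (ha k).le) 0 (ha 0)
  -- Cauchy-Schwarz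
  have hCS : ∑' k : ℕ, (2 * (k : ℝ) + γ) * a k
      ≤ Real.sqrt (γ ^ 2 + p ^ 2) * ∑' k : ℕ, a k := by
    apply Summable.tsum_le_of_sum_le S1
    intro s
    have h1 : (∑ k ∈ s, (2 * (k : ℝ) + γ) * a k) ^ 2
        ≤ (∑ k ∈ s, (2 * (k : ℝ) + γ) ^ 2 * a k) * ∑ k ∈ s, a k := by
      calc (∑ k ∈ s, (2 * (k : ℝ) + γ) * a k) ^ 2
          = (∑ k ∈ s, ((2 * (k : ℝ) + γ) * Real.sqrt (a k)) * Real.sqrt (a k)) ^ 2 := by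
            congr 1
            apply Finset.sum_congr rfl
            intro k _
            rw [mul_assoc, Real.mul_self_sqrt (ha k).le]
        _ ≤ (∑ k ∈ s, ((2 * (k : ℝ) + γ) * Real.sqrt (a k)) ^ 2)
              * ∑ k ∈ s, Real.sqrt (a k) ^ 2 :=
            Finset.sum_mul_sq_le_sq_mul_sq s _ _
        _ = (∑ k ∈ s, (2 * (k : ℝ) + γ) ^ 2 * a k) * ∑ k ∈ s, a k := by
            congr 1
            · apply Finset.sum_congr rfl
              intro k _
              rw [mul_pow, Real.sq_sqrt (ha k).le]
            · apply Finset.sum_congr rfl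
              intro k _
              exact Real.sq_sqrt (ha k).le
    have h2 : ∑ k ∈ s, (2 * (k : ℝ) + γ) ^ 2 * a k ≤ ∑' k : ℕ, (2 * (k : ℝ) + γ) ^ 2 * a k :=
      Summable.sum_le_tsum s (fun k _ => mul_nonneg (sq_nonneg _) (ha k).le) S2
    have h3 : ∑ k ∈ s, a k ≤ ∑' k : ℕ, a k := Summable.sum_le_tsum s (fun k _ => (ha k).le) S0
    have hsum_nn : 0 ≤ ∑ k ∈ s, a k := Finset.sum_nonneg fun k _ => (ha k).le
    have hts_nn : 0 ≤ ∑' k : ℕ, (2 * (k : ℝ) + γ) ^ 2 * a k := by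
      rw [hS2val]; positivity
    have h4 : (∑ k ∈ s, (2 * (k : ℝ) + γ) * a k) ^ 2 ≤ (γ ^ 2 + p ^ 2) * (∑' k : ℕ, a k) ^ 2 := by
      calc (∑ k ∈ s, (2 * (k : ℝ) + γ) * a k) ^ 2
          ≤ (∑ k ∈ s, (2 * (k : ℝ) + γ) ^ 2 * a k) * ∑ k ∈ s, a k := h1
        _ ≤ (∑' k : ℕ, (2 * (k : ℝ) + γ) ^ 2 * a k) * ∑' k : ℕ, a k := by
            apply mul_le_mul h2 h3 hsum_nn hts_nn
        _ = (γ ^ 2 + p ^ 2) * (∑' k : ℕ, a k) ^ 2 := by rw [hS2val]; ring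
    have h5 : 0 ≤ ∑ k ∈ s, (2 * (k : ℝ) + γ) * a k :=
      Finset.sum_nonneg fun k _ => mul_nonneg (by positivity) (ha k).le
    have hrw : Real.sqrt (γ ^ 2 + p ^ 2) * ∑' k : ℕ, a k
        = Real.sqrt ((γ ^ 2 + p ^ 2) * (∑' k : ℕ, a k) ^ 2) := by
      rw [Real.sqrt_mul (by positivity), Real.sqrt_sq hIpos.le]
    rw [hrw]
    exact (Real.le_sqrt h5 (by positivity)).mpr h4
  -- conclusion
  rw [hI, div_le_iff₀ hIpos, hDval, hpd]
  exact hCS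
end

section
/- If V_alpha < V_dagger < 0, C > 0, and g > 0 together satisfy the dispersion relation C²(1 − 2V_alpha) = s₀ I'_{C²}(s₀)/I_{C²}(s₀) with s₀ = 2C√g (1 − V_dagger/V_alpha)^{1/(2C²)}, then g ≥ H_lwr(C, V_alpha) = V_alpha(V_alpha − 1) C² (−V_alpha/(V_dagger − V_alpha))^{1/C²}. -/
open Real

namespace DispAux

/-- Terms of the Bessel series. -/
noncomputable def a (ν x : ℝ) (k : ℕ) : ℝ :=
  (x / 2) ^ (2 * (k : ℝ) + ν) / ((k.factorial : ℝ) * Real.Gamma ((k : ℝ) + ν + 1))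

lemma a_pos {ν x : ℝ} (hν : 0 < ν) (hx : 0 < x) (k : ℕ) : 0 < a ν x k := by
  have h1 : 0 < (x / 2 : ℝ) := by linarith
  have h2 : 0 < Real.Gamma ((k : ℝ) + ν + 1) :=
    Real.Gamma_pos_of_pos (by positivity)
  have h3 : (0:ℝ) < k.factorial := by exact_mod_cast k.factorial_pos
  exact div_pos (Real.rpow_pos_of_pos h1 _) (by positivity)

lemma a_succ {ν x : ℝ} (hν : 0 < ν) (hx : 0 < x) (k : ℕ) :
    a ν x (k + 1) = a ν x k * (x ^ 2 / (4 * ((k:ℝ) + 1) * ((k : ℝ) + 1 + ν))) := by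
  have h1 : 0 < (x / 2 : ℝ) := by linarith
  have hg : Real.Gamma (((k:ℕ)+1 : ℕ) + ν + 1) = ((k:ℝ) + ν + 1) * Real.Gamma ((k:ℝ) + ν + 1) := by
    push_cast
    have := Real.Gamma_add_one (show ((k:ℝ) + ν + 1) ≠ 0 by positivity)
    rw [show (k:ℝ) + 1 + ν + 1 = ((k:ℝ) + ν + 1) + 1 by ring, this]
  have hp : (x / 2 : ℝ) ^ (2 * ((k:ℝ)+1) + ν) = (x/2) ^ (2*(k:ℝ)+ν) * (x/2)^2 := by
    rw [show 2 * ((k:ℝ)+1) + ν = (2*(k:ℝ)+ν) + (2:ℕ) by push_cast; ring,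
      Real.rpow_add h1, Real.rpow_natCast]
  have hg2 : 0 < Real.Gamma ((k : ℝ) + ν + 1) := Real.Gamma_pos_of_pos (by positivity)
  have h3 : (0:ℝ) < k.factorial := by exact_mod_cast k.factorial_pos
  simp only [a, Nat.factorial_succ, Nat.cast_add, Nat.cast_one, Nat.cast_mul]
  rw [show ((k:ℝ) + 1) + ν + 1 = (((k:ℕ)+1 : ℕ) : ℝ) + ν + 1 by push_cast; ring, hg]
  push_cast
  rw [hp]
  have hk1 : ((k:ℝ) + 1) ≠ 0 := by positivity
  have hkν : ((k:ℝ) + ν + 1) ≠ 0 := by positivity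
  field_simp
  ring

lemma summable_sq {ν x : ℝ} (hν : 0 < ν) (hx : 0 < x) :
    Summable (fun k : ℕ => (2 * (k:ℝ) + ν) ^ 2 * a ν x k) := by
  apply summable_of_ratio_norm_eventually_le (r := 1/2) (by norm_num)
  filter_upwards [Filter.eventually_ge_atTop (max 1 ⌈2 * x^2⌉₊)] with k hk
  have hk1 : 1 ≤ k := le_trans (le_max_left _ _) hk
  have hK1 : (1:ℝ) ≤ (k:ℝ) := by exact_mod_cast hk1
  have hK2 : 2 * x^2 ≤ (k:ℝ) := le_trans (Nat.le_ceil _)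
    (by exact_mod_cast le_trans (le_max_right _ _) hk)
  set K := (k:ℝ)
  have hA : 0 < a ν x k := a_pos hν hx k
  have hA1 : 0 < a ν x (k+1) := a_pos hν hx (k+1)
  rw [Real.norm_of_nonneg (by positivity), Real.norm_of_nonneg (by positivity),
    a_succ hν hx k]
  have h1 : (2*((K:ℝ)+1)+ν)^2 ≤ 4*(2*K+ν)^2 := by nlinarith
  have hD : 0 < 4*(K+1)*(K+1+ν) := by positivity
  have h2 : x^2/(4*(K+1)*(K+1+ν)) ≤ 1/8 := by
    rw [div_le_iff₀ hD]
    nlinarith [mul_pos (show (0:ℝ) < K+1 by linarith) hν]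
  push_cast
  calc (2*(K+1)+ν)^2 * (a ν x k * (x^2/(4*(K+1)*(K+1+ν))))
      ≤ 4*(2*K+ν)^2 * (a ν x k * (1/8)) := by
        apply mul_le_mul h1 ?_ (by positivity) (by positivity)
        exact mul_le_mul_of_nonneg_left h2 hA.le
    _ = 1/2 * ((2*K+ν)^2 * a ν x k) := by ring

lemma summable_lin {ν x : ℝ} (hν : 0 < ν) (hx : 0 < x) :
    Summable (fun k : ℕ => (2 * (k:ℝ) + ν) * a ν x k) := by
  have hle : ∀ k : ℕ, (2 * (k:ℝ) + ν) * a ν x k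
      ≤ (1/ν) * ((2 * (k:ℝ) + ν) ^ 2 * a ν x k) := by
    intro k
    have hA := a_pos hν hx k
    rw [show (1/ν) * ((2 * (k:ℝ) + ν) ^ 2 * a ν x k)
        = ((2*(k:ℝ)+ν)/ν) * ((2 * (k:ℝ) + ν) * a ν x k) by ring]
    nth_rewrite 1 [show (2 * (k:ℝ) + ν) * a ν x k = 1 * ((2 * (k:ℝ) + ν) * a ν x k) by ring]
    apply mul_le_mul_of_nonneg_right _ (by positivity)
    rw [le_div_iff₀ hν]; nlinarith [Nat.cast_nonneg (α := ℝ) k]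
  have h0 : ∀ k : ℕ, 0 ≤ (2 * (k:ℝ) + ν) * a ν x k := by
    intro k; have := a_pos hν hx k; positivity
  exact Summable.of_nonneg_of_le h0 hle (Summable.mul_left _ (summable_sq hν hx))

lemma summable_a {ν x : ℝ} (hν : 0 < ν) (hx : 0 < x) : Summable (a ν x) := by
  have hle : ∀ k : ℕ, a ν x k ≤ (1/ν) * ((2 * (k:ℝ) + ν) * a ν x k) := by
    intro k
    have hA := a_pos hν hx k
    rw [show (1/ν) * ((2 * (k:ℝ) + ν) * a ν x k) = ((2*(k:ℝ)+ν)/ν) * a ν x k by ring]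
    nth_rewrite 1 [show a ν x k = 1 * a ν x k by ring]
    apply mul_le_mul_of_nonneg_right _ hA.le
    rw [le_div_iff₀ hν]; nlinarith [Nat.cast_nonneg (α := ℝ) k]
  exact Summable.of_nonneg_of_le (fun k => (a_pos hν hx k).le) hle
    (Summable.mul_left _ (summable_lin hν hx))
lemma tsum_sq_eq {ν x : ℝ} (hν : 0 < ν) (hx : 0 < x) :
    ∑' k : ℕ, (2 * (k:ℝ) + ν) ^ 2 * a ν x k = (ν^2 + x^2) * ∑' k : ℕ, a ν x k := by
  have ha := summable_a hν hx
  have hs2 := summable_sq hν hx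
  have hb : Summable (fun k : ℕ => (2 * (k:ℝ) + ν) ^ 2 * a ν x k - ν^2 * a ν x k) :=
    hs2.sub (ha.mul_left (ν^2))
  have key : ∀ k : ℕ, (2 * ((k+1 : ℕ):ℝ) + ν) ^ 2 * a ν x (k+1) - ν^2 * a ν x (k+1)
      = x^2 * a ν x k := by
    intro k
    have hA := a_pos hν hx k
    rw [a_succ hν hx k]
    have h1 : ((k:ℝ) + 1) ≠ 0 := by positivity
    have h2 : ((k:ℝ) + 1 + ν) ≠ 0 := by positivity
    push_cast
    field_simp
    ring
  have hshift : ∑' k : ℕ, ((2 * (k:ℝ) + ν) ^ 2 * a ν x k - ν^2 * a ν x k)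
      = x^2 * ∑' k : ℕ, a ν x k := by
    rw [Summable.tsum_eq_zero_add hb]
    simp only [key]
    rw [tsum_mul_left]
    norm_num
  have hsplit : ∑' k : ℕ, (2 * (k:ℝ) + ν) ^ 2 * a ν x k
      = (∑' k : ℕ, ((2 * (k:ℝ) + ν) ^ 2 * a ν x k - ν^2 * a ν x k))
        + ν^2 * ∑' k : ℕ, a ν x k := by
    rw [← tsum_mul_left, ← Summable.tsum_add hb (ha.mul_left (ν^2))]
    congr 1; funext k; ring
  rw [hsplit, hshift]; ring

lemma tsum_sqrt_mul_sqrt_le {b c : ℕ → ℝ} (hb : Summable b) (hc : Summable c)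
    (hb0 : ∀ k, 0 ≤ b k) (hc0 : ∀ k, 0 ≤ c k) :
    ∑' k, Real.sqrt (b k) * Real.sqrt (c k)
      ≤ Real.sqrt (∑' k, b k) * Real.sqrt (∑' k, c k) := by
  have hsum : Summable (fun k => Real.sqrt (b k) * Real.sqrt (c k)) := by
    refine Summable.of_nonneg_of_le (fun k => by positivity) (fun k => ?_) (hb.add hc)
    rw [← Real.sqrt_mul (hb0 k)]
    calc Real.sqrt (b k * c k) ≤ Real.sqrt ((b k + c k)^2) := by
          apply Real.sqrt_le_sqrt; nlinarith [hb0 k, hc0 k]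
      _ = b k + c k := Real.sqrt_sq (by linarith [hb0 k, hc0 k])
  apply Summable.tsum_le_of_sum_le hsum
  intro s
  refine le_trans (Real.sum_sqrt_mul_sqrt_le s hb0 hc0) ?_
  have h1 := Real.sqrt_le_sqrt (Summable.sum_le_tsum s (fun k _ => hb0 k) hb)
  have h2 := Real.sqrt_le_sqrt (Summable.sum_le_tsum s (fun k _ => hc0 k) hc)
  exact mul_le_mul h1 h2 (Real.sqrt_nonneg _) (Real.sqrt_nonneg _)

lemma ratio_le {ν x : ℝ} (hν : 0 < ν) (hx : 0 < x) :
    ∑' k : ℕ, (2 * (k:ℝ) + ν) * a ν x k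
      ≤ Real.sqrt (ν^2 + x^2) * ∑' k : ℕ, a ν x k := by
  have ha := summable_a hν hx
  have hs2 := summable_sq hν hx
  have heq : ∀ k : ℕ, (2 * (k:ℝ) + ν) * a ν x k
      = Real.sqrt (a ν x k) * Real.sqrt ((2 * (k:ℝ) + ν) ^ 2 * a ν x k) := by
    intro k
    have hA := a_pos hν hx k
    rw [Real.sqrt_mul (by positivity), Real.sqrt_sq (by positivity),
      ← mul_assoc, mul_comm (Real.sqrt (a ν x k)), mul_assoc,
      Real.mul_self_sqrt hA.le]
  calc ∑' k : ℕ, (2 * (k:ℝ) + ν) * a ν x k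
      = ∑' k : ℕ, Real.sqrt (a ν x k) * Real.sqrt ((2 * (k:ℝ) + ν) ^ 2 * a ν x k) := by
        congr 1; funext k; exact heq k
    _ ≤ Real.sqrt (∑' k : ℕ, a ν x k) * Real.sqrt (∑' k : ℕ, (2 * (k:ℝ) + ν) ^ 2 * a ν x k) :=
        tsum_sqrt_mul_sqrt_le ha hs2 (fun k => (a_pos hν hx k).le)
          (fun k => by have := a_pos hν hx k; positivity)
    _ = Real.sqrt (ν^2 + x^2) * ∑' k : ℕ, a ν x k := by
        rw [tsum_sq_eq hν hx, Real.sqrt_mul (by positivity),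
          ← mul_assoc, mul_comm (Real.sqrt (∑' k : ℕ, a ν x k)), mul_assoc,
          Real.mul_self_sqrt (tsum_nonneg (fun k => (a_pos hν hx k).le))]
lemma besselI_eq (ν x : ℝ) : besselI ν x = ∑' k : ℕ, a ν x k := rfl

lemma besselI_pos {ν x : ℝ} (hν : 0 < ν) (hx : 0 < x) : 0 < besselI ν x := by
  rw [besselI_eq]
  exact Summable.tsum_pos (summable_a hν hx) (fun k => (a_pos hν hx k).le) 0 (a_pos hν hx 0)

lemma x_mul_deriv {ν x : ℝ} (hν : 0 < ν) (hx : 0 < x) :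
    x * deriv (besselI ν) x = ∑' k : ℕ, (2 * (k:ℝ) + ν) * a ν x k := by
  set c : ℕ → ℝ := fun k => (k.factorial : ℝ) * Real.Gamma ((k : ℝ) + ν + 1) with hc
  have hcpos : ∀ k, 0 < c k := fun k => by
    have h2 : 0 < Real.Gamma ((k : ℝ) + ν + 1) := Real.Gamma_pos_of_pos (by positivity)
    have h3 : (0:ℝ) < k.factorial := by exact_mod_cast k.factorial_pos
    positivity
  set g : ℕ → ℝ → ℝ := fun k y => (y / 2) ^ (2 * (k : ℝ) + ν) / c k with hgdef
  set g' : ℕ → ℝ → ℝ :=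
    fun k y => 2⁻¹ * (2 * (k : ℝ) + ν) * (y / 2) ^ (2 * (k : ℝ) + ν - 1) / c k with hg'def
  have hderiv : ∀ k : ℕ, ∀ y ∈ Set.Ioo (x/2) (2*x), HasDerivAt (g k) (g' k y) y := by
    intro k y hy
    have hy0 : 0 < y := lt_trans (by linarith) hy.1
    have h1 : HasDerivAt (fun y : ℝ => y / 2) 2⁻¹ y := by
      simpa using (hasDerivAt_id y).div_const 2
    exact (h1.rpow_const (Or.inl (by positivity))).div_const (c k)
  set u : ℕ → ℝ := fun k => (2/x) * ((2 * (k:ℝ) + ν) * a ν (2*x) k) with hu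
  have husum : Summable u := (summable_lin hν (by linarith)).mul_left _
  have hbound : ∀ k : ℕ, ∀ y ∈ Set.Ioo (x/2) (2*x), ‖g' k y‖ ≤ u k := by
    intro k y hy
    have hy0 : 0 < y := lt_trans (by linarith) hy.1
    have hrw : (y / 2 : ℝ) ^ (2 * (k : ℝ) + ν - 1)
        = (y/2) ^ (2 * (k : ℝ) + ν) / (y/2) := by
      rw [Real.rpow_sub (by positivity), Real.rpow_one]
    have h2 : (y/2 : ℝ) ^ (2 * (k : ℝ) + ν) ≤ x ^ (2 * (k : ℝ) + ν) :=
      Real.rpow_le_rpow (by positivity) (by linarith [hy.2]) (by positivity)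
    have h3 : (1:ℝ)/(y/2) ≤ 1/(x/4) := by
      apply one_div_le_one_div_of_le (by positivity) (by linarith [hy.1])
    have hnorm : ‖g' k y‖ = 2⁻¹ * (2 * (k : ℝ) + ν) * (y/2) ^ (2 * (k : ℝ) + ν - 1) / c k := by
      rw [Real.norm_of_nonneg]
      have := hcpos k
      positivity
    rw [hnorm, hrw]
    have hax : a ν (2*x) k = x ^ (2 * (k : ℝ) + ν) / c k := by
      simp only [a, hc]; norm_num
    show _ ≤ 2 / x * ((2 * (k:ℝ) + ν) * a ν (2*x) k)
    rw [hax]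
    set q : ℝ := 2 * (k:ℝ) + ν with hq
    set A : ℝ := (y/2) ^ (2 * (k : ℝ) + ν) with hA
    set X : ℝ := x ^ (2 * (k : ℝ) + ν) with hX
    have hqpos : 0 < q := by positivity
    have hApos : 0 < A := Real.rpow_pos_of_pos (by positivity) _
    have hXpos : 0 < X := Real.rpow_pos_of_pos hx _
    have hck := hcpos k
    have e1 : 2⁻¹ * q * (A / (y/2)) / c k = q * A / (2 * (y/2) * c k) := by
      field_simp
    have e2 : 2 / x * (q * (X / c k)) = 2 * q * X / (x * c k) := by
      field_simp
    rw [e1, e2, div_le_div_iff₀ (by positivity) (by positivity)]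
    have h5 : q * A * (x * c k) ≤ q * X * (x * c k) :=
      mul_le_mul_of_nonneg_right (mul_le_mul_of_nonneg_left h2 hqpos.le) (by positivity)
    have h6 : q * X * x * c k ≤ q * X * (2*y) * c k := by
      have hxy : x ≤ 2 * y := by linarith [hy.1]
      have := mul_le_mul_of_nonneg_left hxy (show (0:ℝ) ≤ q * X by positivity)
      nlinarith
    nlinarith
  have hmem : x ∈ Set.Ioo (x/2) (2*x) := by constructor <;> linarith
  have hg0 : Summable fun k => g k x := summable_a hν hx
  have H : HasDerivAt (fun z => ∑' k, g k z) (∑' k, g' k x) x :=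
    hasDerivAt_tsum_of_isPreconnected husum isOpen_Ioo isPreconnected_Ioo
      hderiv hbound hmem hg0 hmem
  have hfun : (fun z => ∑' k, g k z) = besselI ν := rfl
  rw [hfun] at H
  rw [H.deriv, ← tsum_mul_left]
  congr 1
  funext k
  have hck := hcpos k
  have hrw : (x / 2 : ℝ) ^ (2 * (k : ℝ) + ν - 1)
      = (x/2) ^ (2 * (k : ℝ) + ν) / (x/2) := by
    rw [Real.rpow_sub (by positivity), Real.rpow_one]
  show x * (2⁻¹ * (2 * (k : ℝ) + ν) * (x / 2) ^ (2 * (k : ℝ) + ν - 1) / c k)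
      = (2 * (k:ℝ) + ν) * a ν x k
  rw [hrw]
  have ha' : a ν x k = (x/2) ^ (2 * (k : ℝ) + ν) / c k := rfl
  rw [ha']
  field_simp
end DispAux

/-- If `Vα < V† < 0`, `C > 0` and `g > 0` satisfy the dispersion relation, then
`g ≥ H_lwr(C, Vα) = Vα(Vα − 1) C² (−Vα/(V† − Vα))^{1/C²}`. -/
theorem dispersion_relation_lower_bound
    (Vdag Valpha C g : ℝ) (hVd : Vdag < 0) (hVa : Valpha < Vdag)
    (hC : 0 < C) (hg : 0 < g)
    (hdisp : C ^ 2 * (1 - 2 * Valpha) =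
      (2 * C * Real.sqrt g * (1 - Vdag / Valpha) ^ (1 / (2 * C ^ 2))) *
        deriv (besselI (C ^ 2))
          (2 * C * Real.sqrt g * (1 - Vdag / Valpha) ^ (1 / (2 * C ^ 2))) /
        besselI (C ^ 2)
          (2 * C * Real.sqrt g * (1 - Vdag / Valpha) ^ (1 / (2 * C ^ 2)))) :
    g ≥ Valpha * (Valpha - 1) * C ^ 2 *
      (-Valpha / (Vdag - Valpha)) ^ (1 / C ^ 2) := by
  have hVa0 : Valpha < 0 := lt_trans hVa hVd
  set ν : ℝ := C ^ 2 with hνdef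
  have hν : 0 < ν := by positivity
  set B : ℝ := 1 - Vdag / Valpha with hBdef
  have hne : Valpha ≠ 0 := ne_of_lt hVa0
  have hBeq : B = (Valpha - Vdag) / Valpha := by
    rw [hBdef]
    field_simp [hne]
  have hB : 0 < B := by
    rw [hBeq]
    exact div_pos_of_neg_of_neg (by linarith) hVa0
  set x : ℝ := 2 * C * Real.sqrt g * B ^ (1 / (2 * C ^ 2)) with hxdef
  have hsg : 0 < Real.sqrt g := Real.sqrt_pos.mpr hg
  have hx : 0 < x := by
    apply mul_pos (mul_pos (by positivity) hsg) (Real.rpow_pos_of_pos hB _)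
  have hI : 0 < besselI ν x := DispAux.besselI_pos hν hx
  have hS0 : besselI ν x = ∑' k : ℕ, DispAux.a ν x k := DispAux.besselI_eq ν x
  have hxd : x * deriv (besselI ν) x = ∑' k : ℕ, (2 * (k:ℝ) + ν) * DispAux.a ν x k :=
    DispAux.x_mul_deriv hν hx
  have hratio : ∑' k : ℕ, (2 * (k:ℝ) + ν) * DispAux.a ν x k
      ≤ Real.sqrt (ν ^ 2 + x ^ 2) * ∑' k : ℕ, DispAux.a ν x k :=
    DispAux.ratio_le hν hx
  -- rewrite the dispersion relation
  have hdisp' : C ^ 2 * (1 - 2 * Valpha) = x * deriv (besselI ν) x / besselI ν x := hdisp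
  have hL : C ^ 2 * (1 - 2 * Valpha) ≤ Real.sqrt (ν ^ 2 + x ^ 2) := by
    rw [hdisp', div_le_iff₀ hI, hxd, hS0]
    exact hratio
  have hLpos : 0 < C ^ 2 * (1 - 2 * Valpha) := by nlinarith
  have hsq : (C ^ 2 * (1 - 2 * Valpha)) ^ 2 ≤ ν ^ 2 + x ^ 2 := by
    have h2 : (C ^ 2 * (1 - 2 * Valpha)) ^ 2 ≤ Real.sqrt (ν ^ 2 + x ^ 2) ^ 2 :=
      pow_le_pow_left₀ hLpos.le hL 2
    rwa [Real.sq_sqrt (by positivity)] at h2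
  have hx2 : x ^ 2 = 4 * C ^ 2 * g * B ^ (1 / C ^ 2) := by
    have hE : (B ^ (1 / (2 * C ^ 2))) ^ (2:ℕ) = B ^ (1 / C ^ 2) := by
      rw [← Real.rpow_natCast (B ^ (1 / (2 * C ^ 2))) 2, ← Real.rpow_mul hB.le]
      congr 1
      have hC2 : C ^ 2 ≠ 0 := by positivity
      push_cast
      field_simp
    rw [hxdef]
    rw [mul_pow, mul_pow, mul_pow, hE, Real.sq_sqrt hg.le]
    ring
  have hkey : 4 * C ^ 4 * (Valpha * (Valpha - 1)) ≤ x ^ 2 := by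
    have : (C ^ 2 * (1 - 2 * Valpha)) ^ 2 - ν ^ 2 = 4 * C ^ 4 * (Valpha * (Valpha - 1)) := by
      rw [hνdef]; ring
    linarith
  have hP : 0 < B ^ (1 / C ^ 2) := Real.rpow_pos_of_pos hB _
  have hginB : C ^ 2 * (Valpha * (Valpha - 1)) ≤ g * B ^ (1 / C ^ 2) := by
    rw [hx2] at hkey
    nlinarith [sq_nonneg C]
  have hTB : -Valpha / (Vdag - Valpha) = B⁻¹ := by
    rw [hBeq]
    rw [inv_div]
    rw [div_eq_div_iff (by linarith) (by linarith)]
    ring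
  rw [ge_iff_le, hTB, Real.inv_rpow hB.le,
    show Valpha * (Valpha - 1) * C ^ 2 * (B ^ (1 / C ^ 2))⁻¹
      = (C ^ 2 * (Valpha * (Valpha - 1))) / (B ^ (1 / C ^ 2)) by ring,
    div_le_iff₀ hP]
  linarith
end

section
/- Fix V_dagger < 0 and V_alpha < V_dagger, set L = ln(−V_alpha/(V_dagger − V_alpha)) and C* = √L. For every g > e · V_alpha(V_alpha − 1) · L, the equation H_lwr(C, V_alpha) = g has exactly two solutions C in (0, ∞), one lying in (0, C*) and one in (C*, ∞); for g = e · V_alpha(V_alpha − 1) · L it has exactly one solution, C = C*; and for 0 < g < e · V_alpha(V_alpha − 1) · L it has no solution. -/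
noncomputable def fAux (A L : ℝ) : ℝ → ℝ := fun t => A * t * Real.exp (L / t)

lemma fAux_hasDerivAt (A L : ℝ) {t : ℝ} (ht : t ≠ 0) :
    HasDerivAt (fAux A L) (A * Real.exp (L / t) * (1 - L / t)) t := by
  have h1 : HasDerivAt (fun x : ℝ => L / x) (-(L / t ^ 2)) t := by
    simpa [div_eq_mul_inv, mul_comm, mul_neg] using (hasDerivAt_inv ht).const_mul L
  have h2 := h1.exp
  have h3 : HasDerivAt (fun x : ℝ => A * x) A t := by
    simpa using (hasDerivAt_id t).const_mul A
  have h4 := h3.mul h2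
  convert h4 using 1
  all_goals try rfl
  field_simp
  ring

lemma fAux_continuousOn (A L : ℝ) {s : Set ℝ} (hs : ∀ t ∈ s, t ≠ 0) :
    ContinuousOn (fAux A L) s := by
  apply ContinuousOn.mul
  · exact (continuous_const.mul continuous_id).continuousOn
  · exact Real.continuous_exp.comp_continuousOn
      (continuousOn_const.div continuousOn_id hs)

lemma fAux_strictAntiOn {A L : ℝ} (hA : 0 < A) (hL : 0 < L) :
    StrictAntiOn (fAux A L) (Set.Ioc 0 L) := by
  apply strictAntiOn_of_deriv_neg (convex_Ioc 0 L)
  · exact fAux_continuousOn A L (fun t ht => ne_of_gt ht.1)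
  · intro t ht
    rw [interior_Ioc] at ht
    rw [(fAux_hasDerivAt A L (ne_of_gt ht.1)).deriv]
    have h1 : 1 < L / t := (one_lt_div ht.1).2 ht.2
    exact mul_neg_of_pos_of_neg (by positivity) (by linarith)

lemma fAux_strictMonoOn {A L : ℝ} (hA : 0 < A) (hL : 0 < L) :
    StrictMonoOn (fAux A L) (Set.Ici L) := by
  apply strictMonoOn_of_deriv_pos (convex_Ici L)
  · exact fAux_continuousOn A L (fun t ht => ne_of_gt (lt_of_lt_of_le hL ht))
  · intro t ht
    rw [interior_Ici] at ht
    have ht0 : 0 < t := lt_trans hL ht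
    rw [(fAux_hasDerivAt A L (ne_of_gt ht0)).deriv]
    have h1 : L / t < 1 := (div_lt_one ht0).2 ht
    exact mul_pos (by positivity) (by linarith)

lemma fAux_at_L {A L : ℝ} (hL : 0 < L) : fAux A L L = Real.exp 1 * A * L := by
  unfold fAux
  rw [div_self (ne_of_gt hL)]
  ring

lemma fAux_min {A L : ℝ} (hA : 0 < A) (hL : 0 < L) {t : ℝ} (ht : 0 < t) (hne : t ≠ L) :
    fAux A L L < fAux A L t := by
  rcases lt_or_gt_of_ne hne with h | h
  · exact fAux_strictAntiOn hA hL ⟨ht, h.le⟩ ⟨hL, le_refl L⟩ h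
  · exact fAux_strictMonoOn hA hL (le_refl L : L ∈ Set.Ici L) h.le h

lemma fAux_left_exists {A L g : ℝ} (hA : 0 < A) (hL : 0 < L)
    (hg : fAux A L L < g) : ∃ t ∈ Set.Ioo 0 L, fAux A L t = g := by
  have hg0 : 0 < g := lt_trans (by rw [fAux_at_L hL]; positivity) hg
  set t₀ : ℝ := min (L / 2) (A * L ^ 2 / (4 * g)) with ht₀def
  have ht₀pos : 0 < t₀ := lt_min (by positivity) (by positivity)
  have ht₀lt : t₀ < L := lt_of_le_of_lt (min_le_left _ _) (by linarith)
  have hexp : L ^ 2 / (4 * t₀ ^ 2) ≤ Real.exp (L / t₀) := by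
    have h1 : (1 + L / t₀ / 2) ^ 2 ≤ Real.exp (L / t₀) := by
      have := Real.add_one_le_exp (L / t₀ / 2)
      have h2 : Real.exp (L / t₀ / 2) ^ 2 = Real.exp (L / t₀) := by
        rw [← Real.exp_nat_mul]; ring_nf
      nlinarith [Real.exp_pos (L / t₀ / 2), div_pos (div_pos hL ht₀pos) two_pos]
    have h3 : L ^ 2 / (4 * t₀ ^ 2) ≤ (1 + L / t₀ / 2) ^ 2 := by
      have h4 : L / t₀ / 2 ≥ 0 := by positivity
      have : (L / t₀ / 2) ^ 2 = L ^ 2 / (4 * t₀ ^ 2) := by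
        field_simp; ring
      nlinarith
    linarith
  have hft₀ : g ≤ fAux A L t₀ := by
    have h5 : A * L ^ 2 / (4 * t₀) ≤ fAux A L t₀ := by
      unfold fAux
      have := mul_le_mul_of_nonneg_left hexp (by positivity : (0:ℝ) ≤ A * t₀)
      calc A * L ^ 2 / (4 * t₀) = A * t₀ * (L ^ 2 / (4 * t₀ ^ 2)) := by
            field_simp
        _ ≤ A * t₀ * Real.exp (L / t₀) := this
    have h6 : g ≤ A * L ^ 2 / (4 * t₀) := by
      have h7 : t₀ ≤ A * L ^ 2 / (4 * g) := min_le_right _ _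
      rw [le_div_iff₀ (by positivity)] at h7 ⊢
      nlinarith
    linarith
  have hcont : ContinuousOn (fAux A L) (Set.Icc t₀ L) :=
    fAux_continuousOn A L (fun t ht => ne_of_gt (lt_of_lt_of_le ht₀pos ht.1))
  have := intermediate_value_Icc' ht₀lt.le hcont
  have hmem : g ∈ Set.Icc (fAux A L L) (fAux A L t₀) := ⟨hg.le, hft₀⟩
  obtain ⟨t, htmem, htval⟩ := this hmem
  refine ⟨t, ⟨lt_of_lt_of_le ht₀pos htmem.1, lt_of_le_of_ne htmem.2 ?_⟩, htval⟩
  intro h; rw [h] at htval; linarith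

lemma fAux_right_exists {A L g : ℝ} (hA : 0 < A) (hL : 0 < L)
    (hg : fAux A L L < g) : ∃ t ∈ Set.Ioi L, fAux A L t = g := by
  set T : ℝ := max (L + 1) (g / A) with hTdef
  have hTL : L < T := lt_of_lt_of_le (by linarith) (le_max_left _ _)
  have hT0 : 0 < T := lt_trans hL hTL
  have hfT : g ≤ fAux A L T := by
    have h1 : g ≤ A * T := by
      have := le_max_right (L + 1) (g / A)
      rw [div_le_iff₀ hA] at this
      linarith [this]
    have h2 : (1:ℝ) ≤ Real.exp (L / T) :=
      Real.one_le_exp (by positivity)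
    have : A * T * 1 ≤ A * T * Real.exp (L / T) :=
      mul_le_mul_of_nonneg_left h2 (by positivity)
    unfold fAux; linarith
  have hcont : ContinuousOn (fAux A L) (Set.Icc L T) :=
    fAux_continuousOn A L (fun t ht => ne_of_gt (lt_of_lt_of_le hL ht.1))
  obtain ⟨t, htmem, htval⟩ := intermediate_value_Icc hTL.le hcont ⟨hg.le, hfT⟩
  refine ⟨t, lt_of_le_of_ne htmem.1 ?_, htval⟩
  intro h; rw [← h] at htval; linarith

/-- Fix `V† < 0`, `Vα < V†`, `L = ln(−Vα/(V† − Vα))`, `C* = √L`. For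
`g > e·Vα(Vα − 1)·L` the equation `H_lwr(C, Vα) = g` has exactly two positive
solutions, one in `(0, C*)` and one in `(C*, ∞)`; for `g = e·Vα(Vα − 1)·L`
exactly one, `C = C*`; and for `0 < g < e·Vα(Vα − 1)·L` none. -/
theorem Hlwr_level_set_solutions
    (Vdag Valpha : ℝ) (hVd : Vdag < 0) (hVa : Valpha < Vdag)
    (L : ℝ) (hL : L = Real.log (-Valpha / (Vdag - Valpha)))
    (Cs : ℝ) (hCs : Cs = Real.sqrt L)
    (H : ℝ → ℝ)
    (hH : ∀ C : ℝ, H C =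
      Valpha * (Valpha - 1) * C ^ 2 * (-Valpha / (Vdag - Valpha)) ^ (1 / C ^ 2))
    (g : ℝ) :
    (Real.exp 1 * (Valpha * (Valpha - 1)) * L < g →
      (∃! C : ℝ, C ∈ Set.Ioo 0 Cs ∧ H C = g) ∧
      (∃! C : ℝ, C ∈ Set.Ioi Cs ∧ H C = g) ∧
      (∀ C : ℝ, 0 < C → H C = g → C ∈ Set.Ioo 0 Cs ∨ C ∈ Set.Ioi Cs)) ∧
    (g = Real.exp 1 * (Valpha * (Valpha - 1)) * L →
      ∀ C : ℝ, 0 < C → (H C = g ↔ C = Cs)) ∧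
    (0 < g → g < Real.exp 1 * (Valpha * (Valpha - 1)) * L →
      ∀ C : ℝ, 0 < C → H C ≠ g) := by
  have hVa0 : Valpha < 0 := lt_trans hVa hVd
  have hA : 0 < Valpha * (Valpha - 1) :=
    mul_pos_of_neg_of_neg hVa0 (by linarith)
  have hden : 0 < Vdag - Valpha := by linarith
  have hb : 1 < -Valpha / (Vdag - Valpha) := (one_lt_div hden).2 (by linarith)
  have hL0 : 0 < L := hL ▸ Real.log_pos hb
  have hCs0 : 0 < Cs := hCs ▸ Real.sqrt_pos.2 hL0
  have hCs2 : Cs ^ 2 = L := by rw [hCs, Real.sq_sqrt hL0.le]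
  have hHf : ∀ C : ℝ, H C = fAux (Valpha * (Valpha - 1)) L (C ^ 2) := by
    intro C
    rw [hH C]
    unfold fAux
    rw [Real.rpow_def_of_pos (lt_trans one_pos hb), mul_one_div, ← hL]
  have hlt : ∀ C : ℝ, 0 < C → (C < Cs ↔ C ^ 2 < L) := by
    intro C hC; rw [hCs]; exact Real.lt_sqrt hC.le
  have hgt : ∀ C : ℝ, 0 < C → (Cs < C ↔ L < C ^ 2) := by
    intro C hC; rw [hCs]; exact Real.sqrt_lt' hC
  refine ⟨?_, ?_, ?_⟩
  · intro hg
    have hgf : fAux (Valpha * (Valpha - 1)) L L < g := by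
      rw [fAux_at_L hL0]; exact hg
    refine ⟨?_, ?_, ?_⟩
    · obtain ⟨t, ⟨ht0, htL⟩, htv⟩ := fAux_left_exists hA hL0 hgf
      refine ⟨Real.sqrt t, ⟨⟨Real.sqrt_pos.2 ht0, ?_⟩, ?_⟩, ?_⟩
      · rw [hCs]; exact Real.sqrt_lt_sqrt ht0.le htL
      · rw [hHf, Real.sq_sqrt ht0.le, htv]
      · rintro C ⟨⟨hC0, hClt⟩, hCv⟩
        have h2 : fAux (Valpha * (Valpha - 1)) L (C ^ 2)
            = fAux (Valpha * (Valpha - 1)) L t :=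
          ((hHf C).symm.trans hCv).trans htv.symm
        have h3 : C ^ 2 = t :=
          (fAux_strictAntiOn hA hL0).injOn
            ⟨pow_pos hC0 2, ((hlt C hC0).1 hClt).le⟩ ⟨ht0, htL.le⟩ h2
        rw [← Real.sqrt_sq hC0.le, h3]
    · obtain ⟨t, htL, htv⟩ := fAux_right_exists hA hL0 hgf
      have ht0 : 0 < t := lt_trans hL0 htL
      refine ⟨Real.sqrt t, ⟨?_, ?_⟩, ?_⟩
      · rw [Set.mem_Ioi, hCs]; exact Real.sqrt_lt_sqrt hL0.le htL
      · rw [hHf, Real.sq_sqrt ht0.le, htv]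
      · rintro C ⟨hCgt, hCv⟩
        have hC0 : 0 < C := lt_trans hCs0 hCgt
        have h2 : fAux (Valpha * (Valpha - 1)) L (C ^ 2)
            = fAux (Valpha * (Valpha - 1)) L t :=
          ((hHf C).symm.trans hCv).trans htv.symm
        have h3 : C ^ 2 = t :=
          (fAux_strictMonoOn hA hL0).injOn
            ((hgt C hC0).1 hCgt).le (Set.mem_Ici.mpr (le_of_lt htL)) h2
        rw [← Real.sqrt_sq hC0.le, h3]
    · intro C hC0 hCv
      have hne : C ≠ Cs := by
        intro h
        rw [h, hHf, hCs2, fAux_at_L hL0] at hCv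
        linarith
      rcases lt_trichotomy C Cs with h | h | h
      · exact Or.inl ⟨hC0, h⟩
      · exact absurd h hne
      · exact Or.inr h
  · intro hg C hC0
    constructor
    · intro hCv
      have h2 : fAux (Valpha * (Valpha - 1)) L (C ^ 2)
          = fAux (Valpha * (Valpha - 1)) L L := by
        rw [← hHf, hCv, hg, fAux_at_L hL0]
      by_contra hne
      have hne2 : C ^ 2 ≠ L := by
        intro h
        apply hne
        rw [← Real.sqrt_sq hC0.le, h, ← hCs]
      exact absurd h2.symm
        (ne_of_lt (fAux_min hA hL0 (pow_pos hC0 2) hne2))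
    · intro h
      rw [h, hHf, hCs2, fAux_at_L hL0, hg]
  · intro hg0 hg C hC0 hCv
    rcases eq_or_ne (C ^ 2) L with h | h
    · rw [hHf, h, fAux_at_L hL0] at hCv
      linarith
    · have h2 := fAux_min hA hL0 (pow_pos hC0 2) h
      rw [fAux_at_L hL0] at h2
      rw [hHf] at hCv
      linarith
end

section
/- Fix V_dagger < 0. The function f(V_alpha) = ((V_dagger − V_alpha)(1 − 2V_alpha)/(−V_dagger(1 − V_alpha))) · ln(−V_alpha/(V_dagger − V_alpha)) is strictly decreasing on (−∞, V_dagger), satisfies f(V_alpha) → 2 as V_alpha → −∞ and f(V_alpha) → 0 as V_alpha → V_dagger⁻; consequently the equation f(V_alpha) = 1 has exactly one solution V_alpha in (−∞, V_dagger). -/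
open Real Filter Set Topology

/-- Fix `V† < 0`. The function
`f(Vα) = ((V† − Vα)(1 − 2Vα)/(−V†(1 − Vα))) ln(−Vα/(V† − Vα))` is strictly
decreasing on `(−∞, V†)`, tends to `2` as `Vα → −∞` and to `0` as `Vα → V†⁻`;
consequently `f(Vα) = 1` has exactly one solution in `(−∞, V†)`. -/
theorem f_strictAnti_limits_unique_root
    (Vdag : ℝ) (hVd : Vdag < 0)
    (f : ℝ → ℝ)
    (hf : ∀ v : ℝ, f v =
      ((Vdag - v) * (1 - 2 * v) / (-Vdag * (1 - v))) *
        Real.log (-v / (Vdag - v))) :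
    StrictAntiOn f (Set.Iio Vdag) ∧
    Filter.Tendsto f Filter.atBot (nhds 2) ∧
    Filter.Tendsto f (nhdsWithin Vdag (Set.Iio Vdag)) (nhds 0) ∧
    (∃! v : ℝ, v < Vdag ∧ f v = 1) := by
  have hfg : f = fun v => ((Vdag - v) * (1 - 2 * v) / (-Vdag * (1 - v))) *
      Real.log (-v / (Vdag - v)) := funext hf
  subst hfg
  set d := Vdag with hdd
  have hd0 : d ≠ 0 := ne_of_lt hVd
  have hdneg : (0:ℝ) < -d := neg_pos.2 hVd
  -- key derivative fact
  have key : ∀ v : ℝ, v < d → ∃ e : ℝ,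
      HasDerivAt (fun v => ((d - v) * (1 - 2 * v) / (-d * (1 - v))) *
        Real.log (-v / (d - v))) e v ∧ e < 0 := by
    intro v hv
    have hv0 : v < 0 := hv.trans hVd
    have hv0' : v ≠ 0 := ne_of_lt hv0
    have hdv : 0 < d - v := by linarith
    have h1v : (0:ℝ) < 1 - v := by linarith
    have h12 : (0:ℝ) < 1 - 2 * v := by linarith
    have hx0 : (0:ℝ) < -v / (d - v) := div_pos (by linarith) hdv
    have hx1 : 1 < -v / (d - v) := by rw [lt_div_iff₀ hdv]; linarith
    have hL0 : 0 < Real.log (-v / (d - v)) := Real.log_pos hx1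
    set L := Real.log (-v / (d - v)) with hLdef
    -- key inequality : v * L ≤ d
    have hvL : v * L ≤ d := by
      have hnv : (0:ℝ) < -v := by linarith
      have h := Real.log_le_sub_one_of_pos (div_pos hdv hnv)
      have hloginv : Real.log ((d - v) / (-v)) = -L := by
        rw [hLdef, ← Real.log_inv, inv_div]
      rw [hloginv] at h
      have h2 : (-v) * ((d - v) / (-v)) = d - v := by field_simp
      nlinarith [mul_le_mul_of_nonneg_left h hnv.le, h2]
    -- build derivative
    have hid := hasDerivAt_id v
    have h1 : HasDerivAt (fun x : ℝ => d - x) (-1) v := by simpa using hid.const_sub d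
    have h2 : HasDerivAt (fun x : ℝ => 1 - 2 * x) (-2) v := by
      simpa using (hid.const_mul 2).const_sub 1
    have hN : HasDerivAt (fun x : ℝ => (d - x) * (1 - 2 * x))
        ((-1) * (1 - 2 * v) + (d - v) * (-2)) v := h1.mul h2
    have h3 : HasDerivAt (fun x : ℝ => 1 - x) (-1) v := by simpa using hid.const_sub 1
    have hD : HasDerivAt (fun x : ℝ => -d * (1 - x)) (-d * (-1)) v := h3.const_mul (-d)
    have hD0 : -d * (1 - v) ≠ 0 := (mul_pos hdneg h1v).ne'
    have hA : HasDerivAt (fun x : ℝ => (d - x) * (1 - 2 * x) / (-d * (1 - x)))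
        ((((-1) * (1 - 2 * v) + (d - v) * (-2)) * (-d * (1 - v)) -
          (d - v) * (1 - 2 * v) * (-d * (-1))) / (-d * (1 - v)) ^ 2) v := hN.div hD hD0
    have h4 : HasDerivAt (fun x : ℝ => -x) (-1) v := hid.neg
    have hX : HasDerivAt (fun x : ℝ => -x / (d - x))
        (((-1) * (d - v) - (-v) * (-1)) / (d - v) ^ 2) v := h4.div h1 hdv.ne'
    have hLd : HasDerivAt (fun x : ℝ => Real.log (-x / (d - x)))
        ((((-1) * (d - v) - (-v) * (-1)) / (d - v) ^ 2) / (-v / (d - v))) v :=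
      hX.log hx0.ne'
    have hfd := hA.mul hLd
    refine ⟨_, hfd, ?_⟩
    -- show the derivative is negative
    have hdvne : d - v ≠ 0 := hdv.ne'
    have h1vne : (1:ℝ) - v ≠ 0 := h1v.ne'
    have hQ : 0 < 2 * v ^ 2 - 4 * v + 1 + d := by nlinarith [mul_pos h12 h1v]
    have hm : 0 < (-d * (1 - v)) ^ 2 * ((-v) * (d - v)) :=
      mul_pos (pow_pos (mul_pos hdneg h1v) 2) (mul_pos (by linarith) hdv)
    have hEP : (((-1) * (1 - 2 * v) + (d - v) * (-2)) * (-d * (1 - v)) -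
          (d - v) * (1 - 2 * v) * (-d * (-1))) / (-d * (1 - v)) ^ 2 * L +
        (d - v) * (1 - 2 * v) / (-d * (1 - v)) *
          ((((-1) * (d - v) - (-v) * (-1)) / (d - v) ^ 2) / (-v / (d - v))) =
        (d * (2 * v ^ 2 - 4 * v + 1 + d) * ((-v) * (d - v)) * L +
          d ^ 2 * ((d - v) * (1 - 2 * v) * (1 - v))) /
          ((-d * (1 - v)) ^ 2 * ((-v) * (d - v))) := by
      field_simp
      ring
    rw [hEP]
    apply div_neg_of_neg_of_pos _ hm
    have hpos : 0 < (-d) * (2 * v ^ 2 - 4 * v + 1 + d) * (d - v) :=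
      mul_pos (mul_pos hdneg hQ) hdv
    have h5 : (-d) * (2 * v ^ 2 - 4 * v + 1 + d) * (d - v) * (v * L) ≤
        (-d) * (2 * v ^ 2 - 4 * v + 1 + d) * (d - v) * d :=
      mul_le_mul_of_nonneg_left hvL hpos.le
    have hdd2 : 0 < d ^ 2 * (d - v) ^ 2 := by positivity
    nlinarith [h5, hdd2]
  -- strict antitonicity
  have hanti : StrictAntiOn (fun v => ((d - v) * (1 - 2 * v) / (-d * (1 - v))) *
      Real.log (-v / (d - v))) (Set.Iio d) := by
    apply strictAntiOn_of_deriv_neg (convex_Iio d)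
    · intro v hv
      obtain ⟨e, he, _⟩ := key v hv
      exact he.continuousAt.continuousWithinAt
    · intro v hv
      rw [interior_Iio] at hv
      obtain ⟨e, he, hneg⟩ := key v hv
      rwa [he.deriv]
  -- limit at -infinity
  have hinv : Tendsto (fun v : ℝ => v⁻¹) atBot (𝓝 0) := by
    have := (tendsto_neg_atBot_atTop : Tendsto (fun x : ℝ => -x) atBot atTop).inv_tendsto_atTop
    have h2 := this.neg
    simp only [Pi.inv_apply] at h2
    simpa [inv_neg] using h2
  have hT1 : Tendsto (fun v : ℝ => (1 - 2 * v) / (1 - v)) atBot (𝓝 2) := by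
    have h := (hinv.sub_const 2).div (hinv.sub_const 1) (by norm_num)
    have heq : (fun v : ℝ => (v⁻¹ - 2) / (v⁻¹ - 1)) =ᶠ[atBot]
        fun v => (1 - 2 * v) / (1 - v) := by
      filter_upwards [eventually_lt_atBot (0:ℝ)] with v hv
      have hv' : v ≠ 0 := ne_of_lt hv
      have hinvneg : v⁻¹ < 0 := inv_lt_zero.mpr hv
      have hne1 : v⁻¹ - 1 ≠ 0 := by linarith
      have hne2 : (1:ℝ) - v ≠ 0 := by linarith
      rw [div_eq_div_iff hne1 hne2]
      have hvv : v * v⁻¹ = 1 := mul_inv_cancel₀ hv'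
      linear_combination hvv
    have h2 := h.congr' heq
    norm_num at h2
    exact h2
  have hslope : Tendsto (fun y : ℝ => Real.log y / (y - 1)) (𝓝[≠] (1:ℝ)) (𝓝 1) := by
    have h := Real.hasDerivAt_log one_ne_zero
    rw [hasDerivAt_iff_tendsto_slope] at h
    have h2 : slope Real.log 1 = fun y => Real.log y / (y - 1) := by
      funext y; rw [slope_def_field]; simp
    rw [h2] at h
    simpa using h
  have hx : Tendsto (fun v : ℝ => -v / (d - v)) atBot (𝓝[≠] (1:ℝ)) := by
    rw [tendsto_nhdsWithin_iff]
    constructor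
    · have h := (tendsto_const_nhds.sub (hinv.const_mul d)).inv₀ (by norm_num :
        (1:ℝ) - d * 0 ≠ 0)
      have heq : (fun v : ℝ => (1 - d * v⁻¹)⁻¹) =ᶠ[atBot] fun v => -v / (d - v) := by
        filter_upwards [eventually_lt_atBot (min d 0)] with v hv
        have hv0 : v ≠ 0 := ne_of_lt (lt_of_lt_of_le hv (min_le_right d 0))
        have hdv : d - v ≠ 0 := by
          have := lt_of_lt_of_le hv (min_le_left d 0); intro hc; linarith
        have e1 : (1 : ℝ) - d * v⁻¹ = (v - d) / v := by
          field_simp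
        rw [e1, inv_div, show d - v = -(v - d) by ring]
        exact (neg_div_neg_eq v (v - d)).symm
      have := h.congr' heq
      simpa using this
    · filter_upwards [eventually_lt_atBot (min d 0)] with v hv
      have hvd : v < d := lt_of_lt_of_le hv (min_le_left d 0)
      have hdv : 0 < d - v := by linarith
      have hx1 : 1 < -v / (d - v) := by rw [lt_div_iff₀ hdv]; linarith
      exact ne_of_gt hx1
  have hatBot : Tendsto (fun v => ((d - v) * (1 - 2 * v) / (-d * (1 - v))) *
      Real.log (-v / (d - v))) atBot (𝓝 2) := by
    have hmul := hT1.mul (hslope.comp hx)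
    norm_num at hmul
    refine hmul.congr' ?_
    filter_upwards [eventually_lt_atBot (min d 0)] with v hv
    have hvd : v < d := lt_of_lt_of_le hv (min_le_left d 0)
    have hv0 : v < 0 := lt_of_lt_of_le hv (min_le_right d 0)
    have hdv : 0 < d - v := by linarith
    have h1v : (0:ℝ) < 1 - v := by linarith
    have hsub : -v / (d - v) - 1 = -d / (d - v) := by
      field_simp
      ring
    rw [hsub]
    field_simp
  -- limit at d from the left
  have hnear : Tendsto (fun v => ((d - v) * (1 - 2 * v) / (-d * (1 - v))) *
      Real.log (-v / (d - v))) (𝓝[<] d) (𝓝 0) := by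
    have t1 : Tendsto (fun v : ℝ => (1 - 2 * v) / (-d * (1 - v))) (𝓝 d)
        (𝓝 ((1 - 2 * d) / (-d * (1 - d)))) := by
      apply Tendsto.div
      · exact ((continuous_const.sub (continuous_const.mul continuous_id)).tendsto d)
      · exact ((continuous_const.mul (continuous_const.sub continuous_id)).tendsto d)
      · exact (mul_pos hdneg (by linarith : (0:ℝ) < 1 - d)).ne'
    have t2 : Tendsto (fun v : ℝ => (d - v) * Real.log (-v)) (𝓝 d) (𝓝 0) := by
      have hlog : Tendsto (fun v : ℝ => Real.log (-v)) (𝓝 d) (𝓝 (Real.log (-d))) :=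
        ((Real.continuousAt_log hdneg.ne').comp (continuous_neg.continuousAt)).tendsto
      have hsub : Tendsto (fun v : ℝ => d - v) (𝓝 d) (𝓝 (d - d)) :=
        (continuous_const.sub continuous_id).tendsto d
      have := hsub.mul hlog
      simpa using this
    have t3 : Tendsto (fun v : ℝ => (d - v) * Real.log (d - v)) (𝓝 d) (𝓝 0) := by
      have hc : Continuous fun v : ℝ => (d - v) * Real.log (d - v) := by
        have := Real.continuous_mul_log.comp
          (show Continuous fun v : ℝ => d - v from continuous_const.sub continuous_id)
        exact this
      have := hc.tendsto d
      simpa using this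
    have tall := t1.mul (t2.sub t3)
    rw [sub_zero, mul_zero] at tall
    refine Tendsto.congr' ?_ (tall.mono_left nhdsWithin_le_nhds)
    filter_upwards [self_mem_nhdsWithin] with v hv
    have hvd : v < d := hv
    have hv0 : v < 0 := hvd.trans hVd
    have hdv : 0 < d - v := by linarith
    have hlogdiv : Real.log (-v / (d - v)) = Real.log (-v) - Real.log (d - v) :=
      Real.log_div (by linarith : -v ≠ 0) hdv.ne'
    rw [hlogdiv]
    ring
  refine ⟨hanti, hatBot, hnear, ?_⟩
  -- existence and uniqueness of the root
  obtain ⟨a, ha1, had⟩ := ((hatBot.eventually (eventually_gt_nhds (by norm_num :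
    (1:ℝ) < 2))).and (eventually_lt_atBot d)).exists
  have hb : ∃ b, (b ∈ Set.Ioo a d) ∧ (fun v => ((d - v) * (1 - 2 * v) / (-d * (1 - v))) *
      Real.log (-v / (d - v))) b < 1 := by
    have h1 := hnear.eventually (eventually_lt_nhds (by norm_num : (0:ℝ) < 1))
    have h2 : Set.Ioo a d ∈ 𝓝[<] d := Ioo_mem_nhdsLT had
    obtain ⟨b, hb1, hb2⟩ := (h1.and (eventually_mem_nhdsWithin.and
      (Filter.eventually_iff_exists_mem.mpr ⟨_, h2, fun x hx => hx⟩))).exists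
    exact ⟨b, hb2.2, hb1⟩
  obtain ⟨b, ⟨hab, hbd⟩, hfb⟩ := hb
  have hcont : ContinuousOn (fun v => ((d - v) * (1 - 2 * v) / (-d * (1 - v))) *
      Real.log (-v / (d - v))) (Set.Icc a b) := by
    intro v hv
    have hvd : v < d := lt_of_le_of_lt hv.2 hbd
    obtain ⟨e, he, _⟩ := key v hvd
    exact he.continuousAt.continuousWithinAt
  have hivt := intermediate_value_Icc' hab.le hcont
  have h1mem : (1:ℝ) ∈ Set.Icc ((fun v => ((d - v) * (1 - 2 * v) / (-d * (1 - v))) *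
      Real.log (-v / (d - v))) b) ((fun v => ((d - v) * (1 - 2 * v) / (-d * (1 - v))) *
      Real.log (-v / (d - v))) a) := ⟨hfb.le, ha1.le⟩
  obtain ⟨c, hc, hfc⟩ := hivt h1mem
  refine ⟨c, ⟨lt_of_le_of_lt hc.2 hbd, hfc⟩, ?_⟩
  intro y hy
  have hcd : c < d := lt_of_le_of_lt hc.2 hbd
  exact hanti.injOn hy.1 hcd (hy.2.trans hfc.symm)
end

section
/- Fix V_dagger < 0. The function H_lwr tends to infinity toward the boundary of its domain, in the sense that for every M > 0 there is a compact subset K of (0, ∞) × (−∞, V_dagger) such that H_lwr(C, V_alpha) > M for all (C, V_alpha) in the domain outside K; moreover H_lwr attains its global minimum on (0, ∞) × (−∞, V_dagger) at exactly one point (C**, V_alpha**). -/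
open Real Set

lemma aux_two_mul_lt_exp {x : ℝ} (hx : 0 < x) : 2 * x < Real.exp x := by
  have h1 : x/2 + 1 < Real.exp (x/2) := Real.add_one_lt_exp (by positivity)
  have h2 : Real.exp x = Real.exp (x/2) * Real.exp (x/2) := by
    rw [← Real.exp_add]; ring_nf
  nlinarith [Real.exp_pos (x/2), sq_nonneg (x/2 - 1)]

lemma aux_expneg_deriv (x : ℝ) :
    HasDerivAt (fun y : ℝ => Real.exp (-y)) (-Real.exp (-x)) x := by
  exact ((Real.hasDerivAt_exp (-x)).comp x (hasDerivAt_neg x)).congr_deriv (by ring)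

-- q(x) = x(1+2e^{-x}) - 2(1-e^{-x}) > 0 for x > 0
lemma aux_q_pos {x : ℝ} (hx : 0 < x) :
    2 * (1 - Real.exp (-x)) < x * (1 + 2 * Real.exp (-x)) := by
  set q : ℝ → ℝ := fun y => y * (1 + 2 * Real.exp (-y)) - 2 * (1 - Real.exp (-y)) with hq
  have hderiv : ∀ y : ℝ, HasDerivAt q (1 - 2 * y * Real.exp (-y)) y := by
    intro y
    have h1 : HasDerivAt (fun z : ℝ => z * (1 + 2 * Real.exp (-z)))
        (1 * (1 + 2 * Real.exp (-y)) + y * (2 * (-Real.exp (-y)))) y :=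
      (hasDerivAt_id y).mul (((aux_expneg_deriv y).const_mul 2).const_add 1)
    have h2 : HasDerivAt (fun z : ℝ => 2 * (1 - Real.exp (-z)))
        (2 * (Real.exp (-y))) y := by
      have := ((aux_expneg_deriv y).const_sub 1).const_mul 2
      simpa using this
    have := h1.sub h2
    exact this.congr_deriv (by ring)
  have hmono : StrictMonoOn q (Ici 0) := by
    apply strictMonoOn_of_deriv_pos (convex_Ici 0)
    · exact fun y _ => (hderiv y).continuousAt.continuousWithinAt
    · intro y hy
      rw [interior_Ici] at hy
      rw [(hderiv y).deriv]
      have h2y : 2 * y < Real.exp y := aux_two_mul_lt_exp hy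
      have he : Real.exp (-y) * Real.exp y = 1 := by
        rw [← Real.exp_add]; simp
      nlinarith [Real.exp_pos (-y), Real.exp_pos y]
  have h0 : q 0 = 0 := by simp [hq]
  have := hmono (le_refl (0:ℝ)) (le_of_lt hx) hx
  rw [h0] at this
  simp only [hq] at this
  linarith

-- r(x) = x(1+e^{-x}) - 2(1-e^{-x}) > 0 for x > 0
lemma aux_r_pos {x : ℝ} (hx : 0 < x) :
    2 * (1 - Real.exp (-x)) < x * (1 + Real.exp (-x)) := by
  set q : ℝ → ℝ := fun y => y * (1 + Real.exp (-y)) - 2 * (1 - Real.exp (-y)) with hq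
  have hderiv : ∀ y : ℝ, HasDerivAt q (1 - (1 + y) * Real.exp (-y)) y := by
    intro y
    have h1 : HasDerivAt (fun z : ℝ => z * (1 + Real.exp (-z)))
        (1 * (1 + Real.exp (-y)) + y * (-Real.exp (-y))) y :=
      (hasDerivAt_id y).mul ((aux_expneg_deriv y).const_add 1)
    have h2 : HasDerivAt (fun z : ℝ => 2 * (1 - Real.exp (-z)))
        (2 * (Real.exp (-y))) y := by
      have := ((aux_expneg_deriv y).const_sub 1).const_mul 2
      simpa using this
    have := h1.sub h2
    exact this.congr_deriv (by ring)
  have hmono : StrictMonoOn q (Ici 0) := by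
    apply strictMonoOn_of_deriv_pos (convex_Ici 0)
    · exact fun y _ => (hderiv y).continuousAt.continuousWithinAt
    · intro y hy
      rw [interior_Ici] at hy
      rw [(hderiv y).deriv]
      have h2y : y + 1 < Real.exp y := Real.add_one_lt_exp (ne_of_gt hy)
      have he : Real.exp (-y) * Real.exp y = 1 := by
        rw [← Real.exp_add]; simp
      nlinarith [Real.exp_pos (-y), Real.exp_pos y]
  have h0 : q 0 = 0 := by simp [hq]
  have := hmono (le_refl (0:ℝ)) (le_of_lt hx) hx
  rw [h0] at this
  simp only [hq] at this
  linarith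
noncomputable def auxG (d : ℝ) : ℝ → ℝ :=
  fun x => d^2 * (x / (1 - Real.exp (-x))^2) + d * (x / (1 - Real.exp (-x)))

noncomputable def auxG' (d : ℝ) : ℝ → ℝ :=
  fun x => d^2 * (((1 - Real.exp (-x)) - 2*x*Real.exp (-x)) / (1 - Real.exp (-x))^3)
    + d * (((1 - Real.exp (-x)) - x*Real.exp (-x)) / (1 - Real.exp (-x))^2)

noncomputable def auxG'' (d : ℝ) : ℝ → ℝ :=
  fun x => d^2 * (2*Real.exp (-x)*(x*(1+2*Real.exp (-x)) - 2*(1 - Real.exp (-x)))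
      / (1 - Real.exp (-x))^4)
    + d * (Real.exp (-x)*(x*(1+Real.exp (-x)) - 2*(1 - Real.exp (-x)))
      / (1 - Real.exp (-x))^3)

lemma aux_v_pos {x : ℝ} (hx : 0 < x) : 0 < 1 - Real.exp (-x) := by
  have : Real.exp (-x) < 1 := by
    rw [Real.exp_lt_one_iff]; linarith
  linarith

lemma aux_hv (x : ℝ) :
    HasDerivAt (fun y : ℝ => 1 - Real.exp (-y)) (Real.exp (-x)) x := by
  simpa using (aux_expneg_deriv x).const_sub 1

lemma auxG_hasDeriv {d x : ℝ} (hx : 0 < x) : HasDerivAt (auxG d) (auxG' d x) x := by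
  have hv := aux_hv x
  have hvne : (1 - Real.exp (-x)) ≠ 0 := ne_of_gt (aux_v_pos hx)
  have hv2 : HasDerivAt (fun y : ℝ => (1 - Real.exp (-y))^2)
      (2 * (1 - Real.exp (-x))^1 * Real.exp (-x)) x := by
    exact (hv.pow 2).congr_deriv (by ring)
  have h1 : HasDerivAt (fun y : ℝ => y / (1 - Real.exp (-y))^2)
      ((1 * (1 - Real.exp (-x))^2 - x * (2 * (1 - Real.exp (-x))^1 * Real.exp (-x)))
        / ((1 - Real.exp (-x))^2)^2) x :=
    (hasDerivAt_id x).div hv2 (pow_ne_zero 2 hvne)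
  have h2 : HasDerivAt (fun y : ℝ => y / (1 - Real.exp (-y)))
      ((1 * (1 - Real.exp (-x)) - x * Real.exp (-x)) / (1 - Real.exp (-x))^2) x :=
    (hasDerivAt_id x).div hv hvne
  have := (h1.const_mul (d^2)).add (h2.const_mul d)
  refine this.congr_deriv ?_
  unfold auxG'
  field_simp

lemma auxG'_hasDeriv {d x : ℝ} (hx : 0 < x) : HasDerivAt (auxG' d) (auxG'' d x) x := by
  have hv := aux_hv x
  have hvne : (1 - Real.exp (-x)) ≠ 0 := ne_of_gt (aux_v_pos hx)
  have hN2 : HasDerivAt (fun y : ℝ => (1 - Real.exp (-y)) - 2*(y*Real.exp (-y)))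
      (Real.exp (-x) - 2*(1*Real.exp (-x) + x*(-Real.exp (-x)))) x :=
    hv.sub (((hasDerivAt_id x).mul (aux_expneg_deriv x)).const_mul 2)
  have hN1 : HasDerivAt (fun y : ℝ => (1 - Real.exp (-y)) - y*Real.exp (-y))
      (Real.exp (-x) - (1*Real.exp (-x) + x*(-Real.exp (-x)))) x :=
    hv.sub ((hasDerivAt_id x).mul (aux_expneg_deriv x))
  have hv3 : HasDerivAt (fun y : ℝ => (1 - Real.exp (-y))^3)
      (3 * (1 - Real.exp (-x))^2 * Real.exp (-x)) x := by
    exact (hv.pow 3).congr_deriv (by ring)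
  have hv2 : HasDerivAt (fun y : ℝ => (1 - Real.exp (-y))^2)
      (2 * (1 - Real.exp (-x))^1 * Real.exp (-x)) x := by
    exact (hv.pow 2).congr_deriv (by ring)
  have h1 := (hN2.div hv3 (pow_ne_zero 3 hvne)).const_mul (d^2)
  have h2 := (hN1.div hv2 (pow_ne_zero 2 hvne)).const_mul d
  have h := h1.add h2
  have heq : auxG' d = fun y : ℝ =>
      d^2 * (((1 - Real.exp (-y)) - 2*(y*Real.exp (-y))) / (1 - Real.exp (-y))^3)
      + d * (((1 - Real.exp (-y)) - y*Real.exp (-y)) / (1 - Real.exp (-y))^2) := by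
    unfold auxG'; funext y; ring_nf
  rw [heq]
  refine h.congr_deriv ?_
  unfold auxG''
  field_simp
  ring

lemma auxG''_pos {d x : ℝ} (hd : 0 < d) (hx : 0 < x) : 0 < auxG'' d x := by
  have hv := aux_v_pos hx
  have hu := Real.exp_pos (-x)
  have hq := aux_q_pos hx
  have hr := aux_r_pos hx
  unfold auxG''
  have t1 : 0 < d^2 * (2*Real.exp (-x)*(x*(1+2*Real.exp (-x)) - 2*(1 - Real.exp (-x)))
      / (1 - Real.exp (-x))^4) := by
    apply mul_pos (by positivity)
    apply div_pos (by nlinarith) (by positivity)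
  have t2 : 0 < d * (Real.exp (-x)*(x*(1+Real.exp (-x)) - 2*(1 - Real.exp (-x)))
      / (1 - Real.exp (-x))^3) := by
    apply mul_pos hd
    apply div_pos (by nlinarith) (by positivity)
  linarith

lemma auxG_strictConvex {d : ℝ} (hd : 0 < d) :
    StrictConvexOn ℝ (Ioi (0:ℝ)) (auxG d) := by
  apply strictConvexOn_of_deriv2_pos (convex_Ioi 0)
  · exact fun x hx => (auxG_hasDeriv hx).continuousAt.continuousWithinAt
  · intro x hx
    rw [interior_Ioi] at hx
    have h2 : deriv^[2] (auxG d) x = deriv (deriv (auxG d)) x := rfl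
    rw [h2]
    have hEq : Set.EqOn (deriv (auxG d)) (auxG' d) (Ioi 0) :=
      fun y hy => (auxG_hasDeriv hy).deriv
    have : deriv (deriv (auxG d)) x = deriv (auxG' d) x := by
      apply Filter.EventuallyEq.deriv_eq
      exact Filter.eventuallyEq_of_mem (isOpen_Ioi.mem_nhds hx) hEq
    rw [this, (auxG'_hasDeriv hx).deriv]
    exact auxG''_pos hd hx

-- exp 1 * s ≤ exp s, strict for s ≠ 1
lemma aux_exp_lin (s : ℝ) : Real.exp 1 * s ≤ Real.exp s := by
  have h : Real.exp s = Real.exp 1 * Real.exp (s - 1) := by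
    rw [← Real.exp_add]; ring_nf
  have h2 : (s - 1) + 1 ≤ Real.exp (s - 1) := Real.add_one_le_exp _
  nlinarith [Real.exp_pos (1:ℝ)]

lemma aux_exp_lin_strict {s : ℝ} (hs : s ≠ 1) : Real.exp 1 * s < Real.exp s := by
  have h : Real.exp s = Real.exp 1 * Real.exp (s - 1) := by
    rw [← Real.exp_add]; ring_nf
  have h2 : (s - 1) + 1 < Real.exp (s - 1) := Real.add_one_lt_exp (by
    intro hc; apply hs; linarith)
  nlinarith [Real.exp_pos (1:ℝ)]

lemma aux_sq_le_exp {s : ℝ} (hs : 0 ≤ s) : s^2/4 ≤ Real.exp s := by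
  have h : Real.exp s = Real.exp (s/2) * Real.exp (s/2) := by
    rw [← Real.exp_add]; ring_nf
  have h2 : s/2 + 1 ≤ Real.exp (s/2) := Real.add_one_le_exp _
  nlinarith [Real.exp_pos (s/2)]

-- main formula facts for p in the domain
lemma aux_main (Vdag : ℝ) (hVd : Vdag < 0) (p : ℝ × ℝ) (hp1 : 0 < p.1)
    (hp2 : p.2 < Vdag) :
    0 < Real.log (-p.2 / (Vdag - p.2)) ∧
    p.2 * (p.2 - 1) * p.1 ^ 2 * (-p.2 / (Vdag - p.2)) ^ (1 / p.1 ^ 2)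
      = (-p.2) * ((-p.2) + 1) * p.1 ^ 2
        * Real.exp (Real.log (-p.2 / (Vdag - p.2)) / p.1 ^ 2) ∧
    -Vdag ≤ (-p.2) * Real.log (-p.2 / (Vdag - p.2)) ∧
    Real.exp (Real.log (-p.2 / (Vdag - p.2))) = -p.2 / (Vdag - p.2) := by
  have hW : 0 < -p.2 := by linarith
  have hp2ne : p.2 ≠ 0 := by intro h; rw [h] at hp2; linarith
  have hden : 0 < Vdag - p.2 := by linarith
  have hb : 0 < -p.2 / (Vdag - p.2) := div_pos hW hden
  have hb1 : 1 < -p.2 / (Vdag - p.2) := (one_lt_div hden).2 (by linarith)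
  refine ⟨Real.log_pos hb1, ?_, ?_, Real.exp_log hb⟩
  · rw [Real.rpow_def_of_pos hb]
    rw [mul_one_div]
    ring
  · have hinv : 0 < (Vdag - p.2) / (-p.2) := div_pos hden hW
    have h1 := Real.log_le_sub_one_of_pos hinv
    have h2 : Real.log ((Vdag - p.2) / (-p.2)) = - Real.log (-p.2 / (Vdag - p.2)) := by
      rw [← Real.log_inv]
      congr 1
      field_simp [hp2ne]
    rw [h2] at h1
    -- h1 : -log b ≤ (Vdag - p.2)/(-p.2) - 1
    have h3 : (Vdag - p.2) / (-p.2) - 1 = -(-Vdag / (-p.2)) := by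
      field_simp [hp2ne]
      ring
    rw [h3] at h1
    have h4 : -Vdag / (-p.2) ≤ Real.log (-p.2 / (Vdag - p.2)) := by linarith
    calc -Vdag = (-p.2) * (-Vdag / (-p.2)) := by field_simp [hp2ne]
    _ ≤ (-p.2) * Real.log (-p.2 / (Vdag - p.2)) :=
        mul_le_mul_of_nonneg_left h4 hW.le

-- quantitative lower bounds
lemma aux_bounds (d t W x : ℝ) (hd : 0 < d) (ht : 0 < t) (hW : d < W)
    (hx : 0 < x) (hWx : d ≤ W * x) :
    d * (d+1) * t ≤ W * (W+1) * t * Real.exp (x/t) ∧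
    d^2 ≤ 4 * t * (W * (W+1) * t * Real.exp (x/t)) ∧
    Real.exp 1 * (W * (W+1) * x) ≤ W * (W+1) * t * Real.exp (x/t) ∧
    (t ≠ x → Real.exp 1 * (W * (W+1) * x) < W * (W+1) * t * Real.exp (x/t)) := by
  have hxt : 0 < x / t := div_pos hx ht
  have he1 : 1 ≤ Real.exp (x/t) := by
    have := Real.add_one_le_exp (x/t); linarith
  have hst : x / t * t = x := div_mul_cancel₀ _ (ne_of_gt ht)
  have hW0 : 0 < W := hd.trans hW
  have hA : 0 < W * (W+1) := by nlinarith
  refine ⟨?_, ?_, ?_, ?_⟩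
  · have hstep : d * (d+1) * t ≤ W * (W+1) * t := by
      nlinarith [mul_nonneg (mul_nonneg (sub_pos.2 hW).le (by linarith : (0:ℝ) ≤ W + d + 1)) ht.le]
    calc d * (d+1) * t ≤ W * (W+1) * t := hstep
    _ = W * (W+1) * t * 1 := by ring
    _ ≤ W * (W+1) * t * Real.exp (x/t) :=
        mul_le_mul_of_nonneg_left he1 (by nlinarith)
  · have h2 := aux_sq_le_exp hxt.le
    have hxx : (x/t)^2 * t^2 = x^2 := by field_simp
    have key : W*(W+1)*((x/t)^2/4) ≤ W*(W+1)*Real.exp (x/t) :=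
      mul_le_mul_of_nonneg_left h2 hA.le
    have key2 : 4*t^2*(W*(W+1)*((x/t)^2/4)) ≤ 4*t^2*(W*(W+1)*Real.exp (x/t)) :=
      mul_le_mul_of_nonneg_left key (by positivity)
    have key3 : 4*t^2*(W*(W+1)*((x/t)^2/4)) = W*(W+1)*((x/t)^2*t^2) := by ring
    rw [key3, hxx] at key2
    have c1 : d^2 ≤ W^2 * x^2 := by nlinarith
    calc d^2 ≤ W^2*x^2 := c1
    _ ≤ W*(W+1)*x^2 := by nlinarith [sq_nonneg x]
    _ ≤ 4*t^2*(W*(W+1)*Real.exp (x/t)) := key2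
    _ = 4 * t * (W * (W+1) * t * Real.exp (x/t)) := by ring
  · have h := aux_exp_lin (x/t)
    have h2 : t * (Real.exp 1 * (x/t)) ≤ t * Real.exp (x/t) :=
      mul_le_mul_of_nonneg_left h ht.le
    have h3 : t * (Real.exp 1 * (x/t)) = Real.exp 1 * x := by
      field_simp
    rw [h3] at h2
    calc Real.exp 1 * (W * (W+1) * x) = W * (W+1) * (Real.exp 1 * x) := by ring
    _ ≤ W * (W+1) * (t * Real.exp (x/t)) := mul_le_mul_of_nonneg_left h2 hA.le
    _ = W * (W+1) * t * Real.exp (x/t) := by ring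
  · intro hne
    have hs1 : x / t ≠ 1 := by
      intro hc
      apply hne
      field_simp at hc
      linarith
    have h := aux_exp_lin_strict hs1
    have h2 : t * (Real.exp 1 * (x/t)) < t * Real.exp (x/t) :=
      mul_lt_mul_of_pos_left h ht
    have h3 : t * (Real.exp 1 * (x/t)) = Real.exp 1 * x := by
      field_simp
    rw [h3] at h2
    calc Real.exp 1 * (W * (W+1) * x) = W * (W+1) * (Real.exp 1 * x) := by ring
    _ < W * (W+1) * (t * Real.exp (x/t)) := mul_lt_mul_of_pos_left h2 hA
    _ = W * (W+1) * t * Real.exp (x/t) := by ring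
-- curve along which H = e * G
lemma aux_curve (Vdag : ℝ) (hVd : Vdag < 0) {x : ℝ} (hx : 0 < x) :
    (Real.sqrt x, Vdag / (1 - Real.exp (-x))).1 ∈ Set.Ioi (0:ℝ) ∧
    (Real.sqrt x, Vdag / (1 - Real.exp (-x))).2 ∈ Set.Iio Vdag ∧
    (Vdag / (1 - Real.exp (-x))) * ((Vdag / (1 - Real.exp (-x))) - 1)
        * (Real.sqrt x) ^ 2
        * (-(Vdag / (1 - Real.exp (-x)))
            / (Vdag - Vdag / (1 - Real.exp (-x)))) ^ (1 / (Real.sqrt x) ^ 2)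
      = Real.exp 1 * auxG (-Vdag) x := by
  have hv := aux_v_pos hx
  have hu := Real.exp_pos (-x)
  have hv1 : 1 - Real.exp (-x) < 1 := by linarith
  have hq2 : Vdag / (1 - Real.exp (-x)) < Vdag := by
    rw [div_lt_iff₀ hv]; nlinarith
  have hs : (0:ℝ) < Real.sqrt x := Real.sqrt_pos.2 hx
  refine ⟨hs, hq2, ?_⟩
  have hux : Real.exp (-x) * Real.exp x = 1 := by rw [← Real.exp_add]; simp
  have hbase : -(Vdag / (1 - Real.exp (-x))) / (Vdag - Vdag / (1 - Real.exp (-x)))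
      = Real.exp x := by
    rw [div_eq_iff]
    · field_simp
      linear_combination Vdag * hux
    · intro hc
      have : Vdag * (1 - Real.exp (-x)) = Vdag := by
        field_simp at hc
        linarith [hc]
      nlinarith [hVd]
  obtain ⟨hxq, hform, _, _⟩ := aux_main Vdag hVd (Real.sqrt x, Vdag / (1 - Real.exp (-x))) hs hq2
  simp only at hform
  rw [hform, hbase, Real.log_exp, Real.sq_sqrt hx.le, div_self (ne_of_gt hx)]
  unfold auxG
  have hVne : Vdag ≠ 0 := ne_of_lt hVd
  field_simp
  ring
lemma aux_Gval (Vdag : ℝ) (hVd : Vdag < 0) (p : ℝ × ℝ) (hp1 : 0 < p.1)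
    (hp2 : p.2 < Vdag) :
    auxG (-Vdag) (Real.log (-p.2 / (Vdag - p.2)))
      = (-p.2) * ((-p.2) + 1) * Real.log (-p.2 / (Vdag - p.2)) ∧
    p.2 = Vdag / (1 - Real.exp (-(Real.log (-p.2 / (Vdag - p.2))))) := by
  obtain ⟨hx, _, _, hexp⟩ := aux_main Vdag hVd p hp1 hp2
  set x := Real.log (-p.2 / (Vdag - p.2)) with hxdef
  have hW : 0 < -p.2 := by linarith
  have hne : p.2 ≠ 0 := by intro h; rw [h] at hp2; linarith
  have hVne : Vdag ≠ 0 := ne_of_lt hVd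
  have hden : 0 < Vdag - p.2 := by linarith
  have huval : Real.exp (-x) = (Vdag - p.2) / (-p.2) := by
    rw [Real.exp_neg, hexp, inv_div]
  have hv : 1 - Real.exp (-x) = (-Vdag) / (-p.2) := by
    rw [huval]; field_simp; ring
  constructor
  · unfold auxG
    rw [hv]
    field_simp
    ring
  · rw [hv]
    field_simp
lemma aux_cont (Vdag : ℝ) (hVd : Vdag < 0) :
    ContinuousOn (fun p : ℝ × ℝ =>
      p.2 * (p.2 - 1) * p.1 ^ 2 * (-p.2 / (Vdag - p.2)) ^ (1 / p.1 ^ 2))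
      (Set.Ioi 0 ×ˢ Set.Iio Vdag) := by
  intro p hp
  have hp1 : 0 < p.1 := hp.1
  have hp2 : p.2 < Vdag := hp.2
  have hden : 0 < Vdag - p.2 := by linarith
  have hW : 0 < -p.2 := by linarith
  apply ContinuousAt.continuousWithinAt
  have hbase : ContinuousAt (fun q : ℝ × ℝ => -q.2 / (Vdag - q.2)) p :=
    ContinuousAt.div (continuousAt_snd.neg)
      (continuousAt_const.sub continuousAt_snd) (ne_of_gt hden)
  have hexpo : ContinuousAt (fun q : ℝ × ℝ => 1 / q.1 ^ 2) p :=
    ContinuousAt.div continuousAt_const (continuousAt_fst.pow 2)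
      (by positivity)
  have hr : ContinuousAt (fun q : ℝ × ℝ => (-q.2 / (Vdag - q.2)) ^ (1 / q.1 ^ 2)) p :=
    ContinuousAt.rpow hbase hexpo (Or.inl (ne_of_gt (div_pos hW hden)))
  exact ((continuousAt_snd.mul (continuousAt_snd.sub continuousAt_const)).mul
    (continuousAt_fst.pow 2)).mul hr

lemma aux_part1 (Vdag : ℝ) (hVd : Vdag < 0) (H : ℝ × ℝ → ℝ)
    (hH : ∀ p : ℝ × ℝ, H p =
      p.2 * (p.2 - 1) * p.1 ^ 2 * (-p.2 / (Vdag - p.2)) ^ (1 / p.1 ^ 2))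
    (M : ℝ) (hM : 0 < M) :
    ∃ K : Set (ℝ × ℝ), IsCompact K ∧
      K ⊆ Set.Ioi 0 ×ˢ Set.Iio Vdag ∧
      ∀ p ∈ (Set.Ioi 0 ×ˢ Set.Iio Vdag) \ K, M < H p := by
  set d := -Vdag with hdd
  have hd : 0 < d := by simp [hdd]; linarith
  set a := M / (d * (d + 1)) with ha
  have hapos : 0 < a := by positivity
  set c₀ := d / (2 * Real.sqrt M) with hc₀
  set c₁ := Real.sqrt (M / (d * (d + 1))) with hc₁
  set v₀ := -(M / d) - 1 with hv₀
  set v₁ := Vdag - d * Real.exp (-a) with hv₁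
  have hc₀pos : 0 < c₀ := by
    apply div_pos hd
    positivity
  have hv₁lt : v₁ < Vdag := by
    have := Real.exp_pos (-a)
    simp only [hv₁]
    nlinarith
  refine ⟨Set.Icc c₀ c₁ ×ˢ Set.Icc v₀ v₁, isCompact_Icc.prod isCompact_Icc, ?_, ?_⟩
  · rintro ⟨c, v⟩ ⟨hc, hv⟩
    exact ⟨lt_of_lt_of_le hc₀pos hc.1, lt_of_le_of_lt hv.2 hv₁lt⟩
  · rintro p ⟨hpD, hpK⟩
    have hp1 : 0 < p.1 := hpD.1
    have hp2 : p.2 < Vdag := hpD.2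
    obtain ⟨hx, hform, hWx, hexp⟩ := aux_main Vdag hVd p hp1 hp2
    set x := Real.log (-p.2 / (Vdag - p.2)) with hxdef
    have hW : d < -p.2 := by simp only [hdd]; linarith
    have ht : (0:ℝ) < p.1 ^ 2 := by positivity
    obtain ⟨B1, B2, B3, B4⟩ := aux_bounds d (p.1 ^ 2) (-p.2) x hd ht hW hx hWx
    rw [hH p, hform]
    clear_value d a c₀ c₁ v₀ v₁ x
    clear B4 hexp hform
    have hWx' : d ≤ -p.2 * x := by rw [hdd]; exact hWx
    have he1 : (1:ℝ) ≤ Real.exp 1 := by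
      have := Real.add_one_le_exp (1:ℝ); linarith
    have hWd2 : d * (d + 1) ≤ (-p.2) * ((-p.2) + 1) := by nlinarith
    have hA0 : 0 ≤ (-p.2) * ((-p.2) + 1) * x := by
      have : (0:ℝ) < -p.2 := lt_trans hd hW
      positivity
    by_cases h1 : p.1 < c₀
    · -- small C
      have h1' : p.1 ^ 2 < c₀ ^ 2 := by
        apply pow_lt_pow_left₀ h1 hp1.le
        norm_num
      have hc : c₀ ^ 2 = d ^ 2 / (4 * M) := by
        rw [hc₀, div_pow, mul_pow, Real.sq_sqrt hM.le]
        norm_num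
      rw [hc] at h1'
      have h1'' : 4 * M * p.1 ^ 2 < d ^ 2 := by
        rw [lt_div_iff₀ (by positivity : (0:ℝ) < 4 * M)] at h1'
        linarith
      nlinarith [h1'', B2, ht]
    · by_cases h2 : c₁ < p.1
      · -- large C
        have h2' : c₁ ^ 2 < p.1 ^ 2 := by
          apply pow_lt_pow_left₀ h2 (hc₁ ▸ Real.sqrt_nonneg _)
          norm_num
        have hc : c₁ ^ 2 = M / (d * (d + 1)) := by
          rw [hc₁]
          exact Real.sq_sqrt (by positivity)
        rw [hc] at h2'
        have hMd : d * (d + 1) * (M / (d * (d + 1))) = M := by field_simp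
        have s3 : d * (d + 1) * (M / (d * (d + 1))) < d * (d + 1) * p.1 ^ 2 :=
          mul_lt_mul_of_pos_left h2' (by positivity)
        linarith [B1, s3, hMd]
      · by_cases h3 : p.2 < v₀
        · -- very negative V
          have hW3 : M / d + 1 < -p.2 := by simp only [hv₀] at h3; linarith
          have hMd : (M / d) * d = M := div_mul_cancel₀ _ (ne_of_gt hd)
          have hW1 : (0:ℝ) ≤ -p.2 + 1 := by linarith
          have s1 : (-p.2 + 1) * d ≤ (-p.2 + 1) * ((-p.2) * x) :=
            mul_le_mul_of_nonneg_left hWx' hW1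
          have e1 : 0 ≤ (Real.exp 1 - 1) * ((-p.2) * ((-p.2) + 1) * x) :=
            mul_nonneg (by linarith) hA0
          have e2 : (M / d + 2) * d < ((-p.2) + 1) * d :=
            mul_lt_mul_of_pos_right (by linarith) hd
          have e3 : (M / d + 2) * d = M + 2 * d := by
            field_simp
          linarith only [B3, e1, s1, e2, e3, hd, hdd, hW, hM]
        · by_cases h4 : v₁ < p.2
          · -- V close to Vdag
            have hden : 0 < Vdag - p.2 := by linarith
            have hsmall : Vdag - p.2 < d * Real.exp (-a) := by
              simp only [hv₁] at h4; linarith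
            have hb2 : Real.exp a < -p.2 / (Vdag - p.2) := by
              have e1 : Real.exp a = d / (d * Real.exp (-a)) := by
                rw [Real.exp_neg]; field_simp
              have e2 : d / (d * Real.exp (-a)) < d / (Vdag - p.2) :=
                div_lt_div_of_pos_left hd hden hsmall
              have e3 : d / (Vdag - p.2) < -p.2 / (Vdag - p.2) := by
                apply div_lt_div_of_pos_right hW hden
              linarith [e1 ▸ e2]
            have hax : a < x := by
              have h5 := Real.log_lt_log (Real.exp_pos a) hb2
              rw [Real.log_exp] at h5
              rw [hxdef]
              exact h5
            have hMa : d * (d + 1) * a = M := by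
              rw [ha]; field_simp
            have s2 : d * (d + 1) * x ≤ (-p.2) * ((-p.2) + 1) * x :=
              mul_le_mul_of_nonneg_right hWd2 hx.le
            have s4 : d * (d + 1) * a < d * (d + 1) * x :=
              mul_lt_mul_of_pos_left hax (by positivity)
            have e1 : 0 ≤ (Real.exp 1 - 1) * ((-p.2) * ((-p.2) + 1) * x) :=
              mul_nonneg (by linarith) hA0
            linarith only [B3, e1, s2, s4, hMa]
          ·
            exfalso
            exact hpK ⟨⟨le_of_not_gt h1, le_of_not_gt h2⟩,
              ⟨le_of_not_gt h3, le_of_not_gt h4⟩⟩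
/-- Fix `V† < 0`. The function `H_lwr` tends to infinity toward the boundary of
its domain `(0, ∞) × (−∞, V†)` (for every `M > 0` it exceeds `M` outside some
compact subset of the domain), and it attains its global minimum on the domain
at exactly one point. -/
theorem Hlwr_proper_and_unique_min
    (Vdag : ℝ) (hVd : Vdag < 0)
    (H : ℝ × ℝ → ℝ)
    (hH : ∀ p : ℝ × ℝ, H p =
      p.2 * (p.2 - 1) * p.1 ^ 2 * (-p.2 / (Vdag - p.2)) ^ (1 / p.1 ^ 2)) :
    (∀ M : ℝ, 0 < M → ∃ K : Set (ℝ × ℝ), IsCompact K ∧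
      K ⊆ Set.Ioi 0 ×ˢ Set.Iio Vdag ∧
      ∀ p ∈ (Set.Ioi 0 ×ˢ Set.Iio Vdag) \ K, M < H p) ∧
    (∃! p : ℝ × ℝ, p ∈ Set.Ioi (0:ℝ) ×ˢ Set.Iio Vdag ∧
      ∀ q ∈ Set.Ioi (0:ℝ) ×ˢ Set.Iio Vdag, H p ≤ H q) := by
  have hd : (0:ℝ) < -Vdag := by linarith
  refine ⟨fun M hM => aux_part1 Vdag hVd H hH M hM, ?_⟩
  -- existence of a minimizer
  have hp₀D : ((1:ℝ), Vdag - 1) ∈ Set.Ioi (0:ℝ) ×ˢ Set.Iio Vdag := by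
    constructor
    · exact Set.mem_Ioi.2 one_pos
    · exact Set.mem_Iio.2 (show Vdag - 1 < Vdag by linarith)
  have hM₀ : 0 < H (1, Vdag - 1) := by
    obtain ⟨hx0, hform0, hWx0, _⟩ := aux_main Vdag hVd (1, Vdag - 1) hp₀D.1 hp₀D.2
    rw [hH _, hform0]
    have h1 : (0:ℝ) < -(1, Vdag - 1).2 := by simp; linarith
    have h2 : (0:ℝ) < -(1, Vdag - 1).2 + 1 := by linarith
    have h3 : (0:ℝ) < ((1, Vdag - 1) : ℝ × ℝ).1 ^ 2 := by norm_num
    positivity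
  obtain ⟨K, hKc, hKD, hKout⟩ := aux_part1 Vdag hVd H hH (H (1, Vdag - 1)) hM₀
  have hK'c : IsCompact (insert ((1:ℝ), Vdag - 1) K) := hKc.insert _
  have hK'D : insert ((1:ℝ), Vdag - 1) K ⊆ Set.Ioi (0:ℝ) ×ˢ Set.Iio Vdag :=
    Set.insert_subset_iff.2 ⟨hp₀D, hKD⟩
  have hHcont : ContinuousOn H (Set.Ioi (0:ℝ) ×ˢ Set.Iio Vdag) := by
    have hfe : H = fun p : ℝ × ℝ =>
        p.2 * (p.2 - 1) * p.1 ^ 2 * (-p.2 / (Vdag - p.2)) ^ (1 / p.1 ^ 2) :=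
      funext hH
    rw [hfe]
    exact aux_cont Vdag hVd
  obtain ⟨pm, hpmK', hpmmin⟩ :=
    hK'c.exists_isMinOn (Set.insert_nonempty _ _) (hHcont.mono hK'D)
  have hpmD : pm ∈ Set.Ioi (0:ℝ) ×ˢ Set.Iio Vdag := hK'D hpmK'
  have hglob : ∀ q ∈ Set.Ioi (0:ℝ) ×ˢ Set.Iio Vdag, H pm ≤ H q := by
    intro q hq
    by_cases hqK : q ∈ insert ((1:ℝ), Vdag - 1) K
    · exact hpmmin hqK
    · have hq1 : q ∈ (Set.Ioi (0:ℝ) ×ˢ Set.Iio Vdag) \ K :=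
        ⟨hq, fun hc => hqK (Set.mem_insert_of_mem _ hc)⟩
      have h5 := hKout q hq1
      have h0 : H pm ≤ H (1, Vdag - 1) := hpmmin (Set.mem_insert _ K)
      linarith
  refine ⟨pm, ⟨hpmD, hglob⟩, ?_⟩
  -- uniqueness
  rintro p' ⟨hp'D, hp'min⟩
  have hmin_eq : H p' = H pm := le_antisymm (hp'min pm hpmD) (hglob p' hp'D)
  have hcurve : ∀ x : ℝ, 0 < x → H pm ≤ Real.exp 1 * auxG (-Vdag) x := by
    intro x hx
    obtain ⟨hm1, hm2, hm3⟩ := aux_curve Vdag hVd hx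
    have h6 := hglob (Real.sqrt x, Vdag / (1 - Real.exp (-x))) ⟨hm1, hm2⟩
    rwa [hH (Real.sqrt x, Vdag / (1 - Real.exp (-x))), hm3] at h6
  have hkey : ∀ p : ℝ × ℝ, p ∈ Set.Ioi (0:ℝ) ×ˢ Set.Iio Vdag → H p = H pm →
      p.1 ^ 2 = Real.log (-p.2 / (Vdag - p.2)) ∧
      Real.exp 1 * auxG (-Vdag) (Real.log (-p.2 / (Vdag - p.2))) = H pm ∧
      p.2 = Vdag / (1 - Real.exp (-(Real.log (-p.2 / (Vdag - p.2))))) := by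
    intro p hpD hpH
    have hp1 : 0 < p.1 := hpD.1
    have hp2 : p.2 < Vdag := hpD.2
    obtain ⟨hx, hform, hWx, _⟩ := aux_main Vdag hVd p hp1 hp2
    obtain ⟨hG1, hG2⟩ := aux_Gval Vdag hVd p hp1 hp2
    set x := Real.log (-p.2 / (Vdag - p.2)) with hxdef
    have hW : -Vdag < -p.2 := by linarith
    have ht : (0:ℝ) < p.1 ^ 2 := by positivity
    obtain ⟨_, _, B3, B4⟩ := aux_bounds (-Vdag) (p.1 ^ 2) (-p.2) x hd ht hW hx hWx
    have hHp : H p = (-p.2) * ((-p.2) + 1) * p.1 ^ 2 * Real.exp (x / p.1 ^ 2) := by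
      rw [hH p, hform]
    have hle : H pm ≤ Real.exp 1 * ((-p.2) * ((-p.2) + 1) * x) := by
      have := hcurve x hx
      rwa [hG1] at this
    have htx : p.1 ^ 2 = x := by
      by_contra hne
      have hlt := B4 hne
      rw [← hHp, hpH] at hlt
      linarith
    refine ⟨htx, ?_, hG2⟩
    rw [hG1]
    have hge : Real.exp 1 * ((-p.2) * ((-p.2) + 1) * x) ≤ H p := by
      rw [hHp]; exact B3
    rw [hpH] at hge
    linarith
  obtain ⟨ht1, hGm1, hV1⟩ := hkey pm hpmD rfl
  obtain ⟨ht2, hGm2, hV2⟩ := hkey p' hp'D hmin_eq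
  set x1 := Real.log (-pm.2 / (Vdag - pm.2)) with hx1def
  set x2 := Real.log (-p'.2 / (Vdag - p'.2)) with hx2def
  have hx1 : 0 < x1 := (aux_main Vdag hVd pm hpmD.1 hpmD.2).1
  have hx2 : 0 < x2 := (aux_main Vdag hVd p' hp'D.1 hp'D.2).1
  have hxx : x2 = x1 := by
    by_contra hne
    have hsc := auxG_strictConvex hd
    have hmid := hsc.2 (Set.mem_Ioi.2 hx2) (Set.mem_Ioi.2 hx1) hne
      (by norm_num : (0:ℝ) < 1/2) (by norm_num : (0:ℝ) < 1/2) (by norm_num)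
    rw [smul_eq_mul, smul_eq_mul, smul_eq_mul, smul_eq_mul] at hmid
    have hmidpos : 0 < (1:ℝ)/2 * x2 + 1/2 * x1 := by nlinarith
    have hge := hcurve ((1:ℝ)/2 * x2 + 1/2 * x1) hmidpos
    nlinarith [mul_lt_mul_of_pos_left hmid (Real.exp_pos 1), hge, hGm1, hGm2]
  have hp2eq : p'.2 = pm.2 := by
    rw [hV2, hV1, hxx]
  have hp1eq : p'.1 = pm.1 := by
    have hsq : p'.1 ^ 2 = pm.1 ^ 2 := by rw [ht2, ht1, hxx]
    have habs : |p'.1| = |pm.1| := by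
      rw [← Real.sqrt_sq_eq_abs, ← Real.sqrt_sq_eq_abs, hsq]
    rwa [abs_of_pos hp'D.1, abs_of_pos hpmD.1] at habs
  exact Prod.ext hp1eq hp2eq
end

section
/- Fix V_dagger < 0 and V_alpha < V_dagger, set L = ln(−V_alpha/(V_dagger − V_alpha)) and C* = √L, and for g > e·V_alpha(V_alpha − 1)·L let C_slow(g) denote the unique solution in (0, C*) of H_lwr(C, V_alpha) = g. Then C_slow(g)² · ln g → L as g → ∞. -/
open Filter Real

/-- Fix `V† < 0`, `Vα < V†`, `L = ln(−Vα/(V† − Vα))`, `C* = √L`, and for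
`g > e·Vα(Vα − 1)·L` let `C_slow(g)` be the unique solution in `(0, C*)` of
`H_lwr(C, Vα) = g`. Then `C_slow(g)²·ln g → L` as `g → ∞`. -/
theorem Cslow_asymptotics
    (Vdag Valpha : ℝ) (hVd : Vdag < 0) (hVa : Valpha < Vdag)
    (L : ℝ) (hL : L = Real.log (-Valpha / (Vdag - Valpha)))
    (H : ℝ → ℝ)
    (hH : ∀ C : ℝ, H C =
      Valpha * (Valpha - 1) * C ^ 2 * (-Valpha / (Vdag - Valpha)) ^ (1 / C ^ 2))
    (Cslow : ℝ → ℝ)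
    (hCs : ∀ g : ℝ, Real.exp 1 * (Valpha * (Valpha - 1)) * L < g →
      Cslow g ∈ Set.Ioo 0 (Real.sqrt L) ∧ H (Cslow g) = g) :
    Filter.Tendsto (fun g : ℝ => (Cslow g) ^ 2 * Real.log g)
      Filter.atTop (nhds L) := by
  have hVa0 : Valpha < 0 := hVa.trans hVd
  set A : ℝ := Valpha * (Valpha - 1) with hAdef
  have hA : 0 < A := mul_pos_of_neg_of_neg hVa0 (by linarith)
  have hsub : 0 < Vdag - Valpha := by linarith
  have hb1 : (1:ℝ) < -Valpha / (Vdag - Valpha) := by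
    rw [lt_div_iff₀ hsub]; linarith
  have hL0 : 0 < L := hL ▸ Real.log_pos hb1
  -- key facts for each large g
  have key : ∀ g : ℝ, Real.exp 1 * A * L < g →
      0 < Cslow g ^ 2 ∧ Cslow g ^ 2 < L ∧
      g = A * Cslow g ^ 2 * Real.exp (L / Cslow g ^ 2) := by
    intro g hg
    obtain ⟨⟨h1, h2⟩, h3⟩ := hCs g hg
    have hx0 : 0 < Cslow g ^ 2 := pow_pos h1 2
    have hxL : Cslow g ^ 2 < L := by
      have := sq_lt_sq' (by linarith [Real.sqrt_nonneg L] : -Real.sqrt L < Cslow g) h2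
      rwa [Real.sq_sqrt hL0.le] at this
    refine ⟨hx0, hxL, ?_⟩
    conv_lhs => rw [← h3]
    rw [hH]
    rw [Real.rpow_def_of_pos (by linarith : (0:ℝ) < -Valpha / (Vdag - Valpha)), ← hL,
      mul_one_div]
  have heAL : 0 < Real.exp 1 * A * L := by positivity
  have hALlt : A * L < Real.exp 1 * A * L := by
    nlinarith [Real.exp_one_gt_d9, mul_pos hA hL0]
  -- the squared solution tends to 0
  have hx0tendsto : Tendsto (fun g => Cslow g ^ 2) atTop (nhds 0) := by
    have hub : Tendsto (fun g : ℝ => L / Real.log (g / (A * L))) atTop (nhds 0) := by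
      apply Tendsto.div_atTop tendsto_const_nhds
      exact Real.tendsto_log_atTop.comp (tendsto_id.atTop_div_const (by positivity))
    refine tendsto_of_tendsto_of_tendsto_of_le_of_le' tendsto_const_nhds hub ?_ ?_
    · filter_upwards [eventually_gt_atTop (Real.exp 1 * A * L)] with g hg
      exact (key g hg).1.le
    · filter_upwards [eventually_gt_atTop (Real.exp 1 * A * L)] with g hg
      obtain ⟨hx0, hxL, hge⟩ := key g hg
      have hgAL : 1 < g / (A * L) := by
        rw [lt_div_iff₀ (by positivity)]
        nlinarith [Real.exp_one_gt_d9, mul_pos hA hL0]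
      have hlogpos : 0 < Real.log (g / (A * L)) := Real.log_pos hgAL
      rw [le_div_iff₀ hlogpos]
      have h1 : g ≤ A * L * Real.exp (L / Cslow g ^ 2) := by
        nlinarith [hge, mul_pos hA (Real.exp_pos (L / Cslow g ^ 2))]
      have h2 : Real.log (g / (A * L)) ≤ L / Cslow g ^ 2 := by
        rw [← Real.log_exp (L / Cslow g ^ 2)]
        apply Real.log_le_log (by positivity)
        rw [div_le_iff₀ (by positivity)]
        linarith [h1]
      calc Cslow g ^ 2 * Real.log (g / (A * L)) ≤ Cslow g ^ 2 * (L / Cslow g ^ 2) :=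
            mul_le_mul_of_nonneg_left h2 hx0.le
        _ = L := by rw [mul_div_cancel₀ _ hx0.ne']
  have hx0within : Tendsto (fun g => Cslow g ^ 2) atTop (nhdsWithin 0 (Set.Ioi 0)) := by
    apply tendsto_nhdsWithin_of_tendsto_nhds_of_eventually_within _ hx0tendsto
    filter_upwards [eventually_gt_atTop (Real.exp 1 * A * L)] with g hg
    exact (key g hg).1
  have hxlogx : Tendsto (fun g => Real.log (Cslow g ^ 2) * Cslow g ^ 2) atTop (nhds 0) := by
    have h := tendsto_log_mul_rpow_nhdsGT_zero (r := 1) zero_lt_one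
    have := h.comp hx0within
    simpa only [Function.comp_def, Real.rpow_one] using this
  have hmain : Tendsto (fun g => Cslow g ^ 2 * Real.log A +
      Real.log (Cslow g ^ 2) * Cslow g ^ 2 + L) atTop (nhds (0 * Real.log A + 0 + L)) :=
    ((hx0tendsto.mul_const _).add hxlogx).add tendsto_const_nhds
  rw [zero_mul, zero_add, zero_add] at hmain
  apply hmain.congr'
  filter_upwards [eventually_gt_atTop (Real.exp 1 * A * L)] with g hg
  obtain ⟨hx0, hxL, hge⟩ := key g hg
  have hxne : Cslow g ^ 2 ≠ 0 := hx0.ne'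
  have hlogg : Real.log g = Real.log A + Real.log (Cslow g ^ 2) + L / Cslow g ^ 2 := by
    conv_lhs => rw [hge]
    rw [Real.log_mul (by positivity) (Real.exp_pos _).ne',
      Real.log_mul hA.ne' hxne, Real.log_exp]
  rw [hlogg]
  rw [mul_add, mul_add, mul_div_cancel₀ _ hxne]
  ring
end

section
/- Let C > 0, g > 0 and z† ∈ ℝ. Suppose w : (0, ∞) → ℝ is twice differentiable and satisfies the modified Bessel equation of order C², namely s² w''(s) + s w'(s) − (C⁴ + s²) w(s) = 0 for all s > 0. Define s(ζ) = 2C√g · e^{(z† − ζ)/2} and V(ζ) = 1 + e^{C²ζ/2} · w(s(ζ)) for ζ ∈ ℝ. Then V is twice differentiable on ℝ and satisfies (1/C²) V''(ζ) − V'(ζ) + g (1 − V(ζ)) e^{z† − ζ} = 0 for all ζ ∈ ℝ. -/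
/-- If `w` solves the modified Bessel equation of order `C²` on `(0, ∞)`, then
`V(ζ) = 1 + e^{C²ζ/2} w(2C√g e^{(z† − ζ)/2})` is twice differentiable and
solves `(1/C²)V'' − V' + g(1 − V)e^{z† − ζ} = 0` on `ℝ`. -/
theorem bessel_substitution_solves_front_equation
    (C g zdag : ℝ) (hC : 0 < C) (hg : 0 < g)
    (w : ℝ → ℝ)
    (hw1 : ∀ s : ℝ, 0 < s → DifferentiableAt ℝ w s)
    (hw2 : ∀ s : ℝ, 0 < s → DifferentiableAt ℝ (deriv w) s)
    (hode : ∀ s : ℝ, 0 < s →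
      s ^ 2 * deriv (deriv w) s + s * deriv w s - (C ^ 4 + s ^ 2) * w s = 0)
    (V : ℝ → ℝ)
    (hV : ∀ ζ : ℝ, V ζ =
      1 + Real.exp (C ^ 2 * ζ / 2) *
        w (2 * C * Real.sqrt g * Real.exp ((zdag - ζ) / 2))) :
    (∀ ζ : ℝ, DifferentiableAt ℝ V ζ) ∧
    (∀ ζ : ℝ, DifferentiableAt ℝ (deriv V) ζ) ∧
    (∀ ζ : ℝ,
      (1 / C ^ 2) * deriv (deriv V) ζ - deriv V ζ +
        g * (1 - V ζ) * Real.exp (zdag - ζ) = 0) := by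
  have hVfun : V = fun ζ => 1 + Real.exp (C ^ 2 * ζ / 2) *
      w (2 * C * Real.sqrt g * Real.exp ((zdag - ζ) / 2)) := funext hV
  have ha : (0:ℝ) < 2 * C * Real.sqrt g :=
    mul_pos (by positivity) (Real.sqrt_pos.mpr hg)
  have hSpos : ∀ ζ : ℝ, 0 < 2 * C * Real.sqrt g * Real.exp ((zdag - ζ) / 2) :=
    fun ζ => mul_pos ha (Real.exp_pos _)
  have hS : ∀ ζ : ℝ,
      HasDerivAt (fun x => 2 * C * Real.sqrt g * Real.exp ((zdag - x) / 2))
        (-(2 * C * Real.sqrt g * Real.exp ((zdag - ζ) / 2)) / 2) ζ := by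
    intro ζ
    have h1 : HasDerivAt (fun x : ℝ => (zdag - x) / 2) (-1/2 : ℝ) ζ := by
      simpa using ((hasDerivAt_id ζ).const_sub zdag).div_const 2
    have h2 := (h1.exp).const_mul (2 * C * Real.sqrt g)
    convert h2 using 1
    all_goals first | rfl | ring
  have hE : ∀ ζ : ℝ, HasDerivAt (fun x => Real.exp (C ^ 2 * x / 2))
      (C ^ 2 / 2 * Real.exp (C ^ 2 * ζ / 2)) ζ := by
    intro ζ
    have h1 : HasDerivAt (fun x : ℝ => C ^ 2 * x / 2) (C ^ 2 / 2) ζ := by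
      simpa using ((hasDerivAt_id ζ).const_mul (C ^ 2)).div_const 2
    have h2 := h1.exp
    convert h2 using 1
    ring
  have hV' : ∀ ζ : ℝ, HasDerivAt V
      (Real.exp (C ^ 2 * ζ / 2) *
        (C ^ 2 / 2 * w (2 * C * Real.sqrt g * Real.exp ((zdag - ζ) / 2))
         - 2 * C * Real.sqrt g * Real.exp ((zdag - ζ) / 2) / 2 *
           deriv w (2 * C * Real.sqrt g * Real.exp ((zdag - ζ) / 2)))) ζ := by
    intro ζ
    have hwS : HasDerivAt
        (fun x => w (2 * C * Real.sqrt g * Real.exp ((zdag - x) / 2)))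
        (deriv w (2 * C * Real.sqrt g * Real.exp ((zdag - ζ) / 2)) *
          (-(2 * C * Real.sqrt g * Real.exp ((zdag - ζ) / 2)) / 2)) ζ :=
      ((hw1 _ (hSpos ζ)).hasDerivAt).comp ζ (hS ζ)
    have h := ((hE ζ).mul hwS).const_add 1
    rw [hVfun]
    convert h using 1
    all_goals first | rfl | ring
  have hdV : deriv V = fun ζ => Real.exp (C ^ 2 * ζ / 2) *
      (C ^ 2 / 2 * w (2 * C * Real.sqrt g * Real.exp ((zdag - ζ) / 2))
       - 2 * C * Real.sqrt g * Real.exp ((zdag - ζ) / 2) / 2 *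
         deriv w (2 * C * Real.sqrt g * Real.exp ((zdag - ζ) / 2))) :=
    funext fun ζ => (hV' ζ).deriv
  have hV'' : ∀ ζ : ℝ, HasDerivAt (deriv V)
      (Real.exp (C ^ 2 * ζ / 2) *
        (C ^ 4 / 4 * w (2 * C * Real.sqrt g * Real.exp ((zdag - ζ) / 2))
         + 2 * C * Real.sqrt g * Real.exp ((zdag - ζ) / 2) * (1 - 2 * C ^ 2) / 4 *
             deriv w (2 * C * Real.sqrt g * Real.exp ((zdag - ζ) / 2))
         + (2 * C * Real.sqrt g * Real.exp ((zdag - ζ) / 2)) ^ 2 / 4 *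
             deriv (deriv w) (2 * C * Real.sqrt g * Real.exp ((zdag - ζ) / 2)))) ζ := by
    intro ζ
    have hwS : HasDerivAt
        (fun x => w (2 * C * Real.sqrt g * Real.exp ((zdag - x) / 2)))
        (deriv w (2 * C * Real.sqrt g * Real.exp ((zdag - ζ) / 2)) *
          (-(2 * C * Real.sqrt g * Real.exp ((zdag - ζ) / 2)) / 2)) ζ :=
      ((hw1 _ (hSpos ζ)).hasDerivAt).comp ζ (hS ζ)
    have hw'S : HasDerivAt
        (fun x => deriv w (2 * C * Real.sqrt g * Real.exp ((zdag - x) / 2)))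
        (deriv (deriv w) (2 * C * Real.sqrt g * Real.exp ((zdag - ζ) / 2)) *
          (-(2 * C * Real.sqrt g * Real.exp ((zdag - ζ) / 2)) / 2)) ζ :=
      HasDerivAt.comp (h₂ := deriv w) ζ ((hw2 _ (hSpos ζ)).hasDerivAt) (hS ζ)
    have hprod := ((hS ζ).div_const 2).mul hw'S
    have hinner := (hwS.const_mul (C ^ 2 / 2)).sub hprod
    have h := (hE ζ).mul hinner
    rw [hdV]
    convert h using 1
    all_goals first | rfl | (simp only [Pi.sub_apply, Pi.mul_apply]; ring)
  refine ⟨fun ζ => (hV' ζ).differentiableAt, fun ζ => (hV'' ζ).differentiableAt,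
    fun ζ => ?_⟩
  rw [(hV'' ζ).deriv, (hV' ζ).deriv, hV ζ]
  have hode' := hode _ (hSpos ζ)
  have hexp : Real.exp (zdag - ζ) =
      (2 * C * Real.sqrt g * Real.exp ((zdag - ζ) / 2)) ^ 2 / (4 * C ^ 2 * g) := by
    rw [eq_div_iff (by positivity)]
    have h1 : Real.exp ((zdag - ζ) / 2) * Real.exp ((zdag - ζ) / 2)
        = Real.exp (zdag - ζ) := by
      rw [← Real.exp_add]; congr 1; ring
    have hsg : Real.sqrt g * Real.sqrt g = g := Real.mul_self_sqrt hg.le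
    linear_combination (-4 * C ^ 2 * Real.exp ((zdag - ζ) / 2) ^ 2) * hsg +
      (-4 * C ^ 2 * g) * h1
  rw [hexp]
  have hC2 : (C:ℝ) ≠ 0 := ne_of_gt hC
  have hg0 : (g:ℝ) ≠ 0 := ne_of_gt hg
  set s := 2 * C * Real.sqrt g * Real.exp ((zdag - ζ) / 2) with hs
  field_simp
  linear_combination (2 * Real.exp (C ^ 2 * ζ / 2)) * hode'
end
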